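/- arXiv:1903.05735 — 13 statements merged into one kernel-verified Lean document; each statement's English description precedes it below -/
import Mathlib

section
/- For every odd 2-adic integer s and every positive integer l, the Fibonacci polynomial values satisfy F_{3·2^l}(s) ≡ 0 (mod 2^{l+2}) and F_{3·2^l+1}(s) ≡ 1 + 2^{l+1} (mod 2^{l+2}). -/
open Polynomial

noncomputable def fibPoly : ℕ → Polynomial ℤ
  | 0 => 0
  | 1 => 1
  | n + 2 => X * fibPoly (n + 1) + fibPoly n

lemma fibPoly_step (n : ℕ) : fibPoly (n+2) = X * fibPoly (n+1) + fibPoly n := rfl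

lemma fibPoly_add (m n : ℕ) :
    fibPoly (m + n + 1) = fibPoly (m + 1) * fibPoly (n + 1) + fibPoly m * fibPoly n := by
  induction n generalizing m with
  | zero => simp [fibPoly]
  | succ n ih =>
    have h1 := ih (m + 1)
    rw [show m + (n+1) + 1 = (m+1) + n + 1 by ring, h1,
        show m + 1 + 1 = m + 2 from rfl, fibPoly_step m, fibPoly_step n]
    ring

lemma fibPoly_six : fibPoly 6 = X^5 + 4*X^3 + 3*X := by
  show fibPoly (4+2) = _
  simp only [fibPoly]
  ring

lemma fibPoly_seven : fibPoly 7 = X^6 + 5*X^4 + 6*X^2 + 1 := by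
  show fibPoly (5+2) = _
  simp only [fibPoly]
  ring

theorem fibPoly_eval_odd_mod (s : ℤ) (hs : Odd s) (l : ℕ) (hl : 1 ≤ l) :
    (fibPoly (3 * 2 ^ l)).eval s ≡ 0 [ZMOD (2 : ℤ) ^ (l + 2)] ∧
    (fibPoly (3 * 2 ^ l + 1)).eval s ≡ 1 + 2 ^ (l + 1) [ZMOD (2 : ℤ) ^ (l + 2)] := by
  induction l, hl using Nat.le_induction with
  | base =>
    obtain ⟨t, rfl⟩ := hs
    obtain ⟨u, hu⟩ : ∃ u, t * (t + 1) = 2 * u := by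
      rcases Int.even_mul_succ_self t with ⟨u, hu⟩
      exact ⟨u, by linarith⟩
    have hs2 : (2*t+1)^2 = 8*u + 1 := by linear_combination 4 * hu
    constructor
    · show (fibPoly 6).eval _ ≡ 0 [ZMOD (2:ℤ)^(1+2)]
      rw [fibPoly_six]
      refine Int.modEq_iff_dvd.mpr ⟨-((2*t+1) * (4*u+1) * (2*u+1)), ?_⟩
      simp only [eval_add, eval_mul, eval_pow, eval_ofNat, eval_X]
      linear_combination (-(2*t+1)^3 - 8*u*(2*t+1) - 5*(2*t+1)) * hs2
    · show (fibPoly 7).eval _ ≡ 1 + 2^(1+1) [ZMOD (2:ℤ)^(1+2)]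
      rw [fibPoly_seven]
      refine Int.modEq_iff_dvd.mpr ⟨-(64*u^3 + 64*u^2 + 19*u + 1), ?_⟩
      simp only [eval_add, eval_mul, eval_pow, eval_ofNat, eval_X, eval_one]
      linear_combination (-(2*t+1)^4 - (8*u+1)*(2*t+1)^2 - (8*u+1)^2
        - 5*(2*t+1)^2 - 5*(8*u+1) - 6) * hs2
  | succ n hn ih =>
    obtain ⟨ih1, ih2⟩ := ih
    obtain ⟨j, rfl⟩ : ∃ j, n = j + 1 := ⟨n - 1, by omega⟩
    obtain ⟨K, hK⟩ : ∃ K, 3 * 2 ^ (j + 1) = K + 1 := by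
      have := Nat.one_le_two_pow (n := j + 1)
      exact ⟨3 * 2 ^ (j + 1) - 1, by omega⟩
    set a := (fibPoly (K+1)).eval s with ha_def
    set b := (fibPoly (K+2)).eval s with hb_def
    set c := (fibPoly K).eval s with hc_def
    have hc : c = b - s * a := by
      rw [hb_def, fibPoly_step]
      simp [ha_def, hc_def]
    rw [hK] at ih1 ih2
    obtain ⟨p, hp⟩ := Int.ModEq.dvd ih1
    obtain ⟨q, hq⟩ := Int.ModEq.dvd ih2
    have e1 : 3 * 2 ^ (j + 1 + 1) = (K + 1) + K + 1 := by
      have : 3 * 2 ^ (j + 1 + 1) = 2 * (3 * 2 ^ (j + 1)) := by ring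
      omega
    have h2N : (fibPoly (3 * 2 ^ (j + 1 + 1))).eval s = b * a + a * c := by
      rw [e1, fibPoly_add (K+1) K]
      simp only [eval_add, eval_mul]
      rfl
    have h2N1 : (fibPoly (3 * 2 ^ (j + 1 + 1) + 1)).eval s = b * b + a * a := by
      rw [show 3 * 2 ^ (j + 1 + 1) + 1 = (K + 1) + (K + 1) + 1 by omega,
          fibPoly_add (K+1) (K+1)]
      simp only [eval_add, eval_mul]
      rfl
    have ha : a = -(2 ^ (j + 1 + 2) * p) := by linear_combination -hp
    have hb : b = 1 + 2 ^ (j + 1 + 1) - 2 ^ (j + 1 + 2) * q := by linear_combination -hq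
    constructor
    · rw [h2N, hc, ha]
      refine Int.modEq_iff_dvd.mpr ⟨p * b + s * 2 ^ (j + 2) * p ^ 2, ?_⟩
      ring
    · rw [h2N1, ha, hb]
      refine Int.modEq_iff_dvd.mpr ⟨q - 2 ^ j * (1 - 2*q) ^ 2 - 2 ^ (j + 2) * p ^ 2, ?_⟩
      ring
end

section
/- For every odd integer s and every positive integer l, the sequence m ↦ F_m(s) (mod 2^l) is periodic with (exact) period 3·2^{l-1}, i.e., F_{m+3·2^{l-1}}(s) ≡ F_m(s) (mod 2^l) for all m ≥ 0, and no smaller positive period works. -/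
open Polynomial

/-- the integer sequence F_n(s) -/
noncomputable def fa (s : ℤ) (n : ℕ) : ℤ := (fibPoly n).eval s

lemma fa_zero (s : ℤ) : fa s 0 = 0 := by simp [fa, fibPoly]
lemma fa_one (s : ℤ) : fa s 1 = 1 := by simp [fa, fibPoly]
lemma fa_rec (s : ℤ) (n : ℕ) : fa s (n + 2) = s * fa s (n + 1) + fa s n := by
  simp [fa, fibPoly]

/-- companion matrix over ℤ -/
def Mz (s : ℤ) : Matrix (Fin 2) (Fin 2) ℤ := !![s, 1; 1, 0]

lemma Mz_pow (s : ℤ) : ∀ n : ℕ,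
    Mz s ^ (n + 1) = !![fa s (n + 2), fa s (n + 1); fa s (n + 1), fa s n]
  | 0 => by
      have h2 : fa s 2 = s := by rw [show (2:ℕ)=0+2 from rfl, fa_rec, fa_zero, fa_one]; ring
      rw [pow_one, Mz, h2, fa_zero, fa_one]
  | n + 1 => by
      rw [pow_succ, Mz_pow s n, Mz, Matrix.mul_fin_two]
      rw [fa_rec s (n + 1), fa_rec s n]
      ring_nf

lemma Mz_cube (s : ℤ) : Mz s ^ 3 = !![s ^ 3 + 2 * s, s ^ 2 + 1; s ^ 2 + 1, s] := by
  have h2 : fa s 2 = s := by rw [show (2:ℕ)=0+2 from rfl, fa_rec, fa_zero, fa_one]; ring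
  have h3 : fa s 3 = s ^ 2 + 1 := by rw [show (3:ℕ)=1+2 from rfl, fa_rec, fa_one, h2]; ring
  have h4 : fa s 4 = s ^ 3 + 2 * s := by rw [show (4:ℕ)=2+2 from rfl, fa_rec, h2, h3]; ring
  rw [show (3:ℕ)=2+1 from rfl, Mz_pow, h2, h3, h4]

lemma Mz_cube_sq (s : ℤ) :
    Mz s ^ 3 * (Mz s ^ 3) = (s ^ 3 + 3 * s) • (Mz s ^ 3) + 1 := by
  rw [Mz_cube, Matrix.mul_fin_two, Matrix.one_fin_two, Matrix.smul_of]
  ext i j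
  fin_cases i <;> fin_cases j <;>
    simp [Matrix.add_apply, smul_eq_mul] <;> ring

/-- coefficients of (Mz s ^ 3) ^ (2 ^ k) in the basis (1, Mz s ^ 3) -/
def AB (s : ℤ) : ℕ → ℤ × ℤ
  | 0 => (0, 1)
  | k + 1 =>
      let p := AB s k
      (p.1 ^ 2 + p.2 ^ 2, p.2 * (2 * p.1 + (s ^ 3 + 3 * s) * p.2))

lemma Mz_pow_pow (s : ℤ) : ∀ k : ℕ,
    Mz s ^ (3 * 2 ^ k) = (AB s k).1 • (1 : Matrix (Fin 2) (Fin 2) ℤ) + (AB s k).2 • (Mz s ^ 3)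
  | 0 => by simp [AB]
  | k + 1 => by
      have : 3 * 2 ^ (k + 1) = 3 * 2 ^ k + 3 * 2 ^ k := by ring
      rw [this, pow_add, Mz_pow_pow s k]
      rw [add_mul, mul_add, mul_add, smul_mul_assoc, smul_mul_assoc, smul_mul_assoc,
        smul_mul_assoc, mul_smul_comm, mul_smul_comm, mul_smul_comm, mul_smul_comm,
        one_mul, mul_one, Mz_cube_sq]
      show _ = ((AB s k).1 ^ 2 + (AB s k).2 ^ 2) • (1:Matrix (Fin 2) (Fin 2) ℤ) +
        ((AB s k).2 * (2 * (AB s k).1 + (s ^ 3 + 3 * s) * (AB s k).2)) • (Mz s ^ 3)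
      rw [one_mul]
      module

lemma AB_val (s : ℤ) (hs : Odd s) : ∀ k : ℕ, 1 ≤ k →
    ∃ a c : ℤ, Odd c ∧ (AB s k).1 = 1 + 2 ^ (k + 2) * a ∧ (AB s k).2 = 2 ^ (k + 1) * c := by
  intro k hk
  induction k, hk using Nat.le_induction with
  | base =>
      obtain ⟨j, hj⟩ := hs
      refine ⟨0, (2 * j + 1) * (j ^ 2 + j + 1), ?_, ?_, ?_⟩
      · obtain ⟨m, hm⟩ := Int.even_mul_succ_self j
        exact (odd_two_mul_add_one j).mul ⟨m, by
          rw [show j ^ 2 + j + 1 = j * (j + 1) + 1 by ring, hm]; ring⟩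
      · simp [AB]
      · show 1 * (2 * 0 + (s ^ 3 + 3 * s) * 1) = _
        rw [hj]; ring
  | succ k hk ih =>
      obtain ⟨a, c, hc, hA, hB⟩ := ih
      refine ⟨a + 2 ^ (k + 1) * a ^ 2 + 2 ^ (k - 1) * c ^ 2,
        c * (1 + 2 ^ (k + 2) * a + (s ^ 3 + 3 * s) * 2 ^ k * c), ?_, ?_, ?_⟩
      · refine hc.mul ?_
        have h3 : Odd (s ^ 3 + 3 * s + 1) := by
          obtain ⟨j, hj⟩ := hs
          exact ⟨4 * j ^ 3 + 6 * j ^ 2 + 6 * j + 2, by rw [hj]; ring⟩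
        obtain ⟨j, hj⟩ := hs
        refine ⟨2 ^ (k + 1) * a + (s ^ 3 + 3 * s) * 2 ^ (k - 1) * c, ?_⟩
        have hk1 : k - 1 + 1 = k := Nat.succ_pred_eq_of_pos hk
        have h2k : (2:ℤ) ^ k = 2 ^ (k - 1) * 2 := by
          rw [← pow_succ, hk1]
        rw [h2k]; ring
      · show (AB s k).1 ^ 2 + (AB s k).2 ^ 2 = _
        rw [hA, hB]
        have hkk : k - 1 + (k + 1) = k + k := by omega
        have h2k : (2:ℤ) ^ (k + k) = 2 ^ (k - 1) * 2 ^ (k + 1) := by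
          rw [← pow_add, hkk]
        rw [show (1 + 2 ^ (k + 2) * a) ^ 2 + (2 ^ (k + 1) * c) ^ 2 =
          1 + 2 ^ (k + 2) * 2 * a + 2 ^ (k + 2) * 2 ^ (k + 2) * a ^ 2
            + 2 ^ (k + k) * (2 * 2 * c ^ 2) by ring, h2k]
        ring
      · show (AB s k).2 * (2 * (AB s k).1 + (s ^ 3 + 3 * s) * (AB s k).2) = _
        rw [hA, hB]; ring

lemma fa_entries (s : ℤ) (k : ℕ) :
    fa s (3 * 2 ^ k) = (AB s k).2 * (s ^ 2 + 1) ∧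
    fa s (3 * 2 ^ k + 1) = (AB s k).1 + (AB s k).2 * (s ^ 3 + 2 * s) := by
  have h := Mz_pow_pow s k
  have hq : 3 * 2 ^ k = (3 * 2 ^ k - 1) + 1 := by
    have : 1 ≤ 2 ^ k := Nat.one_le_two_pow
    omega
  rw [hq, Mz_pow, Mz_cube, Matrix.one_fin_two] at h
  have e1 : 3 * 2 ^ k - 1 + 1 = 3 * 2 ^ k := hq.symm
  have e2 : 3 * 2 ^ k - 1 + 2 = 3 * 2 ^ k + 1 := by omega
  rw [e1, e2] at h
  constructor
  · have := congrFun (congrFun h 0) 1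
    simpa [Matrix.add_apply, Matrix.smul_apply, smul_eq_mul] using this
  · have := congrFun (congrFun h 0) 0
    simpa [Matrix.add_apply, Matrix.smul_apply, smul_eq_mul] using this

lemma Mzn_pow (s : ℤ) (n : ℕ) (q : ℕ) :
    ((Mz s).map (Int.cast : ℤ → ZMod n)) ^ q = (Mz s ^ q).map (Int.cast : ℤ → ZMod n) := by
  rw [show ((Mz s).map (Int.cast : ℤ → ZMod n))
      = (Int.castRingHom (ZMod n)).mapMatrix (Mz s) from rfl, ← map_pow,
    RingHom.mapMatrix_apply]
  rfl

lemma pow_char (s : ℤ) (n : ℕ) (q : ℕ) :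
    ((Mz s).map (Int.cast : ℤ → ZMod n)) ^ q = 1 ↔
      ((fa s q : ZMod n) = 0 ∧ (fa s (q + 1) : ZMod n) = 1) := by
  cases q with
  | zero => simp [fa_zero, fa_one]
  | succ q =>
      rw [Mzn_pow, Mz_pow, Matrix.one_fin_two]
      constructor
      · intro h
        have hmap : ∀ i j, ((!![fa s (q + 2), fa s (q + 1); fa s (q + 1), fa s q]).map
            (Int.cast : ℤ → ZMod n)) i j = (!![1, 0; 0, 1] : Matrix (Fin 2) (Fin 2) (ZMod n)) i j :=
          fun i j => by rw [h]
        have h01 := hmap 0 1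
        have h00 := hmap 0 0
        simp [Matrix.map_apply] at h01 h00
        exact ⟨h01, h00⟩
      · rintro ⟨h0, h1⟩
        have hrec : (fa s q : ZMod n) = 1 := by
          have := fa_rec s q
          have : ((fa s (q + 2) : ℤ) : ZMod n) = (s : ZMod n) * (fa s (q + 1) : ZMod n)
              + (fa s q : ZMod n) := by rw [this]; push_cast; ring
          rw [h0, h1] at this
          simpa using this.symm
        ext i j
        fin_cases i <;> fin_cases j <;>
          simp [Matrix.map_apply, h0, h1, hrec]

lemma odd_cast_two {x : ℤ} (h : Odd x) : (x : ZMod 2) = 1 := by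
  obtain ⟨j, hj⟩ := h
  rw [hj]; push_cast
  rw [show ((2 : ZMod 2)) = 0 by decide]; ring

lemma even_cast_two {x : ℤ} (h : Even x) : (x : ZMod 2) = 0 := by
  obtain ⟨j, hj⟩ := h
  rw [hj]; push_cast
  rw [show ((j : ZMod 2) + j) = 2 * j by ring, show ((2 : ZMod 2)) = 0 by decide]; ring

lemma orderOf_M2 (s : ℤ) (hs : Odd s) :
    orderOf ((Mz s).map (Int.cast : ℤ → ZMod 2)) = 3 := by
  have h3 : ((Mz s).map (Int.cast : ℤ → ZMod 2)) ^ 3 = 1 := by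
    rw [pow_char]
    constructor
    · have h : fa s 3 = s ^ 2 + 1 := by
        rw [show (3:ℕ) = 1 + 2 from rfl, fa_rec, fa_one,
          show (1:ℕ) + 1 = 0 + 2 from rfl, fa_rec, fa_zero, fa_one]; ring
      rw [h]
      refine even_cast_two ?_
      obtain ⟨j, hj⟩ := hs
      exact ⟨2 * j ^ 2 + 2 * j + 1, by rw [hj]; ring⟩
    · have h : fa s 4 = s ^ 3 + 2 * s := by
        rw [show (4:ℕ) = 2 + 2 from rfl, fa_rec,
          show (2:ℕ) + 1 = 1 + 2 from rfl, fa_rec, fa_one,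
          show (2:ℕ) = 0 + 2 from rfl, fa_rec, fa_zero, fa_one]; ring
      rw [show (3:ℕ) + 1 = 4 from rfl, h]
      refine odd_cast_two ?_
      obtain ⟨j, hj⟩ := hs
      exact ⟨4 * j ^ 3 + 6 * j ^ 2 + 5 * j + 1, by rw [hj]; ring⟩
  have hne : ((Mz s).map (Int.cast : ℤ → ZMod 2)) ≠ 1 := by
    intro h
    have h1 : ((Mz s).map (Int.cast : ℤ → ZMod 2)) ^ 1 = 1 := by rw [pow_one, h]
    rw [pow_char] at h1
    have := h1.1
    rw [fa_one] at this
    simp at this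
  exact orderOf_eq_prime h3 hne

lemma fa_period (s : ℤ) (N : ℤ) (p : ℕ) (h0 : fa s p ≡ 0 [ZMOD N])
    (h1 : fa s (p + 1) ≡ 1 [ZMOD N]) :
    ∀ m : ℕ, fa s (m + p) ≡ fa s m [ZMOD N] := by
  have key : ∀ m : ℕ, fa s (m + p) ≡ fa s m [ZMOD N] ∧
      fa s (m + 1 + p) ≡ fa s (m + 1) [ZMOD N] := by
    intro m
    induction m with
    | zero =>
        refine ⟨?_, ?_⟩
        · rw [Nat.zero_add, fa_zero]; exact h0
        · rw [Nat.zero_add, fa_one, Nat.add_comm 1 p]; exact h1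
    | succ m ih =>
        refine ⟨ih.2, ?_⟩
        have e1 : m + 1 + 1 + p = (m + p) + 2 := by omega
        have e2 : m + 1 + p = (m + p) + 1 := by omega
        rw [e1, fa_rec, show m + 1 + 1 = m + 2 from rfl, fa_rec, ← e2]
        exact ((ih.2).mul_left s).add ih.1
  exact fun m => (key m).1

lemma dvd_cases (d l : ℕ) (hl : 1 ≤ l) (hdvd : d ∣ 3 * 2 ^ (l - 1))
    (hne : d ≠ 3 * 2 ^ (l - 1)) :
    d ∣ 2 ^ (l - 1) ∨ (2 ≤ l ∧ d ∣ 3 * 2 ^ (l - 2)) := by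
  by_cases h3 : 3 ∣ d
  · obtain ⟨e, he⟩ := h3
    subst he
    have he2 : e ∣ 2 ^ (l - 1) :=
      (mul_dvd_mul_iff_left (by norm_num : (3:ℕ) ≠ 0)).mp hdvd
    obtain ⟨b, hb, rfl⟩ := (Nat.dvd_prime_pow Nat.prime_two).mp he2
    have hblt : b < l - 1 := by
      rcases Nat.lt_or_ge b (l - 1) with h | h
      · exact h
      · exact absurd (by rw [Nat.le_antisymm hb h]) hne
    right
    refine ⟨by omega, mul_dvd_mul_left 3 (pow_dvd_pow 2 (by omega))⟩
  · left
    have hcop : Nat.Coprime d 3 :=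
      Nat.Coprime.symm ((Nat.Prime.coprime_iff_not_dvd Nat.prime_three).mpr h3)
    exact hcop.dvd_of_dvd_mul_left hdvd

theorem fibPoly_eval_odd_periodic (s : ℤ) (hs : Odd s) (l : ℕ) (hl : 1 ≤ l) :
    (∀ m : ℕ, (fibPoly (m + 3 * 2 ^ (l - 1))).eval s ≡ (fibPoly m).eval s
        [ZMOD (2 : ℤ) ^ l]) ∧
    (∀ p : ℕ, 0 < p →
      (∀ m : ℕ, (fibPoly (m + p)).eval s ≡ (fibPoly m).eval s [ZMOD (2 : ℤ) ^ l]) →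
      3 * 2 ^ (l - 1) ≤ p) := by
  have hcast : ((2:ℤ)) ^ l = ((2 ^ l : ℕ) : ℤ) := by push_cast; ring
  have key0 : ∀ x : ℤ, (x ≡ 0 [ZMOD (2:ℤ) ^ l]) ↔ ((x : ZMod (2 ^ l)) = 0) := by
    intro x
    rw [ZMod.intCast_zmod_eq_zero_iff_dvd, ← hcast]
    exact Int.modEq_zero_iff_dvd
  have key1 : ∀ x : ℤ, (x ≡ 1 [ZMOD (2:ℤ) ^ l]) ↔ ((x : ZMod (2 ^ l)) = 1) := by
    intro x
    constructor
    · intro h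
      have := (ZMod.intCast_eq_intCast_iff x 1 (2 ^ l)).mpr (by rwa [hcast] at h)
      simpa using this
    · intro h
      have h' : ((x : ZMod (2 ^ l))) = ((1 : ℤ) : ZMod (2 ^ l)) := by simpa using h
      have := (ZMod.intCast_eq_intCast_iff x 1 (2 ^ l)).mp h'
      rwa [← hcast] at this
  have hodd2 : Odd (s ^ 3 + 2 * s) := by
    obtain ⟨j, hj⟩ := hs
    exact ⟨4 * j ^ 3 + 6 * j ^ 2 + 5 * j + 1, by rw [hj]; ring⟩
  -- fundamental congruences at the period P = 3 * 2 ^ (l - 1)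
  have hfaP := fa_entries s (l - 1)
  have hP0 : fa s (3 * 2 ^ (l - 1)) ≡ 0 [ZMOD (2:ℤ) ^ l] := by
    rw [Int.modEq_zero_iff_dvd, hfaP.1]
    rcases Nat.lt_or_ge l 2 with h2 | h2
    · -- l = 1
      have hl1 : l = 1 := by omega
      subst hl1
      obtain ⟨j, hj⟩ := hs
      exact ⟨(AB s 0).2 * (2 * j ^ 2 + 2 * j + 1), by rw [hj]; ring⟩
    · obtain ⟨a, c, hc, hA, hB⟩ := AB_val s hs (l - 1) (by omega)
      have el : l - 1 + 1 = l := by omega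
      rw [hB, el]
      exact ⟨c * (s ^ 2 + 1), by ring⟩
  have hP1 : fa s (3 * 2 ^ (l - 1) + 1) ≡ 1 [ZMOD (2:ℤ) ^ l] := by
    rw [Int.modEq_iff_dvd, hfaP.2]
    rcases Nat.lt_or_ge l 2 with h2 | h2
    · have hl1 : l = 1 := by omega
      subst hl1
      obtain ⟨j, hj⟩ := hodd2
      refine ⟨-j, ?_⟩
      have : (AB s 0).1 = 0 ∧ (AB s 0).2 = 1 := ⟨rfl, rfl⟩
      rw [this.1, this.2, hj]; ring
    · obtain ⟨a, c, hc, hA, hB⟩ := AB_val s hs (l - 1) (by omega)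
      have el : l - 1 + 1 = l := by omega
      have el2 : l - 1 + 2 = l + 1 := by omega
      rw [hA, hB, el, el2]
      exact ⟨-(2 * a + c * (s ^ 3 + 2 * s)), by rw [pow_succ]; ring⟩
  constructor
  · intro m
    exact fa_period s ((2:ℤ) ^ l) (3 * 2 ^ (l - 1)) hP0 hP1 m
  · intro p hp hper
    -- matrix over ZMod (2 ^ l)
    have h0 : fa s p ≡ 0 [ZMOD (2:ℤ) ^ l] := by
      have := hper 0
      simpa [fa, fibPoly, Nat.zero_add] using this
    have h1 : fa s (p + 1) ≡ 1 [ZMOD (2:ℤ) ^ l] := by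
      have := hper 1
      rw [Nat.add_comm 1 p] at this
      simpa [fa, fibPoly] using this
    have hMp : ((Mz s).map (Int.cast : ℤ → ZMod (2 ^ l))) ^ p = 1 :=
      (pow_char s (2 ^ l) p).mpr ⟨(key0 _).mp h0, (key1 _).mp h1⟩
    have hMP : ((Mz s).map (Int.cast : ℤ → ZMod (2 ^ l))) ^ (3 * 2 ^ (l - 1)) = 1 :=
      (pow_char s (2 ^ l) _).mpr ⟨(key0 _).mp hP0, (key1 _).mp hP1⟩
    set d := orderOf ((Mz s).map (Int.cast : ℤ → ZMod (2 ^ l))) with hd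
    have hdp : d ∣ p := orderOf_dvd_of_pow_eq_one hMp
    have hdP : d ∣ 3 * 2 ^ (l - 1) := orderOf_dvd_of_pow_eq_one hMP
    have hdeq : d = 3 * 2 ^ (l - 1) := by
      by_contra hne
      rcases dvd_cases d l hl hdP hne with hcase | ⟨hl2, hcase⟩
      · -- d ∣ 2 ^ (l - 1) : contradiction mod 2
        have hM1 : ((Mz s).map (Int.cast : ℤ → ZMod (2 ^ l))) ^ (2 ^ (l - 1)) = 1 :=
          orderOf_dvd_iff_pow_eq_one.mp hcase
        obtain ⟨hz0, hz1⟩ := (pow_char s (2 ^ l) _).mp hM1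
        have hdvd0 : (2:ℤ) ^ l ∣ fa s (2 ^ (l - 1)) :=
          Int.modEq_zero_iff_dvd.mp ((key0 _).mpr hz0)
        have hdvd1 : (2:ℤ) ^ l ∣ 1 - fa s (2 ^ (l - 1) + 1) :=
          Int.modEq_iff_dvd.mp ((key1 _).mpr hz1)
        have h2l : (2:ℤ) ∣ (2:ℤ) ^ l := dvd_pow_self 2 (by omega)
        have heven : Even (fa s (2 ^ (l - 1))) :=
          (even_iff_two_dvd).mpr (h2l.trans hdvd0)
        have hodd : Odd (fa s (2 ^ (l - 1) + 1)) := by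
          have he : Even (fa s (2 ^ (l - 1) + 1) - 1) := by
            have := (even_iff_two_dvd).mpr (h2l.trans hdvd1)
            simpa using this.neg
          have := he.add_one
          simpa using this
        have hM2 : ((Mz s).map (Int.cast : ℤ → ZMod 2)) ^ (2 ^ (l - 1)) = 1 :=
          (pow_char s 2 _).mpr ⟨even_cast_two heven, odd_cast_two hodd⟩
        have h3dvd : 3 ∣ 2 ^ (l - 1) := by
          rw [← orderOf_M2 s hs]
          exact orderOf_dvd_of_pow_eq_one hM2
        have := Nat.Prime.dvd_of_dvd_pow Nat.prime_three h3dvd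
        norm_num at this
      · -- d ∣ 3 * 2 ^ (l - 2) : contradiction mod 2 ^ l
        have hM1 : ((Mz s).map (Int.cast : ℤ → ZMod (2 ^ l))) ^ (3 * 2 ^ (l - 2)) = 1 :=
          orderOf_dvd_iff_pow_eq_one.mp hcase
        obtain ⟨hz0, hz1⟩ := (pow_char s (2 ^ l) _).mp hM1
        have hfa2 := fa_entries s (l - 2)
        rcases Nat.lt_or_ge l 3 with h3 | h3
        · -- l = 2
          have hl2' : l = 2 := by omega
          subst hl2'
          have hdvd0 : (2:ℤ) ^ 2 ∣ fa s (3 * 2 ^ 0) :=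
            Int.modEq_zero_iff_dvd.mp ((key0 _).mpr hz0)
          rw [hfa2.1] at hdvd0
          have hAB0 : (AB s 0).2 = 1 := rfl
          rw [hAB0, one_mul] at hdvd0
          obtain ⟨j, hj⟩ := hs
          obtain ⟨k, hk⟩ := hdvd0
          rw [hj] at hk
          have hk' : 4 * (j ^ 2 + j) + 2 = 4 * k := by ring_nf; ring_nf at hk; linarith
          omega
        · -- l ≥ 3
          obtain ⟨a, c, hc, hA, hB⟩ := AB_val s hs (l - 2) (by omega)
          have hdvd1 : (2:ℤ) ^ l ∣ 1 - fa s (3 * 2 ^ (l - 2) + 1) :=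
            Int.modEq_iff_dvd.mp ((key1 _).mpr hz1)
          rw [hfa2.2, hA, hB] at hdvd1
          have el : l - 2 + 1 = l - 1 := by omega
          have el2 : l - 2 + 2 = l := by omega
          rw [el, el2] at hdvd1
          have hdvd1' : (2:ℤ) ^ (l - 1) * 2 ∣
              (2:ℤ) ^ (l - 1) * (-(2 * a + c * (s ^ 3 + 2 * s))) := by
            have e3 : (2:ℤ) ^ (l - 1) * 2 = 2 ^ l := by
              rw [← pow_succ, show l - 1 + 1 = l by omega]
            have e4 : 1 - (1 + 2 ^ l * a + 2 ^ (l - 1) * c * (s ^ 3 + 2 * s)) =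
                (2:ℤ) ^ (l - 1) * (-(2 * a + c * (s ^ 3 + 2 * s))) := by
              rw [← e3]; ring
            rw [e3, ← e4]
            exact hdvd1
          have h2dvd : (2:ℤ) ∣ -(2 * a + c * (s ^ 3 + 2 * s)) :=
            (mul_dvd_mul_iff_left (a := (2:ℤ) ^ (l - 1)) (by positivity)).mp hdvd1'
          have hoddc : Odd (2 * a + c * (s ^ 3 + 2 * s)) := by
            have := hc.mul hodd2
            obtain ⟨m, hm⟩ := this
            exact ⟨a + m, by rw [hm]; ring⟩
          have : Even (2 * a + c * (s ^ 3 + 2 * s)) := by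
            have := (even_iff_two_dvd).mpr h2dvd
            simpa using this.neg
          exact (Int.not_odd_iff_even.mpr this) hoddc
    exact hdeq ▸ Nat.le_of_dvd hp hdp
end

section
/- Let s be an even integer with 2-adic valuation ν = ν₂(s) ≥ 1, and let l be a positive integer. If l ≤ ν then the sequence m ↦ F_m(s) (mod 2^l) is periodic of period 2, and if l > ν then it is periodic of period 2^{l+1-ν}. -/
open Polynomial

noncomputable def Fs (s : ℤ) (m : ℕ) : ℤ := (fibPoly m).eval s

lemma Fs_zero (s : ℤ) : Fs s 0 = 0 := by simp [Fs, fibPoly]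
lemma Fs_one (s : ℤ) : Fs s 1 = 1 := by simp [Fs, fibPoly]
lemma Fs_add_two (s : ℤ) (m : ℕ) : Fs s (m+2) = s * Fs s (m+1) + Fs s m := by
  simp [Fs, fibPoly]

lemma Fs_addition (s : ℤ) : ∀ m n : ℕ,
    Fs s (m + n + 1) = Fs s (m+1) * Fs s (n+1) + Fs s m * Fs s n := by
  have key : ∀ m : ℕ, (∀ n, Fs s (m + n + 1) = Fs s (m+1) * Fs s (n+1) + Fs s m * Fs s n)
      ∧ (∀ n, Fs s (m+1 + n + 1) = Fs s (m+2) * Fs s (n+1) + Fs s (m+1) * Fs s n) := by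
    intro m
    induction m with
    | zero =>
      constructor
      · intro n; simp [Fs_zero, Fs_one]
      · intro n
        have : 1 + n + 1 = n + 2 := by ring
        rw [this, Fs_add_two, Fs_add_two s 0, Fs_zero, Fs_one]
        ring
    | succ k ih =>
      refine ⟨ih.2, ?_⟩
      intro n
      have h1 : k + 1 + 1 + n + 1 = (k + n + 1) + 2 := by ring
      rw [h1, Fs_add_two]
      have h2 : k + n + 1 + 1 = k + 1 + n + 1 := by ring
      have h3 : k + n + 1 = k + n + 1 := rfl
      rw [h2, ih.2 n, ih.1 n, Fs_add_two s (k+1), Fs_add_two s k]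
      ring
  exact fun m => (key m).1

lemma Fs_odd (s : ℤ) (hs : 2 ∣ s) : ∀ k : ℕ, Odd (Fs s (2*k+1)) := by
  intro k
  induction k with
  | zero => simp [Fs_one]
  | succ k ih =>
    have : 2*(k+1)+1 = (2*k+1) + 2 := by ring
    rw [this, Fs_add_two]
    obtain ⟨c, hc⟩ := hs
    subst hc
    obtain ⟨d, hd⟩ := ih
    exact ⟨c * Fs (2*c) (2*k+1+1) + d, by rw [hd]; ring⟩
lemma Fs_two (s : ℤ) : Fs s 2 = s := by
  rw [show 2 = 0+2 from rfl, Fs_add_two, Fs_one, Fs_zero]; ring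

lemma Fs_double (s : ℤ) (k : ℕ) (hk : 1 ≤ k) :
    Fs s (2*k) = Fs s k * (2 * Fs s (k+1) - s * Fs s k) := by
  obtain ⟨j, rfl⟩ := Nat.exists_eq_add_of_le hk
  have h1 : 2*(1+j) = (j+1) + j + 1 := by ring
  rw [h1, Fs_addition]
  have hk2 : Fs s j = Fs s (j+2) - s * Fs s (j+1) := by rw [Fs_add_two]; ring
  rw [hk2]
  have h3 : (1:ℕ) + j = j + 1 := by ring
  rw [h3]
  ring

lemma Fs_double_one (s : ℤ) (k : ℕ) :
    Fs s (2*k+1) = Fs s (k+1)^2 + Fs s k^2 := by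
  rw [show 2*k+1 = k+k+1 from by ring, Fs_addition]; ring

lemma keyA (s u : ℤ) (ν : ℕ) (hu : Odd u) (hs : s = 2^(ν+1) * u) :
    ∀ e : ℕ, (∃ w : ℤ, Odd w ∧ Fs s (2^(e+1)) = 2^(ν+1+e) * w) ∧
      (2:ℤ)^(ν+1+e) ∣ (Fs s (2^(e+1)+1) - 1) := by
  have hs2 : (2:ℤ) ∣ s := by rw [hs, pow_succ']; exact ⟨2^ν * u, by ring⟩
  intro e
  induction e with
  | zero =>
    constructor
    · exact ⟨u, hu, by rw [show (2:ℕ)^1 = 2 from rfl, Fs_two, hs]⟩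
    · refine ⟨2^(ν+1) * u^2, ?_⟩
      rw [show (2:ℕ)^1+1 = 1+2 from rfl, Fs_add_two, Fs_two, Fs_one, hs]
      ring
  | succ e ih =>
    obtain ⟨⟨w, hw, hFn⟩, hdvd⟩ := ih
    have hodd : Odd (Fs s (2^(e+1)+1)) := by
      have := Fs_odd s hs2 (2^e)
      rwa [show 2*2^e+1 = 2^(e+1)+1 from by rw [pow_succ]; ring] at this
    have hk : 1 ≤ 2^(e+1) := Nat.one_le_two_pow
    have hD : Fs s (2^(e+2)) = Fs s (2^(e+1)) * (2 * Fs s (2^(e+1)+1) - s * Fs s (2^(e+1))) := by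
      rw [show (2:ℕ)^(e+2) = 2*2^(e+1) from by rw [pow_succ]; ring]
      exact Fs_double s _ hk
    constructor
    · refine ⟨w * (Fs s (2^(e+1)+1) - 2^(2*ν+e+1) * u * w), ?_, ?_⟩
      · apply hw.mul
        apply Odd.sub_even hodd
        exact ⟨2^(2*ν+e) * u * w, by rw [show 2*ν+e+1 = (2*ν+e)+1 from rfl, pow_succ]; ring⟩
      · rw [hD, hFn, hs]; ring
    · obtain ⟨a, ha⟩ := hdvd
      obtain ⟨b, hb⟩ := hodd
      refine ⟨a*(b+1) + 2^(ν+e)*w^2, ?_⟩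
      rw [show (2:ℕ)^(e+2)+1 = 2*2^(e+1)+1 from by rw [pow_succ]; ring,
        Fs_double_one, hFn]
      have hfact : Fs s (2^(e+1)+1)^2 - 1
          = (Fs s (2^(e+1)+1) - 1) * (Fs s (2^(e+1)+1) + 1) := by ring
      rw [show Fs s (2^(e+1)+1)^2 + (2^(ν+1+e)*w)^2 - 1
          = (Fs s (2^(e+1)+1) - 1) * (Fs s (2^(e+1)+1) + 1) + (2^(ν+1+e)*w)^2 from by ring,
        ha, hb]
      ring

def IsPeriod (s N : ℤ) (p : ℕ) : Prop := ∀ m : ℕ, Fs s (m+p) ≡ Fs s m [ZMOD N]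

lemma isPeriod_of {s N : ℤ} {p : ℕ} (h0 : Fs s p ≡ 0 [ZMOD N])
    (h1 : Fs s (p+1) ≡ 1 [ZMOD N]) : IsPeriod s N p := by
  intro m
  cases m with
  | zero => simpa [Fs_zero] using h0
  | succ k =>
    have h : k+1+p = k+p+1 := by ring
    rw [h, Fs_addition]
    have : Fs s (k+1) * Fs s (p+1) + Fs s k * Fs s p
        ≡ Fs s (k+1) * 1 + Fs s k * 0 [ZMOD N] :=
      Int.ModEq.add ((Int.ModEq.refl _).mul h1) ((Int.ModEq.refl _).mul h0)
    simpa using this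
lemma IsPeriod.zero (s N : ℤ) : IsPeriod s N 0 := fun m => by simp [IsPeriod]

lemma IsPeriod.add {s N : ℤ} {p q : ℕ} (hp : IsPeriod s N p) (hq : IsPeriod s N q) :
    IsPeriod s N (p+q) := by
  intro m
  have h : m + (p+q) = (m+q) + p := by ring
  rw [h]
  exact (hp (m+q)).trans (hq m)

lemma IsPeriod.mul_left {s N : ℤ} {p : ℕ} (hp : IsPeriod s N p) (k : ℕ) :
    IsPeriod s N (k*p) := by
  induction k with
  | zero => simpa using IsPeriod.zero s N
  | succ k ih =>
    have h : (k+1)*p = k*p + p := by ring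
    rw [h]; exact ih.add hp

lemma IsPeriod.mod {s N : ℤ} {p q : ℕ} (hp : IsPeriod s N p) (hq : IsPeriod s N q) :
    IsPeriod s N (p % q) := by
  intro m
  have h : m + p % q + (p / q) * q = m + p := by
    rw [Nat.add_assoc, Nat.mod_add_div']
  have h1 := (hq.mul_left (p/q)) (m + p % q)
  rw [h] at h1
  exact h1.symm.trans (hp m)

lemma IsPeriod.gcd {s N : ℤ} {p q : ℕ} (hp : IsPeriod s N p) (hq : IsPeriod s N q) :
    IsPeriod s N (Nat.gcd p q) := by
  induction p, q using Nat.gcd.induction with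
  | H0 q => simpa using hq
  | H1 m n hm ih =>
    rw [Nat.gcd_rec]
    exact ih (hq.mod hp) hp

theorem fibPoly_eval_even_periodic (s : ℤ) (hs0 : s ≠ 0) (ν : ℕ)
    (hν : ν = padicValInt 2 s) (hν1 : 1 ≤ ν) (l : ℕ) (hl : 1 ≤ l) :
    (l ≤ ν →
      (∀ m : ℕ, (fibPoly (m + 2)).eval s ≡ (fibPoly m).eval s [ZMOD (2 : ℤ) ^ l]) ∧
      (∀ p : ℕ, 0 < p →
        (∀ m : ℕ, (fibPoly (m + p)).eval s ≡ (fibPoly m).eval s [ZMOD (2 : ℤ) ^ l]) →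
        2 ≤ p)) ∧
    (ν < l →
      (∀ m : ℕ, (fibPoly (m + 2 ^ (l + 1 - ν))).eval s ≡ (fibPoly m).eval s
          [ZMOD (2 : ℤ) ^ l]) ∧
      (∀ p : ℕ, 0 < p →
        (∀ m : ℕ, (fibPoly (m + p)).eval s ≡ (fibPoly m).eval s [ZMOD (2 : ℤ) ^ l]) →
        2 ^ (l + 1 - ν) ≤ p)) := by
  -- extract s = 2^ν * u with u odd
  have hdvd : (2:ℤ)^ν ∣ s := by
    rw [hν]
    have := padicValInt_dvd (p := 2) s
    exact_mod_cast this
  obtain ⟨u, hu⟩ := hdvd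
  have hu_odd : Odd u := by
    rw [← Int.not_even_iff_odd]
    intro ⟨c, hc⟩
    have h2 : ((2:ℕ):ℤ)^(ν+1) ∣ s := ⟨c, by rw [hu, hc]; push_cast; ring⟩
    rw [padicValInt_dvd_iff] at h2
    rcases h2 with h | h
    · exact hs0 h
    · rw [← hν] at h; omega
  -- the "1 ≡ 0 is false" fact
  have hone : ¬ ((1:ℤ) ≡ 0 [ZMOD (2:ℤ)^l]) := by
    intro h
    have hd := Int.ModEq.dvd h
    have hd' : (2:ℤ)^l ∣ (-1 : ℤ) := by simpa using hd
    have h2 : (2:ℤ) ∣ (-1:ℤ) :=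
      dvd_trans (dvd_pow_self 2 (Nat.one_le_iff_ne_zero.mp hl)) hd'
    norm_num at h2
  constructor
  · -- case l ≤ ν
    intro hlν
    constructor
    · intro m
      show Fs s (m+2) ≡ Fs s m [ZMOD (2:ℤ)^l]
      rw [Fs_add_two]
      have hsl : (2:ℤ)^l ∣ s * Fs s (m+1) :=
        Dvd.dvd.mul_right (dvd_trans (pow_dvd_pow 2 hlν) ⟨u, hu⟩) _
      have : s * Fs s (m+1) + Fs s m ≡ 0 + Fs s m [ZMOD (2:ℤ)^l] :=
        Int.ModEq.add_right _ (Int.modEq_zero_iff_dvd.mpr hsl)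
      simpa using this
    · intro p hp hper
      by_contra h
      have hp1 : p = 1 := by omega
      have := hper 0
      rw [hp1] at this
      have h01 : Fs s 1 ≡ Fs s 0 [ZMOD (2:ℤ)^l] := this
      rw [Fs_one, Fs_zero] at h01
      exact hone h01
  · -- case ν < l
    intro hνl
    obtain ⟨ν', rfl⟩ : ∃ ν'', ν = ν'' + 1 := ⟨ν - 1, by omega⟩
    obtain ⟨k, rfl⟩ : ∃ k, l = ν' + 1 + k + 1 := ⟨l - ν' - 2, by omega⟩
    set l := ν' + 1 + k + 1 with hld
    have hs : s = 2^(ν'+1) * u := hu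
    have hA := keyA s u ν' hu_odd hs
    have hexp : l + 1 - (ν'+1) = k + 2 := by omega
    rw [hexp]
    -- periodicity at 2^(k+2)
    have hexp2 : ν' + 1 + (k+1) = l := by omega
    obtain ⟨⟨w, hw, hF⟩, hF1⟩ := hA (k+1)
    rw [hexp2] at hF hF1
    have hper0 : Fs s (2^(k+2)) ≡ 0 [ZMOD (2:ℤ)^l] :=
      Int.modEq_zero_iff_dvd.mpr ⟨w, hF⟩
    have hper1 : Fs s (2^(k+2)+1) ≡ 1 [ZMOD (2:ℤ)^l] :=
      (Int.modEq_iff_dvd.mpr hF1).symm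
    have hmain : IsPeriod s ((2:ℤ)^l) (2^(k+2)) := isPeriod_of hper0 hper1
    constructor
    · exact fun m => hmain m
    · intro p hp hper
      have hperP : IsPeriod s ((2:ℤ)^l) p := fun m => hper m
      have hg : IsPeriod s ((2:ℤ)^l) (Nat.gcd p (2^(k+2))) := hperP.gcd hmain
      obtain ⟨j, hj, hgj⟩ := (Nat.dvd_prime_pow Nat.prime_two).mp
        (Nat.gcd_dvd_right p (2^(k+2)))
      by_cases hjk : j ≤ k + 1
      · exfalso
        -- 2^(k+1) is then a period, contradicting exact valuation
        have hdvd2 : Nat.gcd p (2^(k+2)) ∣ 2^(k+1) := hgj ▸ pow_dvd_pow 2 hjk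
        obtain ⟨t, ht⟩ := hdvd2
        have hper2 : IsPeriod s ((2:ℤ)^l) (2^(k+1)) := by
          rw [ht, Nat.mul_comm]; exact hg.mul_left t
        have h0 := hper2 0
        rw [Nat.zero_add, Fs_zero] at h0
        have hd : (2:ℤ)^l ∣ Fs s (2^(k+1)) := Int.modEq_zero_iff_dvd.mp h0
        obtain ⟨⟨w', hw', hF'⟩, -⟩ := hA k
        rw [hF'] at hd
        have hl1 : (2:ℤ)^l = 2^(ν'+1+k) * 2 := by rw [← pow_succ]
        rw [hl1] at hd
        have h2w : (2:ℤ) ∣ w' := by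
          rcases hd with ⟨c, hc⟩
          refine ⟨c, ?_⟩
          have hne : (2:ℤ)^(ν'+1+k) ≠ 0 := pow_ne_zero _ (by norm_num)
          apply mul_left_cancel₀ hne
          rw [hc]; ring
        rw [← Int.not_even_iff_odd] at hw'
        exact hw' ((even_iff_two_dvd).mpr h2w)
      · have hj2 : j = k + 2 := by omega
        have : 2^(k+2) ∣ p := by
          rw [← hj2, ← hgj]; exact Nat.gcd_dvd_left _ _
        exact Nat.le_of_dvd hp this
end

section
/- For every odd integer s and every integer l ≥ 1, the 2-adic valuation of F_{3·2^l}(s) is exactly l + 2. -/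
open Polynomial

section aux

variable (s : ℤ)

noncomputable def gSeq (n : ℕ) : ℤ := (fibPoly n).eval s

def lucSeq : ℕ → ℤ
  | 0 => 2
  | 1 => s
  | n + 2 => s * lucSeq (n + 1) + lucSeq n

lemma gSeq_zero : gSeq s 0 = 0 := by simp [gSeq, fibPoly]
lemma gSeq_one : gSeq s 1 = 1 := by simp [gSeq, fibPoly]
lemma gSeq_rec (n : ℕ) : gSeq s (n + 2) = s * gSeq s (n + 1) + gSeq s n := by
  simp [gSeq, fibPoly]

lemma gSeq_two : gSeq s 2 = s := by
  have := gSeq_rec s 0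
  rw [gSeq_one, gSeq_zero] at this
  simpa using this

lemma gSeq_add (n m : ℕ) :
    gSeq s (m + n + 1) = gSeq s (m + 1) * gSeq s (n + 1) + gSeq s m * gSeq s n := by
  induction n using Nat.twoStepInduction generalizing m with
  | zero => simp [gSeq_zero, gSeq_one]
  | one =>
    have h := gSeq_rec s m
    simp only [show m + 1 + 1 = m + 2 by omega, h, gSeq_one]
    rw [gSeq_two]
    ring
  | more n ih1 ih2 =>
    have h1 := ih1 m
    have h2 := ih2 m
    rw [show m + (n + 2) + 1 = (m + n + 1) + 2 by omega, gSeq_rec,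
      show m + n + 1 + 1 = m + (n + 1) + 1 by omega, h2, h1,
      gSeq_rec s (n + 1), gSeq_rec s n]
    ring

lemma gSeq_cassini (n : ℕ) :
    gSeq s (n + 2) * gSeq s n - gSeq s (n + 1) ^ 2 = (-1) ^ (n + 1) := by
  induction n with
  | zero => simp [gSeq_zero, gSeq_one, gSeq_rec]
  | succ n ih =>
    have hr := gSeq_rec s n
    rw [gSeq_rec s (n + 1), show n + 1 + 1 = n + 2 by omega, pow_succ ((-1):ℤ) (n + 1)]
    linear_combination (-(gSeq s (n + 2))) * hr - ih

lemma lucSeq_eq (n : ℕ) : lucSeq s (n + 1) = gSeq s (n + 2) + gSeq s n := by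
  induction n using Nat.twoStepInduction with
  | zero => simp [lucSeq, gSeq_zero, gSeq_one, gSeq_rec]
  | one => simp [lucSeq, gSeq_zero, gSeq_one, gSeq_rec]; ring
  | more n ih1 ih2 =>
    show s * lucSeq s (n + 2) + lucSeq s (n + 1) = _
    rw [ih1, ih2, gSeq_rec s (n + 2), gSeq_rec s n]
    ring

lemma gSeq_double (n : ℕ) :
    gSeq s (2 * n + 2) = gSeq s (n + 1) * lucSeq s (n + 1) := by
  have h := gSeq_add s (n + 1) n
  rw [lucSeq_eq, show 2 * n + 2 = n + (n + 1) + 1 by omega, h]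
  ring

lemma lucSeq_double (n : ℕ) :
    lucSeq s (2 * n + 2) = lucSeq s (n + 1) ^ 2 - 2 * (-1) ^ (n + 1) := by
  have e1 := gSeq_add s (n + 1) (n + 1)
  have e2 := gSeq_add s n n
  have hc := gSeq_cassini s n
  rw [show 2 * n + 2 = (2 * n + 1) + 1 by omega, lucSeq_eq,
    show 2 * n + 1 + 2 = (n + 1) + (n + 1) + 1 by omega, e1,
    show 2 * n + 1 = n + n + 1 by omega, e2, lucSeq_eq]
  nlinarith [hc]

end aux

lemma odd_sq (s : ℤ) (hs : Odd s) : ∃ t : ℤ, s ^ 2 = 8 * t + 1 := by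
  obtain ⟨k, rfl⟩ := hs
  obtain ⟨m, hm⟩ : Even (k * (k + 1)) := Int.even_mul_succ_self k
  exact ⟨m, by nlinarith⟩

lemma luc3 (s : ℤ) (hs : Odd s) : ∃ v : ℤ, Odd v ∧ lucSeq s 3 = 4 * v := by
  have h3 : lucSeq s 3 = s ^ 3 + 3 * s := by simp [lucSeq]; ring
  obtain ⟨t, ht⟩ := odd_sq s hs
  refine ⟨s * (2 * t + 1), hs.mul ⟨t, by ring⟩, ?_⟩
  have : s ^ 3 + 3 * s = s * (s ^ 2 + 3) := by ring
  rw [h3, this, ht]; ring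

lemma index_succ (k : ℕ) : ∃ m, 3 * 2 ^ k = m + 1 := by
  have : 1 ≤ 2 ^ k := Nat.one_le_two_pow
  exact ⟨3 * 2 ^ k - 1, by omega⟩

lemma luc_powers (s : ℤ) (hs : Odd s) :
    ∀ k, 1 ≤ k → ∃ v : ℤ, Odd v ∧ lucSeq s (3 * 2 ^ k) = 2 * v := by
  intro k hk
  induction k with
  | zero => omega
  | succ k ih =>
    rcases Nat.eq_or_lt_of_le hk with h1 | h1
    · have hk0 : k = 0 := by omega
      subst hk0
      obtain ⟨v, hvo, hv⟩ := luc3 s hs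
      have h6 := lucSeq_double s 2
      norm_num at h6 ⊢
      rw [h6, hv]
      exact ⟨8 * v ^ 2 + 1, ⟨4 * v ^ 2, by ring⟩, by ring⟩
    · have hk1 : 1 ≤ k := by omega
      obtain ⟨v, hvo, hv⟩ := ih hk1
      obtain ⟨m, hm⟩ := index_succ k
      have hidx : 3 * 2 ^ (k + 1) = 2 * m + 2 := by rw [pow_succ]; omega
      have heven : Even (m + 1) := by
        rw [← hm]
        obtain ⟨j, rfl⟩ : ∃ j, k = j + 1 := ⟨k - 1, by omega⟩
        exact ⟨3 * 2 ^ j, by rw [pow_succ']; ring⟩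
      have hdbl := lucSeq_double s m
      rw [hm] at hv
      rw [hidx, hdbl, heven.neg_one_pow, hv]
      exact ⟨2 * v ^ 2 - 1, ⟨v ^ 2 - 1, by ring⟩, by ring⟩

lemma g6 (s : ℤ) (hs : Odd s) : ∃ u : ℤ, Odd u ∧ gSeq s 6 = 8 * u := by
  obtain ⟨v, hvo, hv⟩ := luc3 s hs
  have hd := gSeq_double s 2
  norm_num at hd
  have h3 : gSeq s 3 = s ^ 2 + 1 := by
    have := gSeq_rec s 1
    rw [gSeq_one] at this
    have h2 : gSeq s 2 = s := by
      have := gSeq_rec s 0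
      rw [gSeq_one, gSeq_zero] at this
      simpa using this
    rw [h2] at this
    rw [show (3:ℕ) = 1 + 2 from rfl, this]
    ring
  obtain ⟨t, ht⟩ := odd_sq s hs
  refine ⟨(4 * t + 1) * v, (show Odd (4 * t + 1) from ⟨2 * t, by ring⟩).mul hvo, ?_⟩
  rw [hd, h3, ht, hv]; ring

lemma g_powers (s : ℤ) (hs : Odd s) :
    ∀ l, 1 ≤ l → ∃ u : ℤ, Odd u ∧ gSeq s (3 * 2 ^ l) = 2 ^ (l + 2) * u := by
  intro l hl
  induction l with
  | zero => omega
  | succ l ih =>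
    rcases Nat.eq_or_lt_of_le hl with h1 | h1
    · have hl0 : l = 0 := by omega
      subst hl0
      obtain ⟨u, huo, hu⟩ := g6 s hs
      refine ⟨u, huo, ?_⟩
      norm_num [hu]
    · have hl1 : 1 ≤ l := by omega
      obtain ⟨u, huo, hu⟩ := ih hl1
      obtain ⟨v, hvo, hv⟩ := luc_powers s hs l hl1
      obtain ⟨m, hm⟩ := index_succ l
      have hidx : 3 * 2 ^ (l + 1) = 2 * m + 2 := by rw [pow_succ]; omega
      have hdbl := gSeq_double s m
      rw [hm] at hu hv
      refine ⟨u * v, huo.mul hvo, ?_⟩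
      rw [hidx, hdbl, hu, hv, pow_succ]
      ring

theorem fibPoly_eval_two_adic_valuation (s : ℤ) (hs : Odd s) (l : ℕ) (hl : 1 ≤ l) :
    padicValInt 2 ((fibPoly (3 * 2 ^ l)).eval s) = l + 2 := by
  obtain ⟨u, huo, hu⟩ := g_powers s hs l hl
  have heq : (fibPoly (3 * 2 ^ l)).eval s = 2 ^ (l + 2) * u := hu
  rw [heq]
  have hu0 : u ≠ 0 := by rintro rfl; exact (by simp : ¬ Odd (0:ℤ)) huo
  have h2 : ((2:ℤ) ^ (l + 2)) ≠ 0 := by positivity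
  haveI : Fact (Nat.Prime 2) := ⟨Nat.prime_two⟩
  rw [padicValInt.mul h2 hu0]
  have hp : padicValInt 2 ((2:ℤ) ^ (l + 2)) = l + 2 := by
    rw [show ((2:ℤ) ^ (l + 2)) = ((2 ^ (l + 2) : ℕ) : ℤ) from by push_cast; ring,
      padicValInt.of_nat, padicValNat.prime_pow]
  have hz : padicValInt 2 u = 0 := padicValInt.eq_zero_of_not_dvd (by
    obtain ⟨c, rfl⟩ := huo
    rintro ⟨d, hd⟩
    push_cast at hd
    omega)
  omega
end

section
/- For every odd integer s and every positive integer l, the derivative of the Fibonacci polynomial satisfies F'_{3·2^{l-1}}(s) ≡ 0 (mod 2^l) and F'_{3·2^{l-1}+1}(s) ≡ 2^{l-1} (mod 2^l). -/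
open Polynomial

private def fI (s : ℤ) : ℕ → ℤ
  | 0 => 0
  | 1 => 1
  | n + 2 => s * fI s (n + 1) + fI s n

private def dI (s : ℤ) : ℕ → ℤ
  | 0 => 0
  | 1 => 0
  | n + 2 => fI s (n + 1) + s * dI s (n + 1) + dI s n

private lemma eval_fibPoly (s : ℤ) : ∀ n, (fibPoly n).eval s = fI s n := by
  intro n
  induction n using Nat.twoStepInduction with
  | zero => simp [fibPoly, fI]
  | one => simp [fibPoly, fI]
  | more n ih1 ih2 => simp [fibPoly, fI, ih1, ih2]

private lemma eval_deriv_fibPoly (s : ℤ) :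
    ∀ n, (derivative (fibPoly n)).eval s = dI s n := by
  intro n
  induction n using Nat.twoStepInduction with
  | zero => simp [fibPoly, dI]
  | one => simp [fibPoly, dI]
  | more n ih1 ih2 =>
    simp only [fibPoly, dI, derivative_add, derivative_mul, derivative_X, eval_add, eval_mul,
      eval_X, eval_one, one_mul, ih1, ih2, eval_fibPoly]

private lemma fI_add (s : ℤ) : ∀ m n, fI s (m + n + 1) =
    fI s (m + 1) * fI s (n + 1) + fI s m * fI s n := by
  intro m
  induction m using Nat.twoStepInduction with
  | zero => intro n; simp [fI]
  | one =>
    intro n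
    have e : 1 + n + 1 = n + 2 := by omega
    rw [e]
    show s * fI s (n+1) + fI s n = _
    simp [fI]
  | more m ih1 ih2 =>
    intro n
    have e1 : m + 2 + n + 1 = (m + n + 1) + 2 := by omega
    have e2 : (m + n + 1) + 1 = (m + 1) + n + 1 := by omega
    rw [e1, show fI s ((m+n+1)+2) = s * fI s ((m+n+1)+1) + fI s (m+n+1) from rfl,
      e2, ih2 n, ih1 n]
    show _ = (s * fI s (m + 2) + fI s (m + 1)) * _ + (s * fI s (m+1) + fI s m) * _
    ring

private lemma dI_add (s : ℤ) : ∀ m n, dI s (m + n + 1) =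
    dI s (m + 1) * fI s (n + 1) + fI s (m + 1) * dI s (n + 1)
      + dI s m * fI s n + fI s m * dI s n := by
  intro m
  induction m using Nat.twoStepInduction with
  | zero => intro n; simp [fI, dI]
  | one =>
    intro n
    have e : 1 + n + 1 = n + 2 := by omega
    rw [e]
    show fI s (n+1) + s * dI s (n+1) + dI s n = _
    simp [fI, dI]; try ring
  | more m ih1 ih2 =>
    intro n
    have e1 : m + 2 + n + 1 = (m + n + 1) + 2 := by omega
    have e2 : (m + n + 1) + 1 = (m + 1) + n + 1 := by omega
    rw [e1, show dI s ((m+n+1)+2) = fI s ((m+n+1)+1) + s * dI s ((m+n+1)+1) + dI s (m+n+1) from rfl,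
      e2, fI_add s (m+1) n, ih2 n, ih1 n]
    show _ = (fI s (m+2) + s * dI s (m+2) + dI s (m+1)) * _
        + (s * fI s (m+2) + fI s (m+1)) * _
        + (fI s (m+1) + s * dI s (m+1) + dI s m) * _ + (s * fI s (m+1) + fI s m) * _
    ring

private lemma key (s : ℤ) (hs : Odd s) : ∀ k : ℕ, ∃ a b c t : ℤ,
    fI s (3 * 2 ^ k) = 2 ^ (k + 1) * a ∧
    fI s (3 * 2 ^ k + 1) = 2 * b + 1 ∧
    dI s (3 * 2 ^ k) = 2 ^ (k + 1) * c ∧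
    dI s (3 * 2 ^ k + 1) = 2 ^ k + 2 ^ (k + 1) * t := by
  intro k
  induction k with
  | zero =>
    obtain ⟨m, rfl⟩ := hs
    refine ⟨2*m^2+2*m+1, 4*m^3+6*m^2+5*m+1, 2*m+1, 6*m^2+6*m+2, ?_, ?_, ?_, ?_⟩
    · show (2*m+1) * ((2*m+1) * 1 + 0) + 1 = _; ring
    · show (2*m+1) * ((2*m+1) * ((2*m+1)*1 + 0) + 1) + ((2*m+1)*1 + 0) = _; ring
    · show ((2*m+1)*1 + 0) + (2*m+1) * (1 + (2*m+1)*0 + 0) + 0 = _; ring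
    · show ((2*m+1) * ((2*m+1)*1+0) + 1) + (2*m+1) * (((2*m+1)*1 + 0) + (2*m+1) * (1 + (2*m+1)*0 + 0) + 0) + (1 + (2*m+1)*0 + 0) = _
      ring
  | succ k ih =>
    obtain ⟨a, b, c, t, hA, hB, hC, hT⟩ := ih
    set N := 3 * 2 ^ k with hNdef
    have hN1 : 3 * 2 ^ (k + 1) = N + N := by rw [pow_succ]; ring
    set A := fI s N
    set B := fI s (N + 1)
    set C := dI s N
    set D := dI s (N + 1)
    -- closed forms for the doubled indices
    have h1 : fI s (N + N + 1) = B * B + A * A := fI_add s N N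
    have h2 : fI s (N + N + 2) = (s * B + A) * B + B * A := by
      have e : N + N + 2 = (N + 1) + N + 1 := by omega
      rw [e, fI_add s (N+1) N]
      rfl
    have h3 : fI s (N + N + 2) = s * fI s (N + N + 1) + fI s (N + N) := rfl
    have hd1 : dI s (N + N + 1) = D * B + B * D + C * A + A * C := dI_add s N N
    have hd2 : dI s (N + N + 2) = (B + s * D + C) * B + (s * B + A) * D + D * A + B * C := by
      have e : N + N + 2 = (N + 1) + N + 1 := by omega
      rw [e, dI_add s (N+1) N]
      rfl
    have hd3 : dI s (N + N + 2) = fI s (N + N + 1) + s * dI s (N + N + 1) + dI s (N + N) := rfl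
    have vF0 : fI s (N + N) = 2 * A * B - s * A ^ 2 := by
      have := h3
      rw [h2, h1] at this
      linear_combination -this
    have vD0 : dI s (N + N) = 2 * B * C + 2 * A * D - A ^ 2 - 2 * s * A * C := by
      have := hd3
      rw [hd2, h1, hd1] at this
      linear_combination -this
    refine ⟨a * B - 2 ^ k * s * a ^ 2, 2*b^2 + 2*b + 2 ^ (2*k+1) * a ^ 2,
      B * c + 2 ^ k * a + 2 ^ (k+1) * a * t - 2 ^ k * a ^ 2 - 2 ^ (k+1) * s * a * c,
      b + t + 2*b*t + 2 ^ (k+1) * a * c, ?_, ?_, ?_, ?_⟩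
    · rw [hN1, vF0, hA]; ring
    · rw [hN1, h1, hA, hB]; ring
    · rw [hN1, vD0, hA, hC, hT]; ring
    · rw [hN1, hd1, hA, hB, hC, hT]; ring

theorem fibPoly_deriv_eval_odd_mod (s : ℤ) (hs : Odd s) (l : ℕ) (hl : 1 ≤ l) :
    (derivative (fibPoly (3 * 2 ^ (l - 1)))).eval s ≡ 0 [ZMOD (2 : ℤ) ^ l] ∧
    (derivative (fibPoly (3 * 2 ^ (l - 1) + 1))).eval s ≡ 2 ^ (l - 1)
      [ZMOD (2 : ℤ) ^ l] := by
  obtain ⟨a, b, c, t, hA, hB, hC, hT⟩ := key s hs (l - 1)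
  have hl' : l - 1 + 1 = l := by omega
  rw [hl'] at hA hC hT
  constructor
  · rw [eval_deriv_fibPoly, hC]
    exact Int.modEq_zero_iff_dvd.mpr ⟨c, rfl⟩
  · rw [eval_deriv_fibPoly, hT]
    exact Int.modEq_iff_dvd.mpr ⟨-t, by ring⟩
end

section
/- For every odd integer s and every positive integer l, the sequence m ↦ F'_m(s) (mod 2^l) is periodic of period 3·2^l, where F'_m denotes the derivative of the m-th Fibonacci polynomial. -/
open Polynomial

namespace FibAux
open TrivSqZeroExt DualNumber

noncomputable def a (s : ℤ) (m : ℕ) : ℤ := (fibPoly m).eval s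
noncomputable def b (s : ℤ) (m : ℕ) : ℤ := (derivative (fibPoly m)).eval s

lemma a0 (s : ℤ) : a s 0 = 0 := by simp [a, fibPoly]
lemma a1 (s : ℤ) : a s 1 = 1 := by simp [a, fibPoly]
lemma a_rec (s : ℤ) (m : ℕ) : a s (m+2) = s * a s (m+1) + a s m := by
  simp [a, fibPoly]
lemma b0 (s : ℤ) : b s 0 = 0 := by simp [b, fibPoly]
lemma b1 (s : ℤ) : b s 1 = 0 := by simp [b, fibPoly]
lemma b_rec (s : ℤ) (m : ℕ) : b s (m+2) = a s (m+1) + s * b s (m+1) + b s m := by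
  simp [a, b, fibPoly]

section Generic
variable {A : Type*} [CommRing A]

def sc (r : A) : Matrix (Fin 2) (Fin 2) A := !![r, 0; 0, r]

lemma sc_mul (r r' : A) : sc r * sc r' = sc (r * r') := by
  simp [sc, Matrix.mul_fin_two]
lemma sc_one : sc (1 : A) = 1 := by simp [sc, Matrix.one_fin_two]
lemma sc_zero : sc (0 : A) = 0 := by
  refine Matrix.ext fun i j => ?_
  fin_cases i <;> fin_cases j <;> simp [sc]

variable (s : ℤ) (e : A)

def tA : A := (s : A) + e
noncomputable def g (m : ℕ) : A := (a s m : A) + (b s m : A) * e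
def NA : Matrix (Fin 2) (Fin 2) A := !![tA s e, 1; 1, 0]

lemma g_rec (he : e * e = 0) (m : ℕ) :
    g s e (m + 2) = tA s e * g s e (m + 1) + g s e m := by
  simp only [g, tA, a_rec, b_rec]
  push_cast
  linear_combination -(b s (m+1) : A) * he

lemma NA_pow (he : e * e = 0) (m : ℕ) :
    NA s e ^ (m + 1) = !![g s e (m+2), g s e (m+1); g s e (m+1), g s e m] := by
  induction m with
  | zero =>
    rw [pow_one, NA]
    have h2 : g s e 2 = tA s e := by
      simp [g, tA, a_rec, b_rec, a0, a1, b0, b1]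
    have h1 : g s e 1 = 1 := by simp [g, a1, b1]
    have h0 : g s e 0 = 0 := by simp [g, a0, b0]
    rw [h2, h1, h0]
  | succ m ih =>
    have r2 := g_rec s e he (m+1)
    have r1 := g_rec s e he m
    simp only [show m+1+2 = m+3 from rfl, show m+1+1 = m+2 from rfl] at r2 ⊢
    rw [show m+2 = (m+1)+1 from rfl, pow_succ, ih, NA, Matrix.mul_fin_two]
    refine Matrix.ext fun i j => ?_
    fin_cases i <;> fin_cases j <;> simp [show m+1+1 = m+2 from rfl]
    · linear_combination -r2
    · linear_combination -r1

noncomputable def cZ (k : ℤ) : A := (k:A) + (s:A)*e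
noncomputable def BZ (k : ℤ) : Matrix (Fin 2) (Fin 2) A :=
  !![tA s e * cZ s e k, cZ s e k; cZ s e k, 0]

lemma tsq (k : ℤ) (he : e * e = 0) (hk : s^2 + 1 = 2*k) :
    tA s e ^ 2 + 1 = 2 * cZ s e k := by
  have hc : ((s^2+1 : ℤ) : A) = ((2*k : ℤ) : A) := congrArg _ hk
  push_cast at hc
  simp only [tA, cZ]; linear_combination hc + he

lemma cube (k : ℤ) (he : e * e = 0) (hk : s^2 + 1 = 2*k) :
    NA s e ^ 3 = sc (tA s e) + sc 2 * BZ s e k := by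
  have h2 := tsq s e k he hk
  rw [pow_succ, pow_succ, pow_one]
  simp only [NA, BZ, sc, Matrix.mul_fin_two]
  refine Matrix.ext fun i j => ?_
  fin_cases i <;> fin_cases j <;> simp [Matrix.add_apply]
  · linear_combination (tA s e) * h2
  · linear_combination h2
  · linear_combination h2

lemma key (k : ℤ) (hs : Odd s) (he : e * e = 0) (hk : s^2 + 1 = 2*k) (j : ℕ) :
    ∃ u c : ℤ, ∃ K : Matrix (Fin 2) (Fin 2) A, Odd u ∧ u ≡ 1 [ZMOD (2:ℤ)^j] ∧ Odd c ∧
      NA s e ^ (3 * 2^j) =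
        sc ((u:A) + (c:A) * (2:A)^j * e) + sc ((2:A)^(j+1)) * K := by
  induction j with
  | zero =>
    refine ⟨s, 1, BZ s e k, hs, Int.modEq_one, odd_one, ?_⟩
    have h := cube s e k he hk
    rw [show 3 * 2^0 = 3 from rfl, h, show ((2:A)^(0+1)) = 2 by norm_num]
    norm_num [tA]
  | succ j ih =>
    obtain ⟨u, c, K, hu, hu1, hc, hN⟩ := ih
    rw [Matrix.eta_fin_two K] at hN
    set KK : Matrix (Fin 2) (Fin 2) A := !![K 0 0, K 0 1; K 1 0, K 1 1] with hKK
    refine ⟨u^2, u*c, sc ((u:A) + (c:A) * (2:A)^j * e) * KK + sc ((2:A)^j) * (KK*KK),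
      hu.pow, ?_, hu.mul hc, ?_⟩
    · have h1 : (2:ℤ)^j ∣ u - 1 := Int.ModEq.dvd hu1.symm
      have h2 : (2:ℤ) ∣ u + 1 := by
        obtain ⟨w, rfl⟩ := hu; exact ⟨w+1, by ring⟩
      have h3 : (2:ℤ)^(j+1) ∣ u^2 - 1 := by
        rw [pow_succ, show u^2 - 1 = (u-1)*(u+1) by ring]
        exact mul_dvd_mul h1 h2
      exact (Int.modEq_iff_dvd.mpr h3).symm
    · rw [show 3*2^(j+1) = (3*2^j)*2 by ring, pow_mul, hN, sq, hKK]
      simp only [sc, Matrix.mul_fin_two]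
      refine Matrix.ext fun i j' => ?_
      fin_cases i <;> fin_cases j' <;>
        simp [Matrix.mul_fin_two, Matrix.add_apply] <;> push_cast
      · linear_combination (c:A)^2 * (2:A)^(j*2) * he
      · ring
      · ring
      · linear_combination (c:A)^2 * (2:A)^(j*2) * he

end Generic

section DualLayer
open TrivSqZeroExt DualNumber

variable (s : ℤ) (n : ℕ)

lemma mat2_ext_iff {C : Type*} (a b c d a' b' c' d' : C) :
    !![a,b;c,d] = !![a',b';c',d'] ↔ (a=a' ∧ b=b' ∧ c=c' ∧ d=d') := by
  constructor
  · intro h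
    exact ⟨by simpa using congrFun (congrFun h 0) 0, by simpa using congrFun (congrFun h 0) 1,
      by simpa using congrFun (congrFun h 1) 0, by simpa using congrFun (congrFun h 1) 1⟩
  · rintro ⟨rfl, rfl, rfl, rfl⟩; rfl

lemma g_eq_iff (m m' : ℕ) :
    g s (ε : DualNumber (ZMod n)) m = g s ε m' ↔
      (a s m ≡ a s m' [ZMOD (n:ℤ)] ∧ b s m ≡ b s m' [ZMOD (n:ℤ)]) := by
  constructor
  · intro h
    have h1 := congrArg fst h
    have h2 := congrArg snd h
    simp [g] at h1 h2
    exact ⟨(ZMod.intCast_eq_intCast_iff _ _ _).mp h1, (ZMod.intCast_eq_intCast_iff _ _ _).mp h2⟩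
  · rintro ⟨h1, h2⟩
    refine TrivSqZeroExt.ext ?_ ?_ <;>
      simp [g, (ZMod.intCast_eq_intCast_iff _ _ _).mpr h1,
        (ZMod.intCast_eq_intCast_iff _ _ _).mpr h2]

lemma g_eq_one_iff (m : ℕ) :
    g s (ε : DualNumber (ZMod n)) m = 1 ↔
      (a s m ≡ 1 [ZMOD (n:ℤ)] ∧ b s m ≡ 0 [ZMOD (n:ℤ)]) := by
  constructor
  · intro h
    have h1 := congrArg fst h
    have h2 := congrArg snd h
    simp [g] at h1 h2
    constructor
    · rw [← ZMod.intCast_eq_intCast_iff]; push_cast; exact h1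
    · rw [← ZMod.intCast_eq_intCast_iff]; push_cast; exact h2
  · rintro ⟨h1, h2⟩
    have h1' : ((a s m : ℤ) : ZMod n) = ((1:ℤ) : ZMod n) :=
      (ZMod.intCast_eq_intCast_iff _ _ _).mpr h1
    have h2' : ((b s m : ℤ) : ZMod n) = ((0:ℤ) : ZMod n) :=
      (ZMod.intCast_eq_intCast_iff _ _ _).mpr h2
    push_cast at h1' h2'
    refine TrivSqZeroExt.ext ?_ ?_ <;> simp [g, h1', h2']

lemma g_eq_zero_iff (m : ℕ) :
    g s (ε : DualNumber (ZMod n)) m = 0 ↔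
      (a s m ≡ 0 [ZMOD (n:ℤ)] ∧ b s m ≡ 0 [ZMOD (n:ℤ)]) := by
  constructor
  · intro h
    have h1 := congrArg fst h
    have h2 := congrArg snd h
    simp [g] at h1 h2
    constructor
    · rw [← ZMod.intCast_eq_intCast_iff]; push_cast; exact h1
    · rw [← ZMod.intCast_eq_intCast_iff]; push_cast; exact h2
  · rintro ⟨h1, h2⟩
    have h1' : ((a s m : ℤ) : ZMod n) = ((0:ℤ) : ZMod n) :=
      (ZMod.intCast_eq_intCast_iff _ _ _).mpr h1
    have h2' : ((b s m : ℤ) : ZMod n) = ((0:ℤ) : ZMod n) :=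
      (ZMod.intCast_eq_intCast_iff _ _ _).mpr h2
    push_cast at h1' h2'
    refine TrivSqZeroExt.ext ?_ ?_ <;> simp [g, h1', h2']

def Pn (q : ℕ) : Prop :=
  a s (q+2) ≡ 1 [ZMOD (n:ℤ)] ∧ a s (q+1) ≡ 0 [ZMOD (n:ℤ)] ∧ a s q ≡ 1 [ZMOD (n:ℤ)] ∧
  b s (q+2) ≡ 0 [ZMOD (n:ℤ)] ∧ b s (q+1) ≡ 0 [ZMOD (n:ℤ)] ∧ b s q ≡ 0 [ZMOD (n:ℤ)]

lemma NS_pow_iff (q : ℕ) :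
    NA s (ε : DualNumber (ZMod n)) ^ (q+1) = 1 ↔ Pn s n q := by
  rw [NA_pow s ε eps_mul_eps q, Matrix.one_fin_two, mat2_ext_iff,
    g_eq_one_iff, g_eq_zero_iff, g_eq_one_iff]
  unfold Pn
  tauto

lemma periodic_pow (p : ℕ) (hp : 0 < p)
    (hA : ∀ m, a s (m+p) ≡ a s m [ZMOD (n:ℤ)])
    (hB : ∀ m, b s (m+p) ≡ b s m [ZMOD (n:ℤ)]) :
    NA s (ε : DualNumber (ZMod n)) ^ p = 1 := by
  obtain ⟨q, rfl⟩ : ∃ q, p = q+1 := ⟨p-1, by omega⟩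
  rw [NS_pow_iff]
  have hA1 : a s (q+2) ≡ 1 [ZMOD (n:ℤ)] := by
    have := hA 1; rw [show 1+(q+1) = q+2 by omega, a1] at this; exact this
  have hA0 : a s (q+1) ≡ 0 [ZMOD (n:ℤ)] := by
    have := hA 0; rw [show 0+(q+1) = q+1 by omega, a0] at this; exact this
  have hB1 : b s (q+2) ≡ 0 [ZMOD (n:ℤ)] := by
    have := hB 1; rw [show 1+(q+1) = q+2 by omega, b1] at this; exact this
  have hB0 : b s (q+1) ≡ 0 [ZMOD (n:ℤ)] := by
    have := hB 0; rw [show 0+(q+1) = q+1 by omega, b0] at this; exact this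
  refine ⟨hA1, hA0, ?_, hB1, hB0, ?_⟩
  · have e := a_rec s q
    calc a s q = a s (q+2) - s * a s (q+1) := by linarith
    _ ≡ 1 - s * 0 [ZMOD (n:ℤ)] := hA1.sub (hA0.mul_left s)
    _ = 1 := by ring
  · have e := b_rec s q
    calc b s q = b s (q+2) - s * b s (q+1) - a s (q+1) := by linarith
    _ ≡ 0 - s * 0 - 0 [ZMOD (n:ℤ)] := (hB1.sub (hB0.mul_left s)).sub hA0
    _ = 0 := by ring

end DualLayer

section SmallValues
variable (s : ℤ)

lemma a3v : a s 3 = s^2+1 := by simp [a, fibPoly]; ring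
lemma a5v : a s 5 = s^4+3*s^2+1 := by simp [a, fibPoly]; ring
lemma a6v : a s 6 = s^5+4*s^3+3*s := by simp [a, fibPoly]; ring
lemma a7v : a s 7 = s^6+5*s^4+6*s^2+1 := by simp [a, fibPoly]; ring
lemma b4v : b s 4 = 3*s^2+2 := by simp [b, fibPoly]; ring
lemma b5v : b s 5 = 4*s^3+6*s := by simp [b, fibPoly]; ring
lemma b6v : b s 6 = 5*s^4+12*s^2+3 := by simp [b, fibPoly]; ring
lemma b7v : b s 7 = 6*s^5+20*s^3+12*s := by simp [b, fibPoly]; ring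

lemma smod2 (hs : Odd s) : (s : ZMod 2) = 1 := by
  obtain ⟨w, rfl⟩ := hs; push_cast; rw [show ((2:ZMod 2)) = 0 from rfl]; ring

lemma Pn2_5 (hs : Odd s) : Pn s 2 5 := by
  have h2 := smod2 s hs
  refine ⟨?_, ?_, ?_, ?_, ?_, ?_⟩ <;>
    rw [← ZMod.intCast_eq_intCast_iff]
  · rw [show (5:ℕ)+2 = 7 from rfl, a7v]; push_cast; rw [h2]; decide
  · rw [show (5:ℕ)+1 = 6 from rfl, a6v]; push_cast; rw [h2]; decide
  · rw [a5v]; push_cast; rw [h2]; decide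
  · rw [show (5:ℕ)+2 = 7 from rfl, b7v]; push_cast; rw [h2]; decide
  · rw [show (5:ℕ)+1 = 6 from rfl, b6v]; push_cast; rw [h2]; decide
  · rw [b5v]; push_cast; rw [h2]; decide

lemma not_Pn2_1 (hs : Odd s) : ¬ Pn s 2 1 := by
  have h2 := smod2 s hs
  rintro ⟨h1, -⟩
  rw [← ZMod.intCast_eq_intCast_iff, show (1:ℕ)+2 = 3 from rfl, a3v] at h1
  push_cast at h1
  rw [h2] at h1
  revert h1; decide

lemma not_Pn2_2 (hs : Odd s) : ¬ Pn s 2 2 := by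
  have h2 := smod2 s hs
  rintro ⟨-, -, -, h1, -⟩
  rw [← ZMod.intCast_eq_intCast_iff, show (2:ℕ)+2 = 4 from rfl, b4v] at h1
  push_cast at h1
  rw [h2] at h1
  revert h1; decide

end SmallValues

section KeyFacts
open TrivSqZeroExt DualNumber
variable (s : ℤ)

lemma a2v : a s 2 = s := by simp [a, fibPoly]

lemma even_sq_succ (hs : Odd s) : ∃ k, s^2 + 1 = 2*k := by
  obtain ⟨w, rfl⟩ := hs; exact ⟨2*w^2+2*w+1, by ring⟩

lemma two_pow_eq_zero (l : ℕ) : ((2 : DualNumber (ZMod (2^l))))^l = 0 := by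
  have h : ((2 : DualNumber (ZMod (2^l))))^l = ((2^l : ℕ) : DualNumber (ZMod (2^l))) := by
    push_cast; ring
  rw [h]
  exact TrivSqZeroExt.ext (by rw [fst_natCast]; exact ZMod.natCast_self _)
    (by rw [snd_natCast]; exact snd_zero.symm)

lemma NS_Q (hs : Odd s) (l : ℕ) :
    NA s (ε : DualNumber (ZMod (2^l))) ^ (3 * 2^l) = 1 := by
  obtain ⟨k, hk⟩ := even_sq_succ s hs
  obtain ⟨u, c, K, hu, hu1, hc, hN⟩ :=
    key s (ε : DualNumber (ZMod (2^l))) k hs eps_mul_eps hk l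
  have hz := two_pow_eq_zero l
  have hu' : ((u:ℤ) : DualNumber (ZMod (2^l))) = 1 := by
    have hmod : ((2^l : ℕ) : ℤ) = (2:ℤ)^l := by push_cast; ring
    have h1 : ((u:ℤ) : ZMod (2^l)) = ((1:ℤ) : ZMod (2^l)) := by
      rw [ZMod.intCast_eq_intCast_iff, hmod]; exact hu1
    push_cast at h1
    exact TrivSqZeroExt.ext (by rw [fst_intCast, h1]; exact fst_one.symm)
      (by rw [snd_intCast]; exact snd_one.symm)
  rw [hN, pow_succ, hz, hu']
  simp [sc_zero, sc_one]

lemma NS_3_2l1_ne (hs : Odd s) (l : ℕ) (hl : 1 ≤ l) :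
    NA s (ε : DualNumber (ZMod (2^l))) ^ (3 * 2^(l-1)) ≠ 1 := by
  obtain ⟨k, hk⟩ := even_sq_succ s hs
  obtain ⟨u, c, K, hu, hu1, hc, hN⟩ :=
    key s (ε : DualNumber (ZMod (2^l))) k hs eps_mul_eps hk (l-1)
  have hz := two_pow_eq_zero l
  rw [show l-1+1 = l by omega, hz] at hN
  rw [hN, sc_zero, zero_mul, add_zero]
  intro h
  rw [show (1 : Matrix (Fin 2) (Fin 2) (DualNumber (ZMod (2^l)))) = sc 1 from sc_one.symm] at h
  have h00 := congrFun (congrFun h 0) 0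
  simp only [sc] at h00
  simp at h00
  have hsnd := congrArg snd h00
  have hrw : ((c:ℤ) : (ZMod (2^l))[ε]) * (2:(ZMod (2^l))[ε])^(l-1) * ε
      = ((c * 2^(l-1) : ℤ) : (ZMod (2^l))[ε]) * ε := by push_cast; ring
  rw [hrw] at hsnd
  simp at hsnd
  have hfin : ((c * 2^(l-1) : ℤ) : ZMod (2^l)) = 0 := by push_cast; exact hsnd
  have hdvd : ((2^l : ℕ) : ℤ) ∣ c * 2^(l-1) := (ZMod.intCast_zmod_eq_zero_iff_dvd _ _).mp hfin
  have hdvd' : (2:ℤ)^l ∣ c * 2^(l-1) := by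
    have hmod : ((2^l : ℕ) : ℤ) = (2:ℤ)^l := by push_cast; ring
    rwa [hmod] at hdvd
  obtain ⟨w, hw⟩ := hdvd'
  have hpow : (2:ℤ)^l = 2^(l-1) * 2 := by
    rw [← pow_succ, show l-1+1 = l by omega]
  have hc2 : c = 2 * w :=
    mul_right_cancel₀ (pow_ne_zero (l-1) (two_ne_zero))
      (show c * 2^(l-1) = (2*w) * 2^(l-1) by rw [hw, hpow]; ring)
  exact (Int.not_odd_iff_even.mpr ⟨w, by omega⟩) hc

end KeyFacts

end FibAux

open FibAux TrivSqZeroExt DualNumber in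
theorem fibPoly_deriv_eval_odd_periodic (s : ℤ) (hs : Odd s) (l : ℕ) (hl : 1 ≤ l) :
    (∀ m : ℕ, (derivative (fibPoly (m + 3 * 2 ^ l))).eval s ≡
      (derivative (fibPoly m)).eval s [ZMOD (2 : ℤ) ^ l]) ∧
    (∀ p : ℕ, 0 < p →
      (∀ m : ℕ, (derivative (fibPoly (m + p))).eval s ≡
        (derivative (fibPoly m)).eval s [ZMOD (2 : ℤ) ^ l]) →
      3 * 2 ^ l ≤ p) := by
  have hcast : ((2^l : ℕ) : ℤ) = (2:ℤ)^l := by push_cast; ring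
  constructor
  · intro m
    have hQ := NS_Q s hs l
    have he : NA s (ε : DualNumber (ZMod (2^l))) ^ ((m + 3*2^l)+1)
        = NA s (ε : DualNumber (ZMod (2^l))) ^ (m+1) := by
      rw [show (m+3*2^l)+1 = (m+1) + 3*2^l by ring, pow_add, hQ, mul_one]
    rw [NA_pow s ε eps_mul_eps (m+3*2^l), NA_pow s ε eps_mul_eps m] at he
    have h4 := ((mat2_ext_iff _ _ _ _ _ _ _ _).mp he).2.2.2
    have hb := ((g_eq_iff s (2^l) _ _).mp h4).2
    rw [hcast] at hb
    exact hb
  · intro p hp hper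
    have hb : ∀ m, b s (m+p) ≡ b s m [ZMOD ((2^l:ℕ):ℤ)] := by
      intro m; rw [hcast]; exact hper m
    have ha1 : ∀ m, a s (m+1+p) ≡ a s (m+1) [ZMOD ((2^l:ℕ):ℤ)] := by
      intro m
      have e1 := b_rec s (m+p)
      have e2 := b_rec s m
      have h2' : b s (m+p+2) ≡ b s (m+2) [ZMOD ((2^l:ℕ):ℤ)] := by
        have := hb (m+2); rw [show (m+2)+p = m+p+2 by ring] at this; exact this
      have h1' : b s (m+p+1) ≡ b s (m+1) [ZMOD ((2^l:ℕ):ℤ)] := by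
        have := hb (m+1); rw [show (m+1)+p = m+p+1 by ring] at this; exact this
      calc a s (m+1+p)
          = b s (m+p+2) - s * b s (m+p+1) - b s (m+p) := by
            rw [show m+1+p = m+p+1 by ring]; linarith
        _ ≡ b s (m+2) - s * b s (m+1) - b s m [ZMOD ((2^l:ℕ):ℤ)] :=
            (h2'.sub (h1'.mul_left s)).sub (hb m)
        _ = a s (m+1) := by linarith
    have ha : ∀ m, a s (m+p) ≡ a s m [ZMOD ((2^l:ℕ):ℤ)] := by
      intro m
      cases m with
      | zero =>
        have k2 : a s (p+2) ≡ a s 2 [ZMOD ((2^l:ℕ):ℤ)] := by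
          have := ha1 1; rw [show 1+1+p = p+2 by ring, show (1:ℕ)+1 = 2 from rfl] at this
          exact this
        have k1 : a s (p+1) ≡ a s 1 [ZMOD ((2^l:ℕ):ℤ)] := by
          have := ha1 0; rw [show 0+1+p = p+1 by ring, show (0:ℕ)+1 = 1 from rfl] at this
          exact this
        have e := a_rec s p
        calc a s (0+p) = a s (p+2) - s * a s (p+1) := by rw [zero_add]; linarith
          _ ≡ a s 2 - s * a s 1 [ZMOD ((2^l:ℕ):ℤ)] := k2.sub (k1.mul_left s)
          _ = a s 0 := by rw [a0, a1, a2v]; ring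
      | succ m' =>
        have := ha1 m'; rw [show m'+1+p = m'+1+p from rfl] at this; exact this
    have hNp : NA s (ε : DualNumber (ZMod (2^l))) ^ p = 1 :=
      periodic_pow s (2^l) p hp ha hb
    set d := orderOf (NA s (ε : DualNumber (ZMod (2^l)))) with hd_def
    have hdp : d ∣ p := orderOf_dvd_of_pow_eq_one hNp
    have hdQ : d ∣ 3*2^l := orderOf_dvd_of_pow_eq_one (NS_Q s hs l)
    have hd2l : ¬ d ∣ 2^l := by
      intro h
      have h1 : NA s (ε : DualNumber (ZMod (2^l))) ^ (2^l) = 1 :=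
        orderOf_dvd_iff_pow_eq_one.mp h
      obtain ⟨q, hq⟩ : ∃ q, 2^l = q+1 := ⟨2^l - 1, by
        have := Nat.one_le_two_pow (n := l); omega⟩
      have h1b : Pn s (2^l) q := (NS_pow_iff s (2^l) q).mp (by rw [← hq]; exact h1)
      have hdvd : ((2:ℕ):ℤ) ∣ ((2^l:ℕ):ℤ) := by push_cast; exact dvd_pow_self 2 (by omega)
      have h2 : Pn s 2 q := by
        obtain ⟨c1,c2,c3,c4,c5,c6⟩ := h1b
        exact ⟨c1.of_dvd hdvd, c2.of_dvd hdvd, c3.of_dvd hdvd,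
          c4.of_dvd hdvd, c5.of_dvd hdvd, c6.of_dvd hdvd⟩
      have hN2 : NA s (ε : DualNumber (ZMod 2)) ^ (2^l) = 1 := by
        rw [hq, NS_pow_iff]; exact h2
      have h6 : NA s (ε : DualNumber (ZMod 2)) ^ 6 = 1 := by
        rw [show (6:ℕ) = 5+1 from rfl, NS_pow_iff]; exact Pn2_5 s hs
      have hd2a : orderOf (NA s (ε : DualNumber (ZMod 2))) ∣ 2^l :=
        orderOf_dvd_of_pow_eq_one hN2
      have hd2b : orderOf (NA s (ε : DualNumber (ZMod 2))) ∣ 6 :=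
        orderOf_dvd_of_pow_eq_one h6
      obtain ⟨i, hi, hieq⟩ := (Nat.dvd_prime_pow Nat.prime_two).mp hd2a
      rw [hieq] at hd2b
      have hi1 : i ≤ 1 := by
        by_contra hgt
        have h4 : (4:ℕ) ∣ 2^i := by
          have : (2:ℕ)^2 ∣ 2^i := pow_dvd_pow 2 (by omega)
          simpa using this
        have : (4:ℕ) ∣ 6 := h4.trans hd2b
        omega
      have hdvd2 : orderOf (NA s (ε : DualNumber (ZMod 2))) ∣ 2 := by
        rw [hieq]
        have : (2:ℕ)^i ∣ 2^1 := pow_dvd_pow 2 hi1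
        simpa using this
      have hN22 : NA s (ε : DualNumber (ZMod 2)) ^ 2 = 1 :=
        orderOf_dvd_iff_pow_eq_one.mp hdvd2
      exact not_Pn2_1 s hs ((NS_pow_iff s 2 1).mp hN22)
    have hd32 : ¬ d ∣ 3*2^(l-1) := by
      intro h
      exact NS_3_2l1_ne s hs l hl (orderOf_dvd_iff_pow_eq_one.mp h)
    have hd : d = 3*2^l := by
      by_cases h3 : 3 ∣ d
      · obtain ⟨e, he⟩ := h3
        rw [he] at hdQ hd32 hdp ⊢
        have he2 : e ∣ 2^l := (mul_dvd_mul_iff_left (by norm_num : (3:ℕ) ≠ 0)).mp hdQ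
        obtain ⟨i, hil, rfl⟩ := (Nat.dvd_prime_pow Nat.prime_two).mp he2
        rcases Nat.lt_or_ge i l with hlt | hge
        · exact absurd (mul_dvd_mul_left 3 (pow_dvd_pow 2 (by omega : i ≤ l-1))) hd32
        · rw [le_antisymm hil hge]
      · exfalso
        have hcop : Nat.Coprime 3 d := (Nat.Prime.coprime_iff_not_dvd Nat.prime_three).mpr h3
        exact hd2l (hcop.symm.dvd_of_dvd_mul_left hdQ)
    have hle : d ≤ p := Nat.le_of_dvd hp hdp
    omega
end

section
/- For any two odd integers s₁ and s₂, the sequence m ↦ F'_m(s₁)·F'_m(s₂) (mod 4) is periodic of period 6, with values (starting from m = 0): 0, 0, 1, 0, 1, 0. -/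
open Polynomial

/-- `F_m(s) mod 4`, as a function of `t = s mod 4`. -/
def fibA (t : ZMod 4) : ℕ → ZMod 4
  | 0 => 0
  | 1 => 1
  | n + 2 => t * fibA t (n + 1) + fibA t n

/-- `F'_m(s) mod 4`, as a function of `t = s mod 4`. -/
def fibB (t : ZMod 4) : ℕ → ZMod 4
  | 0 => 0
  | 1 => 0
  | n + 2 => fibA t (n + 1) + t * fibB t (n + 1) + fibB t n

lemma deriv_fibPoly (n : ℕ) :
    derivative (fibPoly (n + 2)) =
      fibPoly (n + 1) + X * derivative (fibPoly (n + 1)) + derivative (fibPoly n) := by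
  show derivative (X * fibPoly (n + 1) + fibPoly n) = _
  simp [derivative_add, derivative_mul]

lemma cast_eval (s : ℤ) : ∀ m : ℕ,
    (((fibPoly m).eval s : ℤ) : ZMod 4) = fibA (s : ZMod 4) m ∧
    (((derivative (fibPoly m)).eval s : ℤ) : ZMod 4) = fibB (s : ZMod 4) m := by
  have key : ∀ m : ℕ,
      ((((fibPoly m).eval s : ℤ) : ZMod 4) = fibA (s : ZMod 4) m ∧
        (((derivative (fibPoly m)).eval s : ℤ) : ZMod 4) = fibB (s : ZMod 4) m) ∧
      ((((fibPoly (m+1)).eval s : ℤ) : ZMod 4) = fibA (s : ZMod 4) (m+1) ∧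
        (((derivative (fibPoly (m+1))).eval s : ℤ) : ZMod 4) = fibB (s : ZMod 4) (m+1)) := by
    intro m
    induction m with
    | zero =>
      refine ⟨⟨?_, ?_⟩, ?_, ?_⟩ <;> simp [fibPoly, fibA, fibB]
    | succ n ih =>
      obtain ⟨⟨hA0, hB0⟩, hA1, hB1⟩ := ih
      refine ⟨⟨hA1, hB1⟩, ?_, ?_⟩
      · show (((X * fibPoly (n+1) + fibPoly n).eval s : ℤ) : ZMod 4) = _
        rw [show fibA (s : ZMod 4) (n+2) = (s : ZMod 4) * fibA (s : ZMod 4) (n+1) +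
          fibA (s : ZMod 4) n from rfl]
        simp only [eval_add, eval_mul, eval_X, Int.cast_add, Int.cast_mul, hA0, hA1]
      · rw [deriv_fibPoly]
        rw [show fibB (s : ZMod 4) (n+2) = fibA (s : ZMod 4) (n+1) +
          (s : ZMod 4) * fibB (s : ZMod 4) (n+1) + fibB (s : ZMod 4) n from rfl]
        simp only [eval_add, eval_mul, eval_X, Int.cast_add, Int.cast_mul, hA1, hB0, hB1]
  exact fun m => (key m).1

lemma fib_period (t : ZMod 4) (ht : t = 1 ∨ t = 3) : ∀ m : ℕ,
    fibA t (m + 12) = fibA t m ∧ fibB t (m + 12) = fibB t m := by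
  have key : ∀ m : ℕ,
      (fibA t (m + 12) = fibA t m ∧ fibB t (m + 12) = fibB t m) ∧
      (fibA t (m + 13) = fibA t (m + 1) ∧ fibB t (m + 13) = fibB t (m + 1)) := by
    intro m
    induction m with
    | zero =>
      rcases ht with rfl | rfl <;> exact ⟨⟨by decide, by decide⟩, by decide, by decide⟩
    | succ n ih =>
      obtain ⟨⟨hA0, hB0⟩, hA1, hB1⟩ := ih
      refine ⟨⟨hA1, hB1⟩, ?_, ?_⟩
      · show fibA t (n + 12 + 2) = fibA t (n + 2)
        show t * fibA t (n + 12 + 1) + fibA t (n + 12) = t * fibA t (n + 1) + fibA t n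
        rw [show n + 12 + 1 = n + 1 + 12 by ring, hA1, hA0]
      · show fibB t (n + 12 + 2) = fibB t (n + 2)
        show fibA t (n + 12 + 1) + t * fibB t (n + 12 + 1) + fibB t (n + 12) =
          fibA t (n + 1) + t * fibB t (n + 1) + fibB t n
        rw [show n + 12 + 1 = n + 1 + 12 by ring, hA1, hB1, hB0]
  exact fun m => (key m).1

lemma fibB_prod_period (t₁ t₂ : ZMod 4) (h₁ : t₁ = 1 ∨ t₁ = 3) (h₂ : t₂ = 1 ∨ t₂ = 3) :
    ∀ m : ℕ, fibB t₁ (m + 6) * fibB t₂ (m + 6) = fibB t₁ m * fibB t₂ m := by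
  intro m
  induction m using Nat.strong_induction_on with
  | _ m ih =>
    rcases lt_or_ge m 12 with hm | hm
    · interval_cases m <;>
        rcases h₁ with rfl | rfl <;> rcases h₂ with rfl | rfl <;> decide
    · obtain ⟨k, rfl⟩ : ∃ k, m = k + 12 := ⟨m - 12, by omega⟩
      rw [show k + 12 + 6 = (k + 6) + 12 by ring,
        (fib_period t₁ h₁ (k + 6)).2, (fib_period t₂ h₂ (k + 6)).2,
        (fib_period t₁ h₁ k).2, (fib_period t₂ h₂ k).2]
      exact ih k (by omega)

lemma odd_cast (s : ℤ) (h : Odd s) : (s : ZMod 4) = 1 ∨ (s : ZMod 4) = 3 := by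
  obtain ⟨k, rfl⟩ := h
  have h4 : ∀ x : ZMod 4, 2 * x + 1 = 1 ∨ 2 * x + 1 = 3 := by decide
  push_cast
  exact h4 _

theorem fibPoly_deriv_product_mod_four (s₁ s₂ : ℤ) (h₁ : Odd s₁) (h₂ : Odd s₂) :
    (∀ m : ℕ, (derivative (fibPoly (m + 6))).eval s₁ * (derivative (fibPoly (m + 6))).eval s₂ ≡
      (derivative (fibPoly m)).eval s₁ * (derivative (fibPoly m)).eval s₂ [ZMOD (4 : ℤ)]) ∧
    (derivative (fibPoly 0)).eval s₁ * (derivative (fibPoly 0)).eval s₂ ≡ 0 [ZMOD (4 : ℤ)] ∧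
    (derivative (fibPoly 1)).eval s₁ * (derivative (fibPoly 1)).eval s₂ ≡ 0 [ZMOD (4 : ℤ)] ∧
    (derivative (fibPoly 2)).eval s₁ * (derivative (fibPoly 2)).eval s₂ ≡ 1 [ZMOD (4 : ℤ)] ∧
    (derivative (fibPoly 3)).eval s₁ * (derivative (fibPoly 3)).eval s₂ ≡ 0 [ZMOD (4 : ℤ)] ∧
    (derivative (fibPoly 4)).eval s₁ * (derivative (fibPoly 4)).eval s₂ ≡ 1 [ZMOD (4 : ℤ)] ∧
    (derivative (fibPoly 5)).eval s₁ * (derivative (fibPoly 5)).eval s₂ ≡ 0 [ZMOD (4 : ℤ)] := by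
  have o₁ := odd_cast s₁ h₁
  have o₂ := odd_cast s₂ h₂
  have conv : ∀ a b : ℤ, ((a : ZMod 4) = (b : ZMod 4)) → a ≡ b [ZMOD (4 : ℤ)] := by
    intro a b h
    have := (ZMod.intCast_eq_intCast_iff a b 4).mp h
    simpa using this
  have prodcast : ∀ m : ℕ,
      (((derivative (fibPoly m)).eval s₁ * (derivative (fibPoly m)).eval s₂ : ℤ) : ZMod 4) =
        fibB (s₁ : ZMod 4) m * fibB (s₂ : ZMod 4) m := by
    intro m
    push_cast
    rw [(cast_eval s₁ m).2, (cast_eval s₂ m).2]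
  refine ⟨?_, ?_, ?_, ?_, ?_, ?_, ?_⟩
  · intro m
    apply conv
    rw [prodcast, prodcast]
    exact fibB_prod_period _ _ o₁ o₂ m
  all_goals
    apply conv
    rw [prodcast]
    push_cast
    rcases o₁ with h | h <;> rcases o₂ with h' | h' <;> rw [h, h'] <;> decide
end

section
/- For every odd integer s and every positive integer l, the second derivative of the Fibonacci polynomial satisfies F''_{3·2^l}(s) ≡ 0 (mod 2^{l+1}) and F''_{3·2^l+1}(s) ≡ 2^l (mod 2^{l+1}); moreover, the sequence m ↦ F''_m(s) (mod 2^{l+1}) is periodic of period 3·2^{l+1}. -/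
open Polynomial

section Sequences

variable {R : Type*} [CommRing R]

def fsA (s : R) : ℕ → R
  | 0 => 0
  | 1 => 1
  | n + 2 => s * fsA s (n + 1) + fsA s n

def fsB (s : R) : ℕ → R
  | 0 => 0
  | 1 => 0
  | n + 2 => fsA s (n + 1) + s * fsB s (n + 1) + fsB s n

def fsC (s : R) : ℕ → R
  | 0 => 0
  | 1 => 0
  | n + 2 => 2 * fsB s (n + 1) + s * fsC s (n + 1) + fsC s n

lemma fsA_zero (s : R) : fsA s 0 = 0 := rfl
lemma fsA_one (s : R) : fsA s 1 = 1 := rfl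
lemma fsA_add2 (s : R) (n : ℕ) : fsA s (n + 2) = s * fsA s (n + 1) + fsA s n := rfl
lemma fsB_zero (s : R) : fsB s 0 = 0 := rfl
lemma fsB_one (s : R) : fsB s 1 = 0 := rfl
lemma fsB_add2 (s : R) (n : ℕ) :
    fsB s (n + 2) = fsA s (n + 1) + s * fsB s (n + 1) + fsB s n := rfl
lemma fsC_zero (s : R) : fsC s 0 = 0 := rfl
lemma fsC_one (s : R) : fsC s 1 = 0 := rfl
lemma fsC_add2 (s : R) (n : ℕ) :
    fsC s (n + 2) = 2 * fsB s (n + 1) + s * fsC s (n + 1) + fsC s n := rfl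

/-- Addition formulas for the three sequences. -/
lemma fs_addf (s : R) : ∀ n m : ℕ,
    fsA s (m + n + 1) = fsA s (m + 1) * fsA s (n + 1) + fsA s m * fsA s n ∧
    fsB s (m + n + 1) = fsB s (m + 1) * fsA s (n + 1) + fsA s (m + 1) * fsB s (n + 1)
      + fsB s m * fsA s n + fsA s m * fsB s n ∧
    fsC s (m + n + 1) = fsC s (m + 1) * fsA s (n + 1) + fsB s (m + 1) * (2 * fsB s (n + 1))
      + fsA s (m + 1) * fsC s (n + 1) + fsC s m * fsA s n + fsB s m * (2 * fsB s n)
      + fsA s m * fsC s n := by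
  intro n
  induction n using Nat.strong_induction_on with
  | _ n ih =>
    match n with
    | 0 =>
      intro m
      simp [fsA_zero, fsA_one, fsB_zero, fsB_one, fsC_zero, fsC_one]
    | 1 =>
      intro m
      have hA2 : fsA s 2 = s := by rw [fsA_add2]; simp [fsA_zero, fsA_one]
      have hB2 : fsB s 2 = 1 := by rw [fsB_add2]; simp [fsA_one, fsB_zero, fsB_one]
      have hC2 : fsC s 2 = 0 := by rw [fsC_add2]; simp [fsB_one, fsC_zero, fsC_one]
      refine ⟨?_, ?_, ?_⟩
      · have := fsA_add2 s m
        rw [hA2, fsA_one]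
        linear_combination this
      · have := fsB_add2 s m
        rw [hA2, hB2, fsA_one, fsB_one]
        linear_combination this
      · have := fsC_add2 s m
        rw [hA2, hB2, hC2, fsA_one, fsB_one, fsC_one]
        linear_combination this
    | (n + 2) =>
      intro m
      obtain ⟨ha1, hb1, hc1⟩ := ih (n + 1) (by omega) m
      obtain ⟨ha0, hb0, hc0⟩ := ih n (by omega) m
      have ra : fsA s (m + n + 3) = s * fsA s (m + n + 2) + fsA s (m + n + 1) :=
        fsA_add2 s (m + n + 1)
      have rb : fsB s (m + n + 3)
          = fsA s (m + n + 2) + s * fsB s (m + n + 2) + fsB s (m + n + 1) :=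
        fsB_add2 s (m + n + 1)
      have rc : fsC s (m + n + 3)
          = 2 * fsB s (m + n + 2) + s * fsC s (m + n + 2) + fsC s (m + n + 1) :=
        fsC_add2 s (m + n + 1)
      have sa : fsA s (n + 3) = s * fsA s (n + 2) + fsA s (n + 1) := fsA_add2 s (n + 1)
      have sb : fsB s (n + 3) = fsA s (n + 2) + s * fsB s (n + 2) + fsB s (n + 1) :=
        fsB_add2 s (n + 1)
      have sc : fsC s (n + 3) = 2 * fsB s (n + 2) + s * fsC s (n + 2) + fsC s (n + 1) :=
        fsC_add2 s (n + 1)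
      have ea1 : fsA s (m + n + 2) = fsA s (m + 1) * fsA s (n + 2) + fsA s m * fsA s (n + 1) :=
        ha1
      have eb1 : fsB s (m + n + 2) = fsB s (m + 1) * fsA s (n + 2)
          + fsA s (m + 1) * fsB s (n + 2) + fsB s m * fsA s (n + 1)
          + fsA s m * fsB s (n + 1) := hb1
      have ec1 : fsC s (m + n + 2) = fsC s (m + 1) * fsA s (n + 2)
          + fsB s (m + 1) * (2 * fsB s (n + 2)) + fsA s (m + 1) * fsC s (n + 2)
          + fsC s m * fsA s (n + 1) + fsB s m * (2 * fsB s (n + 1))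
          + fsA s m * fsC s (n + 1) := hc1
      have tnA : fsA s (n + 2) = s * fsA s (n + 1) + fsA s n := fsA_add2 s n
      have tnB : fsB s (n + 2) = fsA s (n + 1) + s * fsB s (n + 1) + fsB s n := fsB_add2 s n
      have tnC : fsC s (n + 2) = 2 * fsB s (n + 1) + s * fsC s (n + 1) + fsC s n := fsC_add2 s n
      refine ⟨?_, ?_, ?_⟩
      · show fsA s (m + n + 3) = fsA s (m + 1) * fsA s (n + 3) + fsA s m * fsA s (n + 2)
        rw [ra, sa, ea1, ha0, tnA]; ring
      · show fsB s (m + n + 3) = fsB s (m + 1) * fsA s (n + 3)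
          + fsA s (m + 1) * fsB s (n + 3) + fsB s m * fsA s (n + 2) + fsA s m * fsB s (n + 2)
        rw [rb, sa, sb, ea1, eb1, hb0, tnA, tnB]; ring
      · show fsC s (m + n + 3) = fsC s (m + 1) * fsA s (n + 3)
          + fsB s (m + 1) * (2 * fsB s (n + 3)) + fsA s (m + 1) * fsC s (n + 3)
          + fsC s m * fsA s (n + 2) + fsB s m * (2 * fsB s (n + 2)) + fsA s m * fsC s (n + 2)
        rw [rc, sa, sb, sc, eb1, ec1, hc0, tnA, tnB, tnC]; ring

end Sequences

/-- Link between `fibPoly` derivatives evaluated at `s` and the integer sequences. -/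
lemma fib_evals (s : ℤ) : ∀ n : ℕ,
    (fibPoly n).eval s = fsA s n ∧
    (derivative (fibPoly n)).eval s = fsB s n ∧
    (derivative (derivative (fibPoly n))).eval s = fsC s n := by
  intro n
  induction n using Nat.strong_induction_on with
  | _ n ih =>
    match n with
    | 0 => simp [fibPoly, fsA_zero, fsB_zero, fsC_zero]
    | 1 => simp [fibPoly, fsA_one, fsB_one, fsC_one]
    | (n + 2) =>
      obtain ⟨h1, h2, h3⟩ := ih (n + 1) (by omega)
      obtain ⟨g1, g2, g3⟩ := ih n (by omega)
      have hf : fibPoly (n + 2) = X * fibPoly (n + 1) + fibPoly n := rfl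
      refine ⟨?_, ?_, ?_⟩
      · rw [hf, fsA_add2]
        simp [h1, g1]
      · rw [hf, fsB_add2]
        simp only [derivative_add, derivative_mul, derivative_X, one_mul, eval_add, eval_mul,
          eval_X]
        rw [h1, h2, g2]
        try ring
      · rw [hf, fsC_add2]
        simp only [derivative_add, derivative_mul, derivative_X, derivative_one, one_mul,
          zero_mul, eval_add, eval_mul, eval_X, zero_add, add_zero]
        rw [h2, h3, g3]
        try ring

/-- Casting the integer sequences into `ZMod q`. -/
lemma fs_cast (s : ℤ) (q : ℕ) : ∀ n : ℕ,
    ((fsA s n : ℤ) : ZMod q) = fsA (s : ZMod q) n ∧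
    ((fsB s n : ℤ) : ZMod q) = fsB (s : ZMod q) n ∧
    ((fsC s n : ℤ) : ZMod q) = fsC (s : ZMod q) n := by
  intro n
  induction n using Nat.strong_induction_on with
  | _ n ih =>
    match n with
    | 0 => simp [fsA_zero, fsB_zero, fsC_zero]
    | 1 => simp [fsA_one, fsB_one, fsC_one]
    | (n + 2) =>
      obtain ⟨h1, h2, h3⟩ := ih (n + 1) (by omega)
      obtain ⟨g1, g2, g3⟩ := ih n (by omega)
      refine ⟨?_, ?_, ?_⟩
      · rw [fsA_add2, fsA_add2]; push_cast [h1, g1]; ring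
      · rw [fsB_add2, fsB_add2]; push_cast [h1, h2, g2]; ring
      · rw [fsC_add2, fsC_add2]; push_cast [h2, h3, g3]; ring

lemma dec16 : ∀ t : ZMod 16, fsA (2 * t + 1) 6 = 8 := by decide

lemma dec8 : ∀ t : ZMod 8, fsA (2 * t + 1) 7 = 5 ∧ fsA (2 * t + 1) 5 = 5 ∧
    fsB (2 * t + 1) 6 = 4 ∧ fsC (2 * t + 1) 6 = 4 := by decide

lemma dec4a : ∀ t : ZMod 4, fsB (2 * t + 1) 7 = 2 ∧ fsB (2 * t + 1) 5 = 2 ∧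
    fsC (2 * t + 1) 7 = 2 ∧ fsC (2 * t + 1) 5 = 2 := by decide

lemma dec4b : ∀ t : ZMod 4, fsA (2 * t + 1) 24 = 0 ∧ fsA (2 * t + 1) 23 = 1 ∧
    2 * fsB (2 * t + 1) 24 = 0 ∧ 2 * fsB (2 * t + 1) 23 = 0 ∧
    fsC (2 * t + 1) 24 = 0 ∧ fsC (2 * t + 1) 23 = 0 ∧
    fsC (2 * t + 1) 4 = 2 ∧ fsC (2 * t + 1) 8 = 2 ∧ fsC (2 * t + 1) 16 = 2 := by decide

/-- The 2-adic invariant at index `j + 1 = 3 * 2 ^ (i + 1)`. -/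
def FibInv (s : ℤ) (i j : ℕ) : Prop :=
  (∃ A : ℤ, fsA s (j + 1) = 8 * 2 ^ i + 16 * 2 ^ i * A) ∧
  (∃ B : ℤ, fsA s (j + 2) = 1 + 4 * 2 ^ i + 8 * 2 ^ i * B) ∧
  (∃ C : ℤ, fsA s j = 1 + 4 * 2 ^ i + 8 * 2 ^ i * C) ∧
  (∃ D : ℤ, fsB s (j + 1) = 4 * 2 ^ i + 8 * 2 ^ i * D) ∧
  (∃ E : ℤ, fsB s (j + 2) = 2 * 2 ^ i + 4 * 2 ^ i * E) ∧
  (∃ F : ℤ, fsB s j = 2 * 2 ^ i + 4 * 2 ^ i * F) ∧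
  (∃ G : ℤ, fsC s (j + 1) = 4 * 2 ^ i + 8 * 2 ^ i * G) ∧
  (∃ H : ℤ, fsC s (j + 2) = 2 * 2 ^ i + 4 * 2 ^ i * H) ∧
  (∃ I : ℤ, fsC s j = 2 * 2 ^ i + 4 * 2 ^ i * I)

lemma exists_of_zmod (q : ℕ) [NeZero q] (x v : ℤ) (h : ((x - v : ℤ) : ZMod q) = 0) :
    ∃ w : ℤ, x = v + (q : ℤ) * w := by
  obtain ⟨w, hw⟩ := (ZMod.intCast_zmod_eq_zero_iff_dvd _ q).1 h
  exact ⟨w, by linarith⟩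

lemma odd_cast_s9 (s : ℤ) (hs : Odd s) (q : ℕ) : ∃ t : ZMod q, (s : ZMod q) = 2 * t + 1 := by
  obtain ⟨u, hu⟩ := hs
  exact ⟨(u : ZMod q), by rw [hu]; push_cast; ring⟩

lemma inv_base (s : ℤ) (hs : Odd s) : FibInv s 0 5 := by
  obtain ⟨t16, ht16⟩ := odd_cast_s9 s hs 16
  obtain ⟨t8, ht8⟩ := odd_cast_s9 s hs 8
  obtain ⟨t4, ht4⟩ := odd_cast_s9 s hs 4
  have c16 := fun n => (fs_cast s 16 n)
  have c8 := fun n => (fs_cast s 8 n)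
  have c4 := fun n => (fs_cast s 4 n)
  obtain ⟨e71, e51, e6b, e6c⟩ := dec8 t8
  obtain ⟨f7b, f5b, f7c, f5c⟩ := dec4a t4
  refine ⟨?_, ?_, ?_, ?_, ?_, ?_, ?_, ?_, ?_⟩
  · obtain ⟨w, hw⟩ := exists_of_zmod 16 (fsA s 6) 8 (by
      push_cast
      rw [(c16 6).1, ht16, dec16 t16]; ring)
    exact ⟨w, by push_cast at hw ⊢; linarith⟩
  · obtain ⟨w, hw⟩ := exists_of_zmod 8 (fsA s 7) 5 (by
      push_cast
      rw [(c8 7).1, ht8, e71]; ring)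
    exact ⟨w, by push_cast at hw ⊢; linarith⟩
  · obtain ⟨w, hw⟩ := exists_of_zmod 8 (fsA s 5) 5 (by
      push_cast
      rw [(c8 5).1, ht8, e51]; ring)
    exact ⟨w, by push_cast at hw ⊢; linarith⟩
  · obtain ⟨w, hw⟩ := exists_of_zmod 8 (fsB s 6) 4 (by
      push_cast
      rw [(c8 6).2.1, ht8, e6b]; ring)
    exact ⟨w, by push_cast at hw ⊢; linarith⟩
  · obtain ⟨w, hw⟩ := exists_of_zmod 4 (fsB s 7) 2 (by
      push_cast
      rw [(c4 7).2.1, ht4, f7b]; ring)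
    exact ⟨w, by push_cast at hw ⊢; linarith⟩
  · obtain ⟨w, hw⟩ := exists_of_zmod 4 (fsB s 5) 2 (by
      push_cast
      rw [(c4 5).2.1, ht4, f5b]; ring)
    exact ⟨w, by push_cast at hw ⊢; linarith⟩
  · obtain ⟨w, hw⟩ := exists_of_zmod 8 (fsC s 6) 4 (by
      push_cast
      rw [(c8 6).2.2, ht8, e6c]; ring)
    exact ⟨w, by push_cast at hw ⊢; linarith⟩
  · obtain ⟨w, hw⟩ := exists_of_zmod 4 (fsC s 7) 2 (by
      push_cast
      rw [(c4 7).2.2, ht4, f7c]; ring)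
    exact ⟨w, by push_cast at hw ⊢; linarith⟩
  · obtain ⟨w, hw⟩ := exists_of_zmod 4 (fsC s 5) 2 (by
      push_cast
      rw [(c4 5).2.2, ht4, f5c]; ring)
    exact ⟨w, by push_cast at hw ⊢; linarith⟩

lemma inv_step (s : ℤ) (i j : ℕ) (h : FibInv s i j) : FibInv s (i + 1) (j + j + 1) := by
  obtain ⟨⟨A, hA⟩, ⟨B, hB⟩, ⟨C, hC⟩, ⟨D, hD⟩, ⟨E, hE⟩, ⟨F, hF⟩, ⟨G, hG⟩, ⟨H, hH⟩, ⟨Iv, hI⟩⟩ := h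
  obtain ⟨a0, b0, c0⟩ := fs_addf s j j
  obtain ⟨a1, b1, c1⟩ := fs_addf s j (j + 1)
  obtain ⟨a2, b2, c2⟩ := fs_addf s (j + 1) (j + 1)
  rw [show j + 1 + j + 1 = j + j + 1 + 1 from by omega] at a1 b1 c1
  rw [show j + 1 + (j + 1) + 1 = j + j + 1 + 2 from by omega] at a2 b2 c2
  rw [show j + 1 + 1 = j + 2 from rfl] at a1 b1 c1 a2 b2 c2
  set K : ℤ := 2 ^ i with hK
  refine ⟨?_, ?_, ?_, ?_, ?_, ?_, ?_, ?_, ?_⟩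
  · exact ⟨A + 2*K + 2*K*C + 2*K*B + 4*K*A + 4*K*A*C + 4*K*A*B,
      by rw [a1, hA, hB, hC]; ring⟩
  · exact ⟨B + 5*K + 4*K*B + 4*K*B^2 + 16*K*A + 16*K*A^2,
      by rw [a2, hA, hB]; ring⟩
  · exact ⟨C + 5*K + 4*K*C + 4*K*C^2 + 16*K*A + 16*K*A^2,
      by rw [a0, hA, hC]; ring⟩
  · exact ⟨D + 4*K + 2*K*F + 2*K*E + 4*K*D + 2*K*C + 4*K*C*D + 2*K*B + 4*K*B*D + 4*K*A
      + 4*K*A*F + 4*K*A*E, by rw [b1, hA, hB, hC, hD, hE, hF]; ring⟩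
  · exact ⟨E + 10*K + 4*K*E + 16*K*D + 4*K*B + 8*K*B*E + 16*K*A + 32*K*A*D,
      by rw [b2, hA, hB, hD, hE]; ring⟩
  · exact ⟨F + 10*K + 4*K*F + 16*K*D + 4*K*C + 8*K*C*F + 16*K*A + 32*K*A*D,
      by rw [b0, hA, hC, hD, hF]; ring⟩
  · exact ⟨G + 6*K + 2*K*Iv + 2*K*H + 4*K*G + 2*K*F + 2*K*E + 4*K*D + 4*K*D*F + 4*K*D*E
      + 2*K*C + 4*K*C*G + 2*K*B + 4*K*B*G + 4*K*A + 4*K*A*Iv + 4*K*A*H,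
      by rw [c1, hA, hB, hC, hD, hE, hF, hG, hH, hI]; ring⟩
  · exact ⟨H + 15*K + 4*K*H + 16*K*G + 4*K*E + 4*K*E^2 + 16*K*D + 16*K*D^2 + 4*K*B
      + 8*K*B*H + 16*K*A + 32*K*A*G, by rw [c2, hA, hB, hD, hE, hG, hH]; ring⟩
  · exact ⟨Iv + 15*K + 4*K*Iv + 16*K*G + 4*K*F + 4*K*F^2 + 16*K*D + 16*K*D^2 + 4*K*C
      + 8*K*C*Iv + 16*K*A + 32*K*A*G, by rw [c0, hA, hC, hD, hF, hG, hI]; ring⟩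

lemma inv_main (s : ℤ) (hs : Odd s) : ∀ i : ℕ, ∃ j : ℕ, j + 1 = 3 * 2 ^ (i + 1) ∧ FibInv s i j := by
  intro i
  induction i with
  | zero => exact ⟨5, by norm_num, inv_base s hs⟩
  | succ i ih =>
    obtain ⟨j, hj, h⟩ := ih
    exact ⟨j + j + 1, by omega, inv_step s i j h⟩

lemma vals (s : ℤ) (hs : Odd s) (i : ℕ) :
    fsC s (3 * 2 ^ (i + 1)) ≡ 0 [ZMOD (2 : ℤ) ^ (i + 2)] ∧
    fsC s (3 * 2 ^ (i + 1) + 1) ≡ 2 ^ (i + 1) [ZMOD (2 : ℤ) ^ (i + 2)] := by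
  obtain ⟨j, hj, inv⟩ := inv_main s hs i
  obtain ⟨-, -, -, -, -, -, ⟨G, hG⟩, ⟨H, hH⟩, -⟩ := inv
  rw [hj] at hG
  rw [show j + 2 = 3 * 2 ^ (i + 1) + 1 from by omega] at hH
  constructor
  · exact Int.modEq_iff_dvd.2 ⟨-(1 + 2 * G), by rw [hG]; ring⟩
  · exact Int.modEq_iff_dvd.2 ⟨-H, by rw [hH]; ring⟩

lemma period_P (s : ℤ) (hs : Odd s) (i : ℕ) :
    ∀ m, fsC s (m + 3 * 2 ^ (i + 1)) ≡ fsC s m [ZMOD (2 : ℤ) ^ (i + 1)] := by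
  obtain ⟨j, hj, inv⟩ := inv_main s hs i
  obtain ⟨⟨A, hA⟩, -, ⟨C, hC⟩, ⟨D, hD⟩, -, ⟨F, hF⟩, ⟨G, hG⟩, -, ⟨Iv, hI⟩⟩ := inv
  intro m
  have Hc := (fs_addf s j m).2.2
  rw [show m + j + 1 = m + 3 * 2 ^ (i + 1) from by omega] at Hc
  refine Int.modEq_iff_dvd.2 ⟨-(fsC s (m+1) * (4 + 8*A) + fsB s (m+1) * (4 + 8*D)
    + fsA s (m+1) * (2 + 4*G) + fsC s m * (2 + 4*C) + fsB s m * (2 + 4*F)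
    + fsA s m * (1 + 2*Iv)), ?_⟩
  rw [Hc, hA, hC, hD, hF, hG, hI]; ring

lemma period_mul (f : ℕ → ℤ) (n : ℤ) (d : ℕ) (hd : ∀ m, f (m + d) ≡ f m [ZMOD n]) :
    ∀ t m, f (m + d * t) ≡ f m [ZMOD n] := by
  intro t
  induction t with
  | zero => intro m; simp
  | succ t ih =>
    intro m
    have h1 := hd (m + d * t)
    have h2 := ih m
    rw [show m + d * (t + 1) = m + d * t + d from by ring]
    exact h1.trans h2

lemma period_gcd (f : ℕ → ℤ) (n : ℤ) :
    ∀ N p q : ℕ, p + q ≤ N → (∀ m, f (m + p) ≡ f m [ZMOD n]) →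
      (∀ m, f (m + q) ≡ f m [ZMOD n]) → ∀ m, f (m + Nat.gcd p q) ≡ f m [ZMOD n] := by
  intro N
  induction N with
  | zero =>
    intro p q hpq hp hq m
    have hp0 : p = 0 := by omega
    have hq0 : q = 0 := by omega
    subst hp0; subst hq0
    simpa using hp m
  | succ N ih =>
    intro p q hpq hp hq m
    rcases Nat.eq_zero_or_pos p with h0 | hppos
    · subst h0; simpa using hq m
    rcases Nat.eq_zero_or_pos q with h0 | hqpos
    · subst h0; simpa using hp m
    rcases le_total p q with hle | hle
    · have hq' : ∀ m', f (m' + (q - p)) ≡ f m' [ZMOD n] := by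
        intro m'
        have h1 := hp (m' + (q - p))
        rw [show m' + (q - p) + p = m' + q from by omega] at h1
        exact h1.symm.trans (hq m')
      have := ih p (q - p) (by omega) hp hq' m
      rwa [Nat.gcd_sub_self_right hle] at this
    · have hp' : ∀ m', f (m' + (p - q)) ≡ f m' [ZMOD n] := by
        intro m'
        have h1 := hq (m' + (p - q))
        rw [show m' + (p - q) + q = m' + p from by omega] at h1
        exact h1.symm.trans (hp m')
      have := ih (p - q) q (by omega) hp' hq m
      rwa [Nat.gcd_sub_self_left hle] at this

lemma period24 (s : ℤ) (hs : Odd s) :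
    ∀ m, ((fsC s (m + 24) : ℤ) : ZMod 4) = ((fsC s m : ℤ) : ZMod 4) := by
  obtain ⟨t, ht⟩ := odd_cast_s9 s hs 4
  intro m
  have Hc := (fs_addf (s := ((s : ZMod 4))) 23 m).2.2
  norm_num at Hc
  rw [(fs_cast s 4 (m + 24)).2.2, (fs_cast s 4 m).2.2, ht] at *
  obtain ⟨d1, d2, d3, d4, d5, d6, -, -, -⟩ := dec4b t
  rw [Hc, d1, d2, d3, d4, d5, d6]
  ring

lemma period24_iter (s : ℤ) (hs : Odd s) :
    ∀ q m, ((fsC s (m + 24 * q) : ℤ) : ZMod 4) = ((fsC s m : ℤ) : ZMod 4) := by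
  intro q
  induction q with
  | zero => intro m; norm_num
  | succ q ih =>
    intro m
    rw [show m + 24 * (q + 1) = m + 24 * q + 24 from by ring, period24 s hs, ih]

lemma c_pow2 (s : ℤ) (hs : Odd s) (k : ℕ) (hk : 2 ≤ k) :
    ((fsC s (2 ^ k) : ℤ) : ZMod 4) = 2 := by
  obtain ⟨t, ht⟩ := odd_cast_s9 s hs 4
  obtain ⟨-, -, -, -, -, -, g4, g8, g16⟩ := dec4b t
  have decomp : ∀ k, 2 ≤ k → ∃ q r, (r = 4 ∨ r = 8 ∨ r = 16) ∧ 2 ^ k = r + 24 * q := by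
    intro k hk
    induction k, hk using Nat.le_induction with
    | base => exact ⟨0, 4, by norm_num⟩
    | succ k hk ih =>
      obtain ⟨q, r, hr, he⟩ := ih
      have hpow : 2 ^ (k + 1) = 2 * 2 ^ k := by ring
      rcases hr with h | h | h
      · exact ⟨2 * q, 8, by omega⟩
      · exact ⟨2 * q, 16, by omega⟩
      · exact ⟨2 * q + 1, 8, by omega⟩
  obtain ⟨q, r, hr, he⟩ := decomp k hk
  rw [he, period24_iter s hs q r, (fs_cast s 4 r).2.2, ht]
  rcases hr with h | h | h <;> rw [h]
  · exact g4
  · exact g8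
  · exact g16

theorem fibPoly_second_deriv_eval_odd (s : ℤ) (hs : Odd s) (l : ℕ) (hl : 1 ≤ l) :
    (derivative (derivative (fibPoly (3 * 2 ^ l)))).eval s ≡ 0 [ZMOD (2 : ℤ) ^ (l + 1)] ∧
    (derivative (derivative (fibPoly (3 * 2 ^ l + 1)))).eval s ≡ 2 ^ l
      [ZMOD (2 : ℤ) ^ (l + 1)] ∧
    (∀ m : ℕ, (derivative (derivative (fibPoly (m + 3 * 2 ^ (l + 1))))).eval s ≡
      (derivative (derivative (fibPoly m))).eval s [ZMOD (2 : ℤ) ^ (l + 1)]) ∧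
    (∀ p : ℕ, 0 < p →
      (∀ m : ℕ, (derivative (derivative (fibPoly (m + p)))).eval s ≡
        (derivative (derivative (fibPoly m))).eval s [ZMOD (2 : ℤ) ^ (l + 1)]) →
      3 * 2 ^ (l + 1) ≤ p) := by
  obtain ⟨l', rfl⟩ : ∃ l', l = l' + 1 := ⟨l - 1, by omega⟩
  have hev : ∀ n, (derivative (derivative (fibPoly n))).eval s = fsC s n :=
    fun n => (fib_evals s n).2.2
  obtain ⟨hval1, hval2⟩ := vals s hs l'
  refine ⟨?_, ?_, ?_, ?_⟩
  · rw [hev]; exact hval1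
  · rw [hev]; exact hval2
  · intro m
    rw [hev, hev]
    exact period_P s hs (l' + 1) m
  · intro p hp hper
    have hper' : ∀ m, fsC s (m + p) ≡ fsC s m [ZMOD (2 : ℤ) ^ (l' + 2)] := by
      intro m
      have := hper m
      rwa [hev, hev] at this
    have hP : ∀ m, fsC s (m + 3 * 2 ^ (l' + 2)) ≡ fsC s m [ZMOD (2 : ℤ) ^ (l' + 2)] :=
      period_P s hs (l' + 1)
    by_contra hlt
    push_neg at hlt
    have hlt' : p < 3 * 2 ^ (l' + 2) := hlt
    have hd : ∀ m, fsC s (m + Nat.gcd p (3 * 2 ^ (l' + 2))) ≡ fsC s m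
        [ZMOD (2 : ℤ) ^ (l' + 2)] :=
      period_gcd (fsC s) _ (p + 3 * 2 ^ (l' + 2)) p _ le_rfl hper' hP
    set d := Nat.gcd p (3 * 2 ^ (l' + 2)) with hdef
    have hdP : d ∣ 3 * 2 ^ (l' + 2) := Nat.gcd_dvd_right _ _
    have hdp : d ∣ p := Nat.gcd_dvd_left _ _
    have hdne : d ≠ 3 * 2 ^ (l' + 2) := by
      intro h
      have hle := Nat.le_of_dvd hp (h ▸ hdp)
      exact absurd hle (Nat.not_le.2 hlt')
    by_cases h3 : 3 ∣ d
    · -- then d divides 3 * 2^(l'+1), so 3*2^(l'+1) is a period; contradiction with hval2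
      obtain ⟨e, he⟩ := h3
      have heP : e ∣ 2 ^ (l' + 2) := by
        have h' : 3 * e ∣ 3 * 2 ^ (l' + 2) := he ▸ hdP
        exact (mul_dvd_mul_iff_left (by norm_num : (3 : ℕ) ≠ 0)).1 h'
      obtain ⟨k, hk, hek⟩ := (Nat.dvd_prime_pow Nat.prime_two).1 heP
      have hkl : k ≤ l' + 1 := by
        by_contra hgt
        have hk2 : k = l' + 2 := by omega
        exact hdne (by rw [he, hek, hk2])
      have hdvd3 : d ∣ 3 * 2 ^ (l' + 1) := by
        rw [he, hek]
        exact mul_dvd_mul_left 3 (pow_dvd_pow 2 hkl)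
      obtain ⟨t, ht⟩ := hdvd3
      have hp3 := period_mul (fsC s) _ d hd t 1
      rw [show 1 + d * t = d * t + 1 from by omega, ← ht] at hp3
      have hzero : ((2 : ℤ) ^ (l' + 1)) ≡ 0 [ZMOD (2 : ℤ) ^ (l' + 2)] := by
        have h1 : fsC s (3 * 2 ^ (l' + 1) + 1) ≡ 0 [ZMOD (2 : ℤ) ^ (l' + 2)] := by
          simpa [fsC_one] using hp3
        exact hval2.symm.trans h1
      have hdvd := Int.modEq_zero_iff_dvd.1 hzero
      have hle := Int.le_of_dvd (by positivity) hdvd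
      have heq : (2 : ℤ) ^ (l' + 2) = 2 * 2 ^ (l' + 1) := by ring
      have hpos : (0 : ℤ) < 2 ^ (l' + 1) := by positivity
      linarith
    · -- then d divides 2^(l'+2), so 2^(l'+2) is a period; contradiction with c_pow2
      have hcop : Nat.Coprime d 3 :=
        ((Nat.Prime.coprime_iff_not_dvd Nat.prime_three).2 h3).symm
      have hdvd2 : d ∣ 2 ^ (l' + 2) := hcop.dvd_of_dvd_mul_left hdP
      obtain ⟨t, ht⟩ := hdvd2
      have hp0 := period_mul (fsC s) _ d hd t 0
      rw [show 0 + d * t = d * t from by omega, ← ht] at hp0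
      have hdvd : (2 : ℤ) ^ (l' + 2) ∣ fsC s (2 ^ (l' + 2)) :=
        Int.modEq_zero_iff_dvd.1 (by simpa [fsC_zero] using hp0)
      have h4 : (4 : ℤ) ∣ fsC s (2 ^ (l' + 2)) :=
        dvd_trans ⟨2 ^ l', by ring⟩ hdvd
      have hz : ((fsC s (2 ^ (l' + 2)) : ℤ) : ZMod 4) = 0 :=
        (ZMod.intCast_zmod_eq_zero_iff_dvd _ 4).2 (by exact_mod_cast h4)
      rw [c_pow2 s hs (l' + 2) (by omega)] at hz
      exact absurd hz (by decide)
end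

section
/- Let q be an odd nonnegative integer with binary expansion q = Σ c_i 2^i, and let t = min{ i ≥ 0 : c_i = c_{i+1} }. Then t is odd if and only if c_t = c_{t+1} = 0. -/
theorem odd_t_iff_digits_zero (q t : ℕ) (hq : Odd q)
    (ht : q.testBit t = q.testBit (t + 1))
    (hmin : ∀ i < t, q.testBit i ≠ q.testBit (i + 1)) :
    Odd t ↔ (q.testBit t = false ∧ q.testBit (t + 1) = false) := by
  have h0 : q.testBit 0 = true := by
    simp [Nat.testBit_zero, Nat.odd_iff.mp hq]
  have key : ∀ i ≤ t, q.testBit i = decide (Even i) := by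
    intro i hi
    induction i with
    | zero => simpa using h0
    | succ n ih =>
      have hn : n < t := Nat.lt_of_lt_of_le (Nat.lt_succ_self n) hi
      have hne := hmin n hn
      have ihn := ih (Nat.le_of_lt hn)
      have hflip : q.testBit (n + 1) = ! q.testBit n := by
        revert hne
        cases h' : q.testBit (n + 1) <;> cases h'' : q.testBit n <;> simp
      rw [hflip, ihn]
      rcases Nat.even_or_odd n with he | ho
      · simp [Nat.even_add_one, he]
      · simp [Nat.even_add_one, ← Nat.not_odd_iff_even, ho]
  have htb : q.testBit t = decide (Even t) := key t le_rfl
  constructor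
  · intro hodd
    have : ¬ Even t := Nat.not_even_iff_odd.mpr hodd
    constructor
    · simp [htb, this]
    · rw [← ht]; simp [htb, this]
  · rintro ⟨h1, _⟩
    rw [htb] at h1
    exact Nat.not_even_iff_odd.mp (of_decide_eq_false h1)
end

section
/- Let m = 2 + 12q where q = 2 + 2d for some nonnegative integer d, and let u = min{ i ≥ 1 : the i-th binary digit of q equals 1 }. Then for every n ≥ 1 and every k with 0 ≤ k ≤ 2^u − 1, we have F_m((1+2k)·2^n) ≡ (1+2k)·2^n (mod 2^{n+u+1}), F'_m((1+2k)·2^n) ≡ 1 (mod 4), and ν₂( F_m((1+2k)·2^n) − (1+2k)·2^n ) = n + u + 1. -/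
open Polynomial

/-! ### Auxiliary integer Lucas sequences -/

def Useq (x : ℤ) : ℕ → ℤ
  | 0 => 0
  | 1 => 1
  | n + 2 => x * Useq x (n + 1) + Useq x n

def Vseq (x : ℤ) : ℕ → ℤ
  | 0 => 2
  | 1 => x
  | n + 2 => x * Vseq x (n + 1) + Vseq x n

variable (x : ℤ)

lemma Useq_step (n : ℕ) : Useq x (n + 2) = x * Useq x (n + 1) + Useq x n := rfl
lemma Vseq_step (n : ℕ) : Vseq x (n + 2) = x * Vseq x (n + 1) + Vseq x n := rfl
lemma Useq_two : Useq x 2 = x := by simp [Useq]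
lemma Vseq_two : Vseq x 2 = x ^ 2 + 2 := by simp [Vseq]; ring

lemma eval_fibPoly_s16 : ∀ m, (fibPoly m).eval x = Useq x m := by
  intro m
  induction m using Nat.twoStepInduction with
  | zero => simp [fibPoly, Useq]
  | one => simp [fibPoly, Useq]
  | more n ih1 ih2 => simp [fibPoly, Useq, ih1, ih2]

lemma addU : ∀ b a, Useq x (a + b + 1) =
    Useq x (a + 1) * Useq x (b + 1) + Useq x a * Useq x b := by
  intro b
  induction b with
  | zero => intro a; simp [Useq]
  | succ b ih =>
    intro a
    have h := ih (a + 1)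
    have e : a + 1 + b + 1 = a + (b + 1) + 1 := by ring
    rw [e] at h
    rw [h, Useq_step x a, Useq_step x b]
    ring

lemma VU : ∀ m, Vseq x (m + 1) = Useq x (m + 2) + Useq x m := by
  intro m
  induction m using Nat.twoStepInduction with
  | zero => simp [Useq, Vseq]
  | one => simp [Useq, Vseq]; ring
  | more n ih1 ih2 =>
    have e1 : n + 1 + 1 = n + 2 := rfl
    rw [Vseq_step x (n + 1), e1, ih1, ih2]
    rw [show n + 2 + 2 = (n + 2) + 2 from rfl, Useq_step x (n + 2),
        Useq_step x (n + 1), Useq_step x n]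
    ring

lemma UV2 (a b : ℕ) : 2 * Useq x (a + b) =
    Useq x a * Vseq x b + Vseq x a * Useq x b := by
  match a, b with
  | 0, b => simp [Useq, Vseq]
  | a + 1, 0 => simp [Useq, Vseq]; ring
  | a + 1, b + 1 =>
    have h1 := addU x b (a + 1)
    have h2 := addU x (b + 1) a
    have e : a + (b + 1) + 1 = a + 1 + b + 1 := by ring
    rw [e] at h2
    rw [show a + 1 + (b + 1) = a + 1 + b + 1 from by ring]
    rw [VU x a, VU x b]
    have e2 : a + 1 + 1 = a + 2 := rfl
    have e3 : b + 1 + 1 = b + 2 := rfl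
    rw [e2] at h1
    rw [e3] at h2
    linear_combination h1 + h2

lemma catalanU : ∀ c, Useq x (c + 2) * Useq x c - Useq x (c + 1) ^ 2 = (-1 : ℤ) ^ (c + 1) := by
  intro c
  induction c with
  | zero => simp [Useq]
  | succ c ih =>
    have h3 : Useq x (c + 3) = x * Useq x (c + 2) + Useq x (c + 1) := rfl
    have h2 : Useq x (c + 2) = x * Useq x (c + 1) + Useq x c := rfl
    show Useq x (c + 3) * Useq x (c + 1) - Useq x (c + 2) ^ 2 = (-1 : ℤ) ^ (c + 2)
    rw [h3, h2]
    rw [h2] at ih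
    linear_combination (-1 : ℤ) * ih

lemma Vdouble (c : ℕ) : Vseq x (2 * c) = Vseq x c ^ 2 - 2 * (-1 : ℤ) ^ c := by
  match c with
  | 0 => simp [Vseq]
  | c + 1 =>
    have h := VU x (2 * c + 1)
    rw [show 2 * (c + 1) = 2 * c + 1 + 1 from by ring, h]
    rw [show 2 * c + 1 + 2 = (c + 1) + (c + 1) + 1 from by ring, addU x (c + 1) (c + 1)]
    rw [show 2 * c + 1 = c + c + 1 from by ring, addU x c c]
    rw [VU x c]
    have hc := catalanU x c
    have e2 : c + 1 + 1 = c + 2 := rfl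
    rw [e2]
    linear_combination (-2 : ℤ) * hc

lemma Udouble (c : ℕ) : Useq x (2 * c) = Useq x c * Vseq x c := by
  have h := UV2 x c c
  rw [show c + c = 2 * c from by ring] at h
  linarith [h]

/-! ### Parity and 2-adic structure -/

lemma Upar (hx : 2 ∣ x) : ∀ c, Even (Useq x (2 * c)) ∧ Odd (Useq x (2 * c + 1)) := by
  intro c
  induction c with
  | zero =>
    refine ⟨?_, ?_⟩
    · rw [show 2*0 = 0 from rfl]; exact Even.zero
    · rw [show 2*0+1 = 1 from rfl]; exact odd_one
  | succ c ih =>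
    obtain ⟨he, ho⟩ := ih
    obtain ⟨x1, rfl⟩ := hx
    refine ⟨?_, ?_⟩
    · rw [show 2*(c+1) = (2*c) + 2 from by ring, Useq_step]
      exact Even.add (by exact (even_two_mul x1).mul_right _) he
    · rw [show 2*(c+1)+1 = (2*c+1) + 2 from by ring, Useq_step]
      exact Even.add_odd (by exact (even_two_mul x1).mul_right _) ho

lemma Vpar (hx : 2 ∣ x) : ∀ c, (∃ h, Odd h ∧ Vseq x (2 * c) = 2 * h) ∧
    (∃ w, Odd w ∧ Vseq x (2 * c + 1) = x * w) := by
  intro c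
  induction c with
  | zero =>
    refine ⟨⟨1, odd_one, ?_⟩, ⟨1, odd_one, ?_⟩⟩
    · rfl
    · rw [show 2*0+1 = 1 from rfl]; show x = x * 1; ring
  | succ c ih =>
    obtain ⟨⟨h, hodd, hV⟩, ⟨w, wodd, hW⟩⟩ := ih
    obtain ⟨x1, rfl⟩ := hx
    refine ⟨⟨h + 2 * x1 ^ 2 * w, ?_, ?_⟩, ⟨2 * (h + 2 * x1 ^ 2 * w) + w, ?_, ?_⟩⟩
    · exact hodd.add_even (by exact (even_two_mul _).mul_right _)
    · rw [show 2*(c+1) = (2*c) + 2 from by ring, Vseq_step, hV, hW]; ring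
    · exact (even_two_mul _).add_odd wodd
    · rw [show 2*(c+1)+1 = (2*c+1) + 2 from by ring, Vseq_step, hW,
        show 2*c+1+1 = 2*c + 2 from rfl, Vseq_step, hV, hW]
      ring

lemma Upow (hx : 2 ∣ x) (w : ℕ) (wodd : Odd w) :
    ∀ r, 1 ≤ r → ∃ g : ℤ, Odd g ∧ Useq x (2 ^ r * w) = 2 ^ (r - 1) * x * g := by
  intro r hr
  induction r, hr using Nat.le_induction with
  | base =>
    obtain ⟨c, rfl⟩ := wodd
    obtain ⟨u2, u2odd⟩ := Upar x hx c
    obtain ⟨_, ⟨v2, v2odd, hv⟩⟩ := Vpar x hx c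
    refine ⟨Useq x (2*c+1) * v2, u2odd.mul v2odd, ?_⟩
    rw [show 2 ^ 1 * (2*c+1) = 2 * (2*c+1) from by ring, Udouble, hv]
    ring
  | succ r hr ih =>
    obtain ⟨g, godd, hg⟩ := ih
    obtain ⟨r', rfl⟩ : ∃ r', r = r' + 1 := ⟨r - 1, by omega⟩
    have hc : 2 ^ (r'+1) * w = 2 * (2 ^ r' * w) := by rw [pow_succ']; ring
    obtain ⟨⟨h, hodd, hV⟩, _⟩ := Vpar x hx (2 ^ r' * w)
    refine ⟨g * h, godd.mul hodd, ?_⟩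
    rw [show 2 ^ (r'+1+1) * w = 2 * (2 ^ (r'+1) * w) from by rw [pow_succ]; ring,
      Udouble, hg, hc, hV, show r'+1+1-1 = (r'+1-1) + 1 from by omega, pow_succ]
    ring

lemma Vpow (hx : 2 ∣ x) (w : ℕ) (wodd : Odd w) :
    ∀ r, 2 ≤ r → ∃ z : ℤ, Vseq x (2 ^ r * w) = 2 + 2 ^ (r + 2) * z := by
  intro r hr
  induction r, hr using Nat.le_induction with
  | base =>
    obtain ⟨c, rfl⟩ := wodd
    obtain ⟨_, ⟨w2, w2odd, hw⟩⟩ := Vpar x hx c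
    obtain ⟨x1, rfl⟩ := hx
    refine ⟨x1 ^ 4 * w2 ^ 4 + x1 ^ 2 * w2 ^ 2, ?_⟩
    have h4 : Vseq (2*x1) (2 ^ 2 * (2*c+1)) = Vseq (2*x1) (2 * (2*c+1)) ^ 2 - 2 := by
      rw [show 2 ^ 2 * (2*c+1) = 2 * (2 * (2*c+1)) from by ring, Vdouble,
        Even.neg_one_pow ⟨2*c+1, by ring⟩]
      norm_num
    have h2 : Vseq (2*x1) (2 * (2*c+1)) = ((2*x1) * w2) ^ 2 + 2 := by
      rw [Vdouble, Odd.neg_one_pow ⟨c, rfl⟩, hw]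
      ring
    rw [h4, h2]
    ring
  | succ r hr ih =>
    obtain ⟨z, hz⟩ := ih
    obtain ⟨r', rfl⟩ : ∃ r', r = r' + 1 := ⟨r - 1, by omega⟩
    refine ⟨2 * z + 2 ^ (r' + 2) * z ^ 2, ?_⟩
    have : Vseq x (2 ^ (r'+1+1) * w) = Vseq x (2 ^ (r'+1) * w) ^ 2 - 2 := by
      rw [show 2 ^ (r'+1+1) * w = 2 * (2 ^ (r'+1) * w) from by rw [pow_succ]; ring, Vdouble,
        Even.neg_one_pow ⟨2 ^ r' * w, by rw [pow_succ']; ring⟩]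
      norm_num
    rw [this, hz]
    ring

/-! ### Main valuation lemma -/

lemma main_val (n' u : ℕ) (t : ℤ) (todd : Odd t) (w : ℕ) (wodd : Odd w) :
    ∃ E : ℤ, Odd E ∧
      Useq (2 ^ (n' + 1) * t) (2 + 2 ^ (u + 2) * w) - 2 ^ (n' + 1) * t
        = 2 ^ (n' + 1 + u + 1) * E := by
  set x : ℤ := 2 ^ (n' + 1) * t with hxdef
  have hx : 2 ∣ x := ⟨2 ^ n' * t, by rw [hxdef, pow_succ']; ring⟩
  obtain ⟨g, godd, hg⟩ := Upow x hx w wodd (u + 2) (by omega)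
  obtain ⟨z, hz⟩ := Vpow x hx w wodd (u + 2) (by omega)
  have h := UV2 x 2 (2 ^ (u + 2) * w)
  rw [Useq_two, Vseq_two, hg, hz] at h
  rw [show u + 2 - 1 = u + 1 from rfl] at h
  refine ⟨4 * t * z + (2 ^ (2 * n' + 1) * t ^ 2 + 1) * t * g, ?_, ?_⟩
  · have he : Even (4 * t * z) := ⟨2*t*z, by ring⟩
    have ho : Odd (2 ^ (2 * n' + 1) * t ^ 2 + 1) :=
      Even.add_one ⟨2 ^ (2*n') * t ^ 2, by rw [pow_succ']; ring⟩
    exact he.add_odd ((ho.mul todd).mul godd)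
  · have h2 : 2 * (Useq x (2 + 2 ^ (u + 2) * w) - x) =
        2 * (2 ^ (n' + 1 + u + 1) * (4 * t * z + (2 ^ (2 * n' + 1) * t ^ 2 + 1) * t * g)) := by
      rw [hxdef] at h ⊢
      rw [show n' + 1 + u + 1 = n' + u + 2 from by ring]
      linear_combination h
    exact mul_left_cancel₀ two_ne_zero h2

/-! ### Binary digit extraction -/

lemma pow_dvd_of_bits (q : ℕ) : ∀ u, (∀ i, i < u → q.testBit i = false) → 2 ^ u ∣ q := by
  intro u
  induction u with
  | zero => simp
  | succ u ih =>
    intro h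
    obtain ⟨c, rfl⟩ := ih (fun i hi => h i (by omega))
    have hb := h u (by omega)
    rw [Nat.testBit_eq_decide_div_mod_eq] at hb
    have hc : (2 ^ u * c) / 2 ^ u = c := by
      rw [Nat.mul_div_cancel_left _ (Nat.pow_pos (n := u) (by norm_num))]
    rw [hc] at hb
    simp at hb
    have : 2 ∣ c := by omega
    obtain ⟨c', rfl⟩ := this
    exact ⟨c', by ring⟩

lemma bit_decomp (q u : ℕ) (hq : 2 ∣ q) (hu : q.testBit u = true)
    (humin : ∀ i, 1 ≤ i → i < u → q.testBit i = false) :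
    ∃ q' : ℕ, Odd q' ∧ q = 2 ^ u * q' := by
  have h0 : q.testBit 0 = false := by
    rw [Nat.testBit_eq_decide_div_mod_eq]
    simp
    omega
  have hdvd : 2 ^ u ∣ q := pow_dvd_of_bits q u (fun i hi => by
    rcases Nat.eq_zero_or_pos i with h | h
    · subst h; exact h0
    · exact humin i h hi)
  obtain ⟨c, rfl⟩ := hdvd
  refine ⟨c, ?_, rfl⟩
  rw [Nat.testBit_eq_decide_div_mod_eq,
    Nat.mul_div_cancel_left _ (Nat.pow_pos (n := u) (by norm_num))] at hu
  simp at hu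
  exact Nat.odd_iff.mpr hu

/-! ### Derivative mod 4 and linear coefficient -/

lemma deriv_eval_mod4 (p : Polynomial ℤ) (y : ℤ) (hy : 2 ∣ y) :
    (4 : ℤ) ∣ (derivative p).eval y - p.coeff 1 := by
  induction p using Polynomial.induction_on' with
  | add p r hp hr =>
    rw [derivative_add, eval_add, coeff_add]
    have := dvd_add hp hr
    convert this using 1
    · rfl
    ring
  | monomial k a =>
    rw [derivative_monomial, eval_monomial, coeff_monomial]
    obtain ⟨c, rfl⟩ := hy
    match k with
    | 0 => simp
    | 1 => simp
    | 2 => simp; ring_nf; exact ⟨a * c, by ring⟩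
    | (k + 3) =>
      rw [if_neg (by omega)]
      rw [show k + 3 - 1 = k + 2 from rfl, sub_zero]
      exact ⟨a * (k+3) * c ^ 2 * (2*c) ^ k, by push_cast; ring⟩

lemma fib_coeffs : ∀ m : ℕ, (fibPoly (2 * m + 1)).coeff 0 = 1 ∧ (fibPoly (2 * m)).coeff 1 = m := by
  intro m
  induction m with
  | zero => simp [fibPoly]
  | succ m ih =>
    obtain ⟨h0, h1⟩ := ih
    have e2 : fibPoly (2 * (m + 1)) = X * fibPoly (2 * m + 1) + fibPoly (2 * m) := by
      rw [show 2 * (m + 1) = (2 * m) + 2 from by ring]; rfl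
    have e3 : fibPoly (2 * (m + 1) + 1) = X * fibPoly (2 * (m + 1)) + fibPoly (2 * m + 1) := by
      rw [show 2 * (m + 1) + 1 = (2 * m + 1) + 2 from by ring,
        show 2 * (m + 1) = 2 * m + 1 + 1 from by ring]; rfl
    constructor
    · rw [e3, coeff_add, mul_coeff_zero, coeff_X_zero, h0, zero_mul, zero_add]
    · rw [e2, coeff_add, coeff_X_mul, h0, h1]
      push_cast; ring

lemma padic_helper (K : ℕ) (E : ℤ) (hE : Odd E) : padicValInt 2 (2 ^ K * E) = K := by
  have hE0 : E ≠ 0 := by rintro rfl; simp [Int.odd_iff] at hE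
  rw [padicValInt.mul (a := (2:ℤ)^K) (by positivity) hE0]
  have h1 : padicValInt 2 ((2:ℤ) ^ K) = K := by
    rw [show ((2:ℤ)^K) = ((2^K : ℕ) : ℤ) from by push_cast; ring, padicValInt.of_nat,
      padicValNat.prime_pow]
  have h2 : padicValInt 2 E = 0 := by
    apply padicValInt.eq_zero_of_not_dvd
    rw [Int.odd_iff] at hE
    omega
  omega

theorem fibPoly_m_two_mod_twelve (q d u : ℕ) (hq : q = 2 + 2 * d)
    (hu1 : 1 ≤ u) (hu : q.testBit u = true)
    (humin : ∀ i, 1 ≤ i → i < u → q.testBit i = false) :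
    ∀ n : ℕ, 1 ≤ n → ∀ k : ℕ, k ≤ 2 ^ u - 1 →
      (fibPoly (2 + 12 * q)).eval ((1 + 2 * (k : ℤ)) * 2 ^ n) ≡
        (1 + 2 * (k : ℤ)) * 2 ^ n [ZMOD (2 : ℤ) ^ (n + u + 1)] ∧
      (derivative (fibPoly (2 + 12 * q))).eval ((1 + 2 * (k : ℤ)) * 2 ^ n) ≡ 1
        [ZMOD (4 : ℤ)] ∧
      padicValInt 2 ((fibPoly (2 + 12 * q)).eval ((1 + 2 * (k : ℤ)) * 2 ^ n) -
        (1 + 2 * (k : ℤ)) * 2 ^ n) = n + u + 1 := by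
  intro n hn k hk
  obtain ⟨n', rfl⟩ : ∃ n', n = n' + 1 := ⟨n - 1, by omega⟩
  set t : ℤ := 1 + 2 * (k : ℤ) with htdef
  have todd : Odd t := ⟨k, by rw [htdef]; ring⟩
  obtain ⟨q', q'odd, hq'⟩ := bit_decomp q u ⟨1 + d, by omega⟩ hu humin
  have wodd : Odd (3 * q') := (by decide : Odd 3).mul q'odd
  have hm : 2 + 12 * q = 2 + 2 ^ (u + 2) * (3 * q') := by
    rw [hq', pow_add]; ring
  have hx : t * 2 ^ (n' + 1) = 2 ^ (n' + 1) * t := by ring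
  obtain ⟨E, Eodd, hE⟩ := main_val n' u t todd (3 * q') wodd
  rw [← hm] at hE
  have heval : (fibPoly (2 + 12 * q)).eval (t * 2 ^ (n' + 1)) = Useq (2 ^ (n' + 1) * t) (2 + 12 * q) := by
    rw [hx, eval_fibPoly_s16]
  refine ⟨?_, ?_, ?_⟩
  · have hdvd : (2 : ℤ) ^ (n' + 1 + u + 1) ∣
        t * 2 ^ (n' + 1) - (fibPoly (2 + 12 * q)).eval (t * 2 ^ (n' + 1)) := by
      rw [heval]
      rw [show t * 2 ^ (n' + 1) - Useq (2 ^ (n' + 1) * t) (2 + 12 * q)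
          = -(Useq (2 ^ (n' + 1) * t) (2 + 12 * q) - 2 ^ (n' + 1) * t) from by ring, hE]
      exact dvd_neg.mpr ⟨E, rfl⟩
    exact (Int.modEq_iff_dvd.mpr hdvd)
  · have hd := deriv_eval_mod4 (fibPoly (2 + 12 * q)) (t * 2 ^ (n' + 1)) ⟨t * 2 ^ n', by ring⟩
    have hc : (fibPoly (2 + 12 * q)).coeff 1 = ((1 + 6 * q : ℕ) : ℤ) := by
      have := (fib_coeffs (1 + 6 * q)).2
      rw [show 2 * (1 + 6 * q) = 2 + 12 * q from by ring] at this
      exact this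
    rw [hc] at hd
    have : (4 : ℤ) ∣ (derivative (fibPoly (2 + 12 * q))).eval (t * 2 ^ (n' + 1)) - 1 := by
      have h4 : (4 : ℤ) ∣ ((1 + 6 * q : ℕ) : ℤ) - 1 := by
        subst hq; push_cast; exact ⟨3 + 3 * d, by ring⟩
      have := dvd_add hd h4
      convert this using 1
      · rfl
      ring
    exact Int.ModEq.symm (Int.modEq_iff_dvd.mpr this)
  · rw [heval, hx, hE, padic_helper _ E Eodd]
end

section
/- Let m = 6 + 12q with q = 4d for some nonnegative integer d. Then for every n ≥ 1 and k ∈ {0, 1}: F_m((1+4k)·2^n) ≡ (3+4k)·2^n and F_m((3+4k)·2^n) ≡ (1+4k)·2^n (mod 2^{n+3}); moreover F'_m((1+4k)·2^n)·F'_m((3+4k)·2^n) ≡ 1 (mod 4) and ν₂( F_m²((1+4k)·2^n) − (1+4k)·2^n ) = n + 3, where F_m² denotes the second iterate of F_m. -/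
open Polynomial

namespace FibAux

/-- membership in the ideal (16X, 4X^3, X^5) of ℤ[X] -/
def InI (f : Polynomial ℤ) : Prop :=
  ∃ α β γ : Polynomial ℤ, f = 16 * X * α + 4 * X ^ 3 * β + X ^ 5 * γ

lemma InI.add {f g : Polynomial ℤ} (hf : InI f) (hg : InI g) : InI (f + g) := by
  obtain ⟨a, b, c, rfl⟩ := hf
  obtain ⟨a', b', c', rfl⟩ := hg
  exact ⟨a + a', b + b', c + c', by ring⟩

lemma InI.lmul (g : Polynomial ℤ) {f : Polynomial ℤ} (hf : InI f) : InI (g * f) := by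
  obtain ⟨a, b, c, rfl⟩ := hf
  exact ⟨g * a, g * b, g * c, by ring⟩

lemma InI.congr {f g : Polynomial ℤ} (hf : InI f) (e : f = g) : InI g := e ▸ hf

/-- congruence mod the ideal -/
def Cong (f g : Polynomial ℤ) : Prop := InI (f - g)

lemma Cong.mul {f g p q : Polynomial ℤ} (hf : Cong f p) (hg : Cong g q) :
    Cong (f * g) (p * q) :=
  ((hg.lmul f).add (hf.lmul q)).congr (by ring)

lemma Cong.add {f g p q : Polynomial ℤ} (hf : Cong f p) (hg : Cong g q) :
    Cong (f + g) (p + q) :=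
  (InI.add hf hg).congr (by ring)

lemma Cong.trans' {f p r : Polynomial ℤ} (hf : Cong f p) (h : InI (p - r)) : Cong f r :=
  (InI.add hf h).congr (by ring)

lemma Cong.of_eq {f g p : Polynomial ℤ} (hf : Cong f p) (e : g = f) : Cong g p := e ▸ hf

lemma fibPoly_step (n : ℕ) : fibPoly (n + 2) = X * fibPoly (n + 1) + fibPoly n := rfl

lemma fib_add : ∀ a b : ℕ, fibPoly (a + b + 1) =
    fibPoly (a + 1) * fibPoly (b + 1) + fibPoly a * fibPoly b := by
  intro a
  induction a using Nat.twoStepInduction with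
  | zero =>
      intro b
      simp only [Nat.zero_add]
      show fibPoly (b + 1) = 1 * fibPoly (b + 1) + 0 * fibPoly b
      ring
  | one =>
      intro b
      rw [show 1 + b + 1 = b + 2 by omega]
      show fibPoly (b + 2) = fibPoly 2 * fibPoly (b + 1) + fibPoly 1 * fibPoly b
      rw [fibPoly_step b]
      show X * fibPoly (b + 1) + fibPoly b =
        (X * fibPoly 1 + fibPoly 0) * fibPoly (b + 1) + 1 * fibPoly b
      show X * fibPoly (b + 1) + fibPoly b = (X * 1 + 0) * fibPoly (b + 1) + 1 * fibPoly b
      ring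
  | more n ih1 ih2 =>
      intro b
      have e1 : n + 2 + b + 1 = (n + b + 1) + 2 := by omega
      rw [e1, fibPoly_step]
      have e2 : n + b + 1 + 1 = (n + 1) + b + 1 := by omega
      rw [e2, ih2 b, ih1 b]
      rw [show n + 2 + 1 = (n + 1) + 2 from rfl, fibPoly_step (n + 1), fibPoly_step n]
      ring

lemma fib_dbl_odd (j : ℕ) : fibPoly (2 * j + 1) =
    fibPoly (j + 1) * fibPoly (j + 1) + fibPoly j * fibPoly j := by
  have := fib_add j j
  rw [show 2 * j + 1 = j + j + 1 by omega]
  exact this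

lemma fib_dbl_even (j : ℕ) : fibPoly (2 * j + 2) =
    fibPoly (j + 1) * (X * fibPoly (j + 1) + 2 * fibPoly j) := by
  have h := fib_add (j + 1) j
  rw [show 2 * j + 2 = j + 1 + j + 1 by omega, h, fibPoly_step j]
  ring

lemma cong_dbl_odd {j : ℕ} {p q r : Polynomial ℤ}
    (hp : Cong (fibPoly j) p) (hq : Cong (fibPoly (j + 1)) q)
    (h : InI (q * q + p * p - r)) : Cong (fibPoly (2 * j + 1)) r :=
  (((hq.mul hq).add (hp.mul hp)).of_eq (fib_dbl_odd j)).trans' h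

lemma cong_dbl_even {j : ℕ} {p q r : Polynomial ℤ}
    (hp : Cong (fibPoly j) p) (hq : Cong (fibPoly (j + 1)) q)
    (h : InI (q * (X * q + 2 * p) - r)) : Cong (fibPoly (2 * j + 2)) r := by
  have hXq : Cong (X * fibPoly (j + 1) + 2 * fibPoly j) (X * q + 2 * p) := by
    have h1 : Cong (X * fibPoly (j + 1)) (X * q) := by
      have : Cong (X : Polynomial ℤ) X := ⟨0, 0, 0, by ring⟩
      exact this.mul hq
    have h2 : Cong (2 * fibPoly j) (2 * p) := by
      have : Cong (2 : Polynomial ℤ) 2 := ⟨0, 0, 0, by ring⟩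
      exact this.mul hp
    exact h1.add h2
  exact ((hq.mul hXq).of_eq (fib_dbl_even j)).trans' h

-- explicit small fibPoly values
lemma hF2 : fibPoly 2 = X * fibPoly 1 + fibPoly 0 := fibPoly_step 0
lemma hF3 : fibPoly 3 = X * fibPoly 2 + fibPoly 1 := fibPoly_step 1
lemma hF4 : fibPoly 4 = X * fibPoly 3 + fibPoly 2 := fibPoly_step 2
lemma hF5 : fibPoly 5 = X * fibPoly 4 + fibPoly 3 := fibPoly_step 3
lemma hF6 : fibPoly 6 = X * fibPoly 5 + fibPoly 4 := fibPoly_step 4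
lemma hF7 : fibPoly 7 = X * fibPoly 6 + fibPoly 5 := fibPoly_step 5

lemma hF0' : fibPoly 0 = 0 := rfl
lemma hF1' : fibPoly 1 = 1 := rfl

lemma hF5e : fibPoly 5 = 1 + 3 * X ^ 2 + X ^ 4 := by
  rw [hF5, hF4, hF3, hF2, hF0', hF1']; ring

lemma hF6e : fibPoly 6 = 3 * X + 4 * X ^ 3 + X ^ 5 := by
  rw [hF6, hF5e, hF4, hF3, hF2, hF0', hF1']; ring

lemma hF7e : fibPoly 7 = 1 + 6 * X ^ 2 + 5 * X ^ 4 + X ^ 6 := by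
  rw [hF7, hF6e, hF5e]; ring

lemma c5 : Cong (fibPoly 5) (1 + 3 * X ^ 2 + X ^ 4) := by
  unfold Cong; rw [hF5e]; exact ⟨0, 0, 0, by ring⟩

lemma c6 : Cong (fibPoly 6) (3 * X) := by
  unfold Cong; rw [hF6e]; exact ⟨0, 1, 1, by ring⟩

lemma c7 : Cong (fibPoly 7) (1 + 6 * X ^ 2 + X ^ 4) := by
  unfold Cong; rw [hF7e]; exact ⟨0, X, X, by ring⟩

lemma c11 : Cong (fibPoly 11) (1 + 15 * X ^ 2 + 3 * X ^ 4) :=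
  cong_dbl_odd c5 c6 ⟨0, 2 * X, 6 * X + X ^ 3, by ring⟩

lemma c12 : Cong (fibPoly 12) (6 * X + 3 * X ^ 3) :=
  cong_dbl_even (j := 5) c5 c6 ⟨0, 6, 6, by ring⟩

lemma c23 : Cong (fibPoly 23) (1 + 2 * X ^ 2 + 3 * X ^ 4) :=
  cong_dbl_odd c11 c12 ⟨4 * X, 66 * X, 99 * X + 9 * X ^ 3, by ring⟩

lemma c24 : Cong (fibPoly 24) (12 * X + 2 * X ^ 3) :=
  cong_dbl_even (j := 11) c11 c12 ⟨0, 55, 162 + 27 * X ^ 2, by ring⟩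

lemma c47 : Cong (fibPoly 47) (1 + 4 * X ^ 2 + 2 * X ^ 4) :=
  cong_dbl_odd c23 c24 ⟨9 * X, 14 * X, 16 * X + 9 * X ^ 3, by ring⟩

lemma c48 : Cong (fibPoly 48) (8 * X) :=
  cong_dbl_even (j := 23) c23 c24 ⟨1, 49, 128 + 16 * X ^ 2, by ring⟩

lemma c49 : Cong (fibPoly 49) (1 + 12 * X ^ 2 + 2 * X ^ 4) := by
  have h : fibPoly 49 = X * fibPoly 48 + fibPoly 47 := fibPoly_step 47
  have hXX : Cong (X : Polynomial ℤ) X := ⟨0, 0, 0, by ring⟩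
  have hx : Cong (X * fibPoly 48) (X * (8 * X)) := hXX.mul c48
  have := (hx.add c47).of_eq h
  exact this.trans' ⟨0, 0, 0, by ring⟩

-- stepping by 48
lemma cong_add48 {b : ℕ} {u v r : Polynomial ℤ}
    (hu : Cong (fibPoly b) u) (hv : Cong (fibPoly (b + 1)) v)
    (h : InI ((8 * X) * v + (1 + 4 * X ^ 2 + 2 * X ^ 4) * u - r)) :
    Cong (fibPoly (b + 48)) r := by
  have e : b + 48 = 47 + b + 1 := by omega
  have hh := fib_add 47 b
  rw [← e] at hh
  exact (((c48.mul hv).add (c47.mul hu)).of_eq hh).trans' h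

lemma cong_add49 {b : ℕ} {u v r : Polynomial ℤ}
    (hu : Cong (fibPoly b) u) (hv : Cong (fibPoly (b + 1)) v)
    (h : InI ((1 + 12 * X ^ 2 + 2 * X ^ 4) * v + (8 * X) * u - r)) :
    Cong (fibPoly (b + 49)) r := by
  have e : b + 49 = 48 + b + 1 := by omega
  have hh := fib_add 48 b
  rw [← e] at hh
  exact (((c49.mul hv).add (c48.mul hu)).of_eq hh).trans' h

-- the four states of the pair (F(6+48d), F(7+48d)) mod I
def StA (d : ℕ) : Prop :=
  Cong (fibPoly (6 + 48 * d)) (3 * X) ∧ Cong (fibPoly (7 + 48 * d)) (1 + 6 * X ^ 2 + X ^ 4)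
def StB (d : ℕ) : Prop :=
  Cong (fibPoly (6 + 48 * d)) (11 * X) ∧ Cong (fibPoly (7 + 48 * d)) (1 + 10 * X ^ 2 + 3 * X ^ 4)
def StC (d : ℕ) : Prop :=
  Cong (fibPoly (6 + 48 * d)) (3 * X) ∧ Cong (fibPoly (7 + 48 * d)) (1 + 14 * X ^ 2 + X ^ 4)
def StD (d : ℕ) : Prop :=
  Cong (fibPoly (6 + 48 * d)) (11 * X) ∧ Cong (fibPoly (7 + 48 * d)) (1 + 2 * X ^ 2 + 3 * X ^ 4)

lemma idx6 (d : ℕ) : 6 + 48 * (d + 1) = (6 + 48 * d) + 48 := by omega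
lemma idx7 (d : ℕ) : 7 + 48 * (d + 1) = (6 + 48 * d) + 49 := by omega

lemma stepA {d : ℕ} (h : StA d) : StB (d + 1) := by
  obtain ⟨hu, hv⟩ := h
  rw [show 7 + 48 * d = (6 + 48 * d) + 1 by omega] at hv
  constructor
  · rw [idx6]
    exact cong_add48 hu hv ⟨0, 15, 14, by ring⟩
  · rw [idx7]
    exact cong_add49 hu hv ⟨2 * X, 18 * X, 24 * X + 2 * X ^ 3, by ring⟩

lemma stepB {d : ℕ} (h : StB d) : StC (d + 1) := by
  obtain ⟨hu, hv⟩ := h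
  rw [show 7 + 48 * d = (6 + 48 * d) + 1 by omega] at hv
  constructor
  · rw [idx6]
    exact cong_add48 hu hv ⟨1, 31, 46, by ring⟩
  · rw [idx7]
    exact cong_add49 hu hv ⟨6 * X, 31 * X, 56 * X + 6 * X ^ 3, by ring⟩

lemma stepC {d : ℕ} (h : StC d) : StD (d + 1) := by
  obtain ⟨hu, hv⟩ := h
  rw [show 7 + 48 * d = (6 + 48 * d) + 1 by omega] at hv
  constructor
  · rw [idx6]
    exact cong_add48 hu hv ⟨0, 31, 14, by ring⟩
  · rw [idx7]
    exact cong_add49 hu hv ⟨3 * X, 42 * X, 40 * X + 2 * X ^ 3, by ring⟩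

lemma stepD {d : ℕ} (h : StD d) : StA (d + 1) := by
  obtain ⟨hu, hv⟩ := h
  rw [show 7 + 48 * d = (6 + 48 * d) + 1 by omega] at hv
  constructor
  · rw [idx6]
    exact cong_add48 hu hv ⟨1, 15, 46, by ring⟩
  · rw [idx7]
    exact cong_add49 hu hv ⟨6 * X, 7 * X, 40 * X + 6 * X ^ 3, by ring⟩

lemma states (d : ℕ) : StA d ∨ StB d ∨ StC d ∨ StD d := by
  induction d with
  | zero =>
      left
      exact ⟨c6.of_eq (by norm_num), c7.of_eq (by norm_num)⟩
  | succ n ih =>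
      rcases ih with h | h | h | h
      · exact Or.inr (Or.inl (stepA h))
      · exact Or.inr (Or.inr (Or.inl (stepB h)))
      · exact Or.inr (Or.inr (Or.inr (stepC h)))
      · exact Or.inl (stepD h)

lemma residue (d : ℕ) : ∃ a : ℤ, a % 8 = 3 ∧ a ^ 2 % 16 = 9 ∧
    InI (fibPoly (6 + 48 * d) - C a * X) := by
  have hC3 : (C (3 : ℤ) : Polynomial ℤ) * X = 3 * X := by
    norm_num
  have hC11 : (C (11 : ℤ) : Polynomial ℤ) * X = 11 * X := by
    norm_num
  rcases states d with h | h | h | h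
  · exact ⟨3, by norm_num, by norm_num, by rw [hC3]; exact h.1⟩
  · exact ⟨11, by norm_num, by norm_num, by rw [hC11]; exact h.1⟩
  · exact ⟨3, by norm_num, by norm_num, by rw [hC3]; exact h.1⟩
  · exact ⟨11, by norm_num, by norm_num, by rw [hC11]; exact h.1⟩

-- evaluation lemmas
lemma eval_mem {f : Polynomial ℤ} (hf : InI f) (m : ℕ) (c : ℤ) :
    (2 : ℤ) ^ (m + 5) ∣ f.eval (2 ^ (m + 1) * c) := by
  obtain ⟨α, β, γ, rfl⟩ := hf
  simp only [eval_add, eval_mul, eval_pow, eval_X, eval_ofNat]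
  refine ⟨c * α.eval (2 ^ (m + 1) * c) + 4 ^ m * c ^ 3 * β.eval (2 ^ (m + 1) * c)
    + 16 ^ m * c ^ 5 * γ.eval (2 ^ (m + 1) * c), ?_⟩
  have h4 : (4 : ℤ) ^ m = 2 ^ m * 2 ^ m := by
    rw [← mul_pow]; norm_num
  have h16 : (16 : ℤ) ^ m = 2 ^ m * 2 ^ m * 2 ^ m * 2 ^ m := by
    rw [← mul_pow, ← mul_pow, ← mul_pow]; norm_num
  rw [h4, h16]; ring

lemma deriv_mem {f : Polynomial ℤ} (hf : InI f) (y : ℤ) :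
    (4 : ℤ) ∣ (derivative f).eval (2 * y) := by
  obtain ⟨α, β, γ, rfl⟩ := hf
  simp only [derivative_add, derivative_mul, derivative_X, derivative_X_pow, derivative_ofNat,
    eval_add, eval_mul, eval_pow, eval_X, eval_ofNat, eval_natCast, eval_zero, eval_one, eval_C]
  refine ⟨4 * α.eval (2 * y) + 8 * y * (derivative α).eval (2 * y)
    + 12 * y ^ 2 * β.eval (2 * y) + 8 * y ^ 3 * (derivative β).eval (2 * y)
    + 20 * y ^ 4 * γ.eval (2 * y) + 8 * y ^ 5 * (derivative γ).eval (2 * y), ?_⟩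
  push_cast
  ring

end FibAux

open FibAux in
theorem fibPoly_m_six_mod_twelve_q_four_d (q d : ℕ) (hq : q = 4 * d) :
    ∀ n : ℕ, 1 ≤ n → ∀ k : ℕ, k ≤ 1 →
      (fibPoly (6 + 12 * q)).eval ((1 + 4 * (k : ℤ)) * 2 ^ n) ≡
        (3 + 4 * (k : ℤ)) * 2 ^ n [ZMOD (2 : ℤ) ^ (n + 3)] ∧
      (fibPoly (6 + 12 * q)).eval ((3 + 4 * (k : ℤ)) * 2 ^ n) ≡
        (1 + 4 * (k : ℤ)) * 2 ^ n [ZMOD (2 : ℤ) ^ (n + 3)] ∧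
      (derivative (fibPoly (6 + 12 * q))).eval ((1 + 4 * (k : ℤ)) * 2 ^ n) *
        (derivative (fibPoly (6 + 12 * q))).eval ((3 + 4 * (k : ℤ)) * 2 ^ n) ≡ 1
        [ZMOD (4 : ℤ)] ∧
      padicValInt 2
        ((fibPoly (6 + 12 * q)).eval ((fibPoly (6 + 12 * q)).eval
            ((1 + 4 * (k : ℤ)) * 2 ^ n)) -
          (1 + 4 * (k : ℤ)) * 2 ^ n) = n + 3 := by
  intro n hn k _
  subst hq
  have hm : 6 + 12 * (4 * d) = 6 + 48 * d := by ring
  rw [hm]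
  obtain ⟨a, ha8, ha16, hmem⟩ := residue d
  obtain ⟨m, rfl⟩ : ∃ m, n = m + 1 := ⟨n - 1, by omega⟩
  set M := 6 + 48 * d with hM
  -- basic eval decomposition
  have key : ∀ c : ℤ, ∃ t : ℤ,
      (fibPoly M).eval (2 ^ (m + 1) * c) = a * (2 ^ (m + 1) * c) + 2 ^ (m + 5) * t := by
    intro c
    obtain ⟨t, ht⟩ := eval_mem hmem m c
    refine ⟨t, ?_⟩
    have : (fibPoly M - C a * X).eval (2 ^ (m + 1) * c) =
        (fibPoly M).eval (2 ^ (m + 1) * c) - a * (2 ^ (m + 1) * c) := by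
      simp [eval_sub, eval_mul, eval_C, eval_X]
    rw [this] at ht
    linarith
  obtain ⟨s, hs⟩ : ∃ s : ℤ, a = 8 * s + 3 := ⟨a / 8, by omega⟩
  obtain ⟨u, hu⟩ : ∃ u : ℤ, a ^ 2 = 16 * u + 9 := ⟨a ^ 2 / 16, by omega⟩
  have hx1 : (1 + 4 * (k : ℤ)) * 2 ^ (m + 1) = 2 ^ (m + 1) * (1 + 4 * (k : ℤ)) := by ring
  have hx3 : (3 + 4 * (k : ℤ)) * 2 ^ (m + 1) = 2 ^ (m + 1) * (3 + 4 * (k : ℤ)) := by ring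
  obtain ⟨t1, ht1⟩ := key (1 + 4 * (k : ℤ))
  obtain ⟨t3, ht3⟩ := key (3 + 4 * (k : ℤ))
  refine ⟨?_, ?_, ?_, ?_⟩
  · -- first congruence
    refine Int.modEq_iff_dvd.mpr ?_
    rw [hx1, ht1]
    refine ⟨-(k : ℤ) - s - 4 * s * k - 2 * t1, ?_⟩
    linear_combination (-(2 : ℤ) ^ (m + 1) * (1 + 4 * (k : ℤ))) * hs
  · -- second congruence
    refine Int.modEq_iff_dvd.mpr ?_
    rw [hx3, ht3]
    refine ⟨-1 - (k : ℤ) - 3 * s - 4 * s * k - 2 * t3, ?_⟩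
    linear_combination (-(2 : ℤ) ^ (m + 1) * (3 + 4 * (k : ℤ))) * hs
  · -- derivative product
    have hdiff : ∀ y : ℤ, (derivative (fibPoly M)).eval (2 * y) =
        a + (derivative (fibPoly M - C a * X)).eval (2 * y) := by
      intro y
      have : derivative (fibPoly M - C a * X) = derivative (fibPoly M) - C a := by
        simp
      rw [this]
      simp
    have hp1 : (1 + 4 * (k : ℤ)) * 2 ^ (m + 1) = 2 * ((1 + 4 * (k : ℤ)) * 2 ^ m) := by ring
    have hp3 : (3 + 4 * (k : ℤ)) * 2 ^ (m + 1) = 2 * ((3 + 4 * (k : ℤ)) * 2 ^ m) := by ring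
    obtain ⟨e1, he1⟩ := deriv_mem hmem ((1 + 4 * (k : ℤ)) * 2 ^ m)
    obtain ⟨e3, he3⟩ := deriv_mem hmem ((3 + 4 * (k : ℤ)) * 2 ^ m)
    rw [hp1, hp3, hdiff, hdiff, he1, he3]
    refine Int.modEq_iff_dvd.mpr ⟨-4 * u - 2 - a * (e1 + e3) - 4 * e1 * e3, ?_⟩
    linear_combination -hu
  · -- valuation
    rw [hx1, ht1]
    have harg : a * (2 ^ (m + 1) * (1 + 4 * (k : ℤ))) + 2 ^ (m + 5) * t1 =
        2 ^ (m + 1) * (a * (1 + 4 * (k : ℤ)) + 16 * t1) := by ring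
    rw [harg]
    obtain ⟨t2, ht2⟩ := key (a * (1 + 4 * (k : ℤ)) + 16 * t1)
    rw [ht2]
    have hD : a * (2 ^ (m + 1) * (a * (1 + 4 * (k : ℤ)) + 16 * t1)) + 2 ^ (m + 5) * t2 -
        2 ^ (m + 1) * (1 + 4 * (k : ℤ)) =
        2 ^ (m + 4) * (2 * (u + 4 * u * k + 2 * k + a * t1 + t2) + 1) := by
      linear_combination ((2 : ℤ) ^ (m + 1) * (1 + 4 * (k : ℤ))) * hu
    rw [hD]
    set V : ℤ := u + 4 * u * k + 2 * k + a * t1 + t2 with hV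
    have h2pow : ((2 : ℤ) ^ (m + 4)) = (((2 ^ (m + 4) : ℕ) : ℤ)) := by push_cast; ring
    have hne1 : ((2 : ℤ) ^ (m + 4)) ≠ 0 := by positivity
    have hne2 : (2 * V + 1 : ℤ) ≠ 0 := by omega
    rw [padicValInt.mul hne1 hne2, h2pow, padicValInt.of_nat, padicValNat.prime_pow,
      padicValInt.eq_zero_of_not_dvd (by omega)]
end

section
/- Let m = 6 + 12q for a nonnegative integer q. Then for every integer k, F_m(1+2k) ≡ 8 (mod 16); consequently F_m maps the clopen set 1 + 2ℤ₂ into 8 + 16ℤ₂. -/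
open Polynomial

def g (x : ZMod 16) : ℕ → ZMod 16
  | 0 => 0
  | 1 => 1
  | n + 2 => x * g x (n + 1) + g x n

lemma eval_fibPoly_cast (z : ℤ) (n : ℕ) :
    (Int.cast ((fibPoly n).eval z) : ZMod 16) = g (z : ZMod 16) n := by
  induction n using Nat.strong_induction_on with
  | _ n ih =>
    match n with
    | 0 => simp [fibPoly, g]
    | 1 => simp [fibPoly, g]
    | n + 2 =>
      simp only [fibPoly, g, eval_add, eval_mul, eval_X, Int.cast_add, Int.cast_mul,
        ih (n+1) (by omega), ih n (by omega)]

lemma g_add (x : ZMod 16) : ∀ m n, g x (n + (m + 1)) = g x (m + 1) * g x (n + 1) + g x m * g x n := by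
  intro m
  induction m using Nat.strong_induction_on with
  | _ m ih =>
    match m with
    | 0 => intro n; simp [g]
    | 1 => intro n; show g x (n + 2) = _; simp [g]
    | m + 2 =>
      intro n
      have gstep : ∀ j, g x (j + 2) = x * g x (j + 1) + g x j := fun _ => rfl
      have h0 := ih m (by omega) n
      have h1' : g x ((n + (m+1)) + 1) = g x (m+2) * g x (n+1) + g x (m+1) * g x n := by
        rw [show (n+(m+1))+1 = n+(m+1+1) from by omega, show m+2 = m+1+1 from by omega]
        exact ih (m+1) (by omega) n
      rw [show n + (m+2+1) = (n+(m+1))+2 from by omega, gstep, h1', h0,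
        show m+2+1 = (m+1)+2 from by omega, gstep (m+1),
        show (m+1)+1 = m+2 from by omega, gstep m]
      ring

lemma key_step : ∀ y b : ZMod 16, (b = 5 ∨ b = 13) →
    g (1 + 2*y) 12 * b + g (1 + 2*y) 11 * 8 = 8 ∧
    (g (1 + 2*y) 12 * ((1 + 2*y) * b + 8) + g (1 + 2*y) 11 * b = 5 ∨
     g (1 + 2*y) 12 * ((1 + 2*y) * b + 8) + g (1 + 2*y) 11 * b = 13) := by
  decide

lemma g_six : ∀ y : ZMod 16, g (1 + 2*y) 6 = 8 ∧ (g (1 + 2*y) 7 = 5 ∨ g (1 + 2*y) 7 = 13) := by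
  decide

lemma invariant (y : ZMod 16) (q : ℕ) :
    g (1 + 2*y) (6 + 12*q) = 8 ∧
      (g (1 + 2*y) (7 + 12*q) = 5 ∨ g (1 + 2*y) (7 + 12*q) = 13) := by
  set x := 1 + 2*y with hx
  induction q with
  | zero => simpa using g_six y
  | succ q ih =>
    obtain ⟨h6, h7⟩ := ih
    have shift : ∀ n, g x (n + 12) = g x 12 * g x (n + 1) + g x 11 * g x n := fun n =>
      g_add x 11 n
    have h8 : g x (7 + 12*q + 1) = x * g x (7 + 12*q) + 8 := by
      rw [show 7 + 12*q + 1 = (6 + 12*q) + 2 from by omega,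
        show g x ((6 + 12*q) + 2) = x * g x ((6 + 12*q) + 1) + g x (6 + 12*q) from rfl,
        h6, show 6 + 12*q + 1 = 7 + 12*q from by omega]
    obtain ⟨k1, k2⟩ := key_step y (g x (7 + 12*q)) h7
    constructor
    · rw [show 6 + 12*(q+1) = (6 + 12*q) + 12 from by omega, shift,
        show 6 + 12*q + 1 = 7 + 12*q from by omega, h6]
      exact k1
    · rw [show 7 + 12*(q+1) = (7 + 12*q) + 12 from by omega, shift, h8]
      exact k2

theorem fibPoly_m_six_mod_twelve_odd_input (q : ℕ) :
    ∀ k : ℤ, (fibPoly (6 + 12 * q)).eval (1 + 2 * k) ≡ 8 [ZMOD (16 : ℤ)] := by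
  intro k
  have h : (Int.cast ((fibPoly (6 + 12 * q)).eval (1 + 2 * k)) : ZMod 16) = ((8 : ℤ) : ZMod 16) := by
    rw [eval_fibPoly_cast]
    push_cast
    exact (invariant (k : ZMod 16) q).1.trans (by norm_num)
  exact (ZMod.intCast_eq_intCast_iff' _ _ _).mp h
end

section
/- Let m = 10 + 12q with q = 3 + 4d for some nonnegative integer d, write q = 2^u − 1 + 2^{u+1}·r where u = min{ i ≥ 1 : the i-th binary digit of q is 0 } and r ∈ ℤ. Then for every k with 0 ≤ k ≤ 2^{u+1} − 1: F_m(1+2k) ≡ 2^{u+3} − 1 − 2k (mod 2^{u+4}) and F_m(2^{u+3} − 1 − 2k) ≡ 1 + 2k (mod 2^{u+4}), so {1+2k, 2^{u+3}−1−2k} is a 2-cycle of F_m at level u+4. -/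
open Polynomial

/-- Integer-valued Fibonacci-like sequence: `fibSeq x n = (fibPoly n).eval x`. -/
def fibSeq (x : ℤ) : ℕ → ℤ
  | 0 => 0
  | 1 => 1
  | n + 2 => x * fibSeq x (n + 1) + fibSeq x n

lemma fibPoly_eval (x : ℤ) : ∀ n, (fibPoly n).eval x = fibSeq x n := by
  intro n
  induction n using Nat.twoStepInduction with
  | zero => simp [fibPoly, fibSeq]
  | one => simp [fibPoly, fibSeq]
  | more n ih1 ih2 => simp [fibPoly, fibSeq, ih1, ih2]

/-- Addition formula. -/
lemma fibSeq_add (x : ℤ) : ∀ n m, fibSeq x (m + n + 1) =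
    fibSeq x (m + 1) * fibSeq x (n + 1) + fibSeq x m * fibSeq x n := by
  intro n
  induction n using Nat.twoStepInduction with
  | zero => intro m; simp [fibSeq]
  | one =>
    intro m
    show fibSeq x (m + 2) = _
    rw [show fibSeq x (m + 2) = x * fibSeq x (m + 1) + fibSeq x m from rfl]
    have h2 : fibSeq x 2 = x * 1 + 0 := rfl
    simp [h2, fibSeq]
    ring
  | more n ih1 ih2 =>
    intro m
    have e1 : m + (n + 2) + 1 = (m + n + 1) + 2 := by omega
    rw [e1, show fibSeq x ((m + n + 1) + 2)
        = x * fibSeq x ((m + n + 1) + 1) + fibSeq x (m + n + 1) from rfl,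
      show (m + n + 1) + 1 = m + (n + 1) + 1 by omega, ih2, ih1]
    have h3 : fibSeq x (n + 3) = x * fibSeq x (n + 2) + fibSeq x (n + 1) := rfl
    have h2 : fibSeq x (n + 2) = x * fibSeq x (n + 1) + fibSeq x n := rfl
    rw [show n + 2 + 1 = n + 3 from rfl, h3, h2]
    ring

lemma fibSeq_double_one (x : ℤ) (M : ℕ) :
    fibSeq x (2 * M + 2) = fibSeq x (M + 1) * (x * fibSeq x (M + 1) + 2 * fibSeq x M) := by
  have := fibSeq_add x M (M + 1)
  rw [show M + 1 + M + 1 = 2 * M + 2 by omega] at this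
  rw [this, show M + 1 + 1 = M + 2 from rfl,
    show fibSeq x (M + 2) = x * fibSeq x (M + 1) + fibSeq x M from rfl]
  ring

lemma fibSeq_double_two (x : ℤ) (M : ℕ) :
    fibSeq x (2 * M + 3) = (x * fibSeq x (M + 1) + fibSeq x M) ^ 2 + fibSeq x (M + 1) ^ 2 := by
  have := fibSeq_add x (M + 1) (M + 1)
  rw [show M + 1 + (M + 1) + 1 = 2 * M + 3 by omega] at this
  rw [this, show M + 1 + 1 = M + 2 from rfl,
    show fibSeq x (M + 2) = x * fibSeq x (M + 1) + fibSeq x M from rfl]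
  ring

lemma fibSeq_double_odd (x : ℤ) (M : ℕ) :
    fibSeq x (2 * M + 1) = fibSeq x (M + 1) ^ 2 + fibSeq x M ^ 2 := by
  have := fibSeq_add x M M
  rw [show M + M + 1 = 2 * M + 1 by omega] at this
  rw [this]; ring

/-- Periodicity seed: `(F_{3·2^l}, F_{3·2^l+1}) ≡ (0,1)` mod `2^(l+1)` for odd `x`. -/
lemma fibSeq_period_seed (x : ℤ) (hx : Odd x) :
    ∀ l : ℕ, (2:ℤ) ^ (l + 1) ∣ fibSeq x (3 * 2 ^ l) ∧
      (2:ℤ) ^ (l + 1) ∣ fibSeq x (3 * 2 ^ l + 1) - 1 := by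
  obtain ⟨y, hy⟩ := hx
  intro l
  induction l with
  | zero =>
    constructor
    · show (2:ℤ) ^ 1 ∣ fibSeq x 3
      have : fibSeq x 3 = x * (x * 1 + 0) + 1 := rfl
      rw [this, hy]; exact ⟨2 * y ^ 2 + 2 * y + 1, by ring⟩
    · show (2:ℤ) ^ 1 ∣ fibSeq x 4 - 1
      have : fibSeq x 4 = x * (x * (x * 1 + 0) + 1) + (x * 1 + 0) := rfl
      rw [this, hy]; exact ⟨4 * y ^ 3 + 6 * y ^ 2 + 5 * y + 1, by ring⟩
  | succ l ih =>
    obtain ⟨⟨a, ha⟩, ⟨b, hb⟩⟩ := ih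
    set c : ℤ := 2 ^ l with hc
    have hpw : (2:ℤ) ^ (l + 1) = 2 * c := by rw [hc]; ring
    have hgT : fibSeq x (3 * 2 ^ l) = 2 * c * a := by rw [ha, hpw]
    have hgT1 : fibSeq x (3 * 2 ^ l + 1) = 1 + 2 * c * b := by
      have h' : fibSeq x (3 * 2 ^ l + 1) - 1 = 2 ^ (l + 1) * b := hb
      have h2 : (2:ℤ) ^ (l + 1) = 2 * c := by rw [pow_succ]; ring
      rw [h2] at h'
      linarith
    set T := 3 * 2 ^ l with hT
    have idx : 3 * 2 ^ (l + 1) = 2 * T := by rw [hT, pow_succ]; ring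
    have h1 : fibSeq x (2 * T + 1) = fibSeq x (T + 1) ^ 2 + fibSeq x T ^ 2 :=
      fibSeq_double_odd x T
    have h2 : fibSeq x (2 * T + 2) = fibSeq x (T + 1) * (x * fibSeq x (T + 1) + 2 * fibSeq x T) :=
      fibSeq_double_one x T
    have hrec : fibSeq x (2 * T + 2) = x * fibSeq x (2 * T + 1) + fibSeq x (2 * T) := rfl
    have hpow : (2:ℤ) ^ (l + 1 + 1) = 4 * c := by rw [pow_succ, pow_succ]; ring
    have d1 : (4 * c : ℤ) ∣ fibSeq x (2 * T + 1) - 1 := by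
      rw [h1, hgT, hgT1]
      exact ⟨b + c * b ^ 2 + c * a ^ 2, by ring⟩
    have d2 : (4 * c : ℤ) ∣ fibSeq x (2 * T + 2) - x := by
      rw [h2, hgT, hgT1]
      exact ⟨b * x + a + c * b ^ 2 * x + 2 * c * a * b, by ring⟩
    have d0 : (4 * c : ℤ) ∣ fibSeq x (2 * T) := by
      have : fibSeq x (2 * T) = (fibSeq x (2 * T + 2) - x) - x * (fibSeq x (2 * T + 1) - 1) := by
        rw [hrec]; ring
      rw [this]
      exact dvd_sub d2 (Dvd.dvd.mul_left d1 x)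
    rw [hpow, idx]
    exact ⟨d0, d1⟩

/-- Shift invariance: if `(F_T, F_{T+1}) ≡ (0,1) mod L` then `F_{m+T} ≡ F_m mod L`. -/
lemma fibSeq_shift (x L : ℤ) (T : ℕ) (h0 : L ∣ fibSeq x T) (h1 : L ∣ fibSeq x (T + 1) - 1) :
    ∀ m, L ∣ fibSeq x (m + T) - fibSeq x m := by
  intro m
  induction m using Nat.twoStepInduction with
  | zero => simpa [fibSeq] using h0
  | one =>
    have : 1 + T = T + 1 := by omega
    rw [this]
    simpa [fibSeq] using h1
  | more m ih1 ih2 =>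
    have e : m + 2 + T = (m + T) + 2 := by omega
    rw [e, show fibSeq x ((m + T) + 2) = x * fibSeq x ((m + T) + 1) + fibSeq x (m + T) from rfl,
      show fibSeq x (m + 2) = x * fibSeq x (m + 1) + fibSeq x m from rfl]
    have e2 : (m + T) + 1 = (m + 1) + T := by omega
    rw [e2]
    have : x * fibSeq x ((m + 1) + T) + fibSeq x (m + T) - (x * fibSeq x (m + 1) + fibSeq x m)
        = x * (fibSeq x ((m + 1) + T) - fibSeq x (m + 1)) + (fibSeq x (m + T) - fibSeq x m) := by
      ring
    rw [this]
    exact dvd_add (Dvd.dvd.mul_left ih2 x) ih1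
   
lemma fibSeq_shift_mul (x L : ℤ) (T : ℕ) (h0 : L ∣ fibSeq x T) (h1 : L ∣ fibSeq x (T + 1) - 1) :
    ∀ r m, L ∣ fibSeq x (m + T * r) - fibSeq x m := by
  intro r
  induction r with
  | zero => simp
  | succ r ih =>
    intro m
    have e : m + T * (r + 1) = (m + T * r) + T := by ring
    rw [e]
    have d1 := fibSeq_shift x L T h0 h1 (m + T * r)
    have d2 := ih m
    have : fibSeq x ((m + T * r) + T) - fibSeq x m
        = (fibSeq x ((m + T * r) + T) - fibSeq x (m + T * r))
          + (fibSeq x (m + T * r) - fibSeq x m) := by ring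
    rw [this]
    exact dvd_add d1 d2

/-- Main lemma: for odd `x`, `F_{3·2^(n+1)-2}(x) ≡ 2^(n+2) - x` and
`F_{3·2^(n+1)-1}(x) ≡ 2^(n+2) + 1` mod `2^(n+3)`. -/
lemma fibSeq_main (x : ℤ) (hx : Odd x) :
    ∀ n : ℕ, (2:ℤ) ^ (n + 3) ∣ fibSeq x (3 * 2 ^ (n + 1) - 2) - (2 ^ (n + 2) - x) ∧
      (2:ℤ) ^ (n + 3) ∣ fibSeq x (3 * 2 ^ (n + 1) - 1) - (2 ^ (n + 2) + 1) := by
  obtain ⟨y, hy⟩ := hx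
  intro n
  induction n with
  | zero =>
    constructor
    · show (2:ℤ) ^ 3 ∣ fibSeq x 4 - (2 ^ 2 - x)
      have : fibSeq x 4 = x * (x * (x * 1 + 0) + 1) + (x * 1 + 0) := rfl
      rw [this, hy]
      obtain ⟨cc, hcc⟩ := Int.even_mul_succ_self y
      refine ⟨y ^ 3 + 3 * cc, ?_⟩
      have : y * (y + 1) = 2 * cc := by omega
      nlinarith [this]
    · show (2:ℤ) ^ 3 ∣ fibSeq x 5 - (2 ^ 2 + 1)
      have : fibSeq x 5 = x * (x * (x * (x * 1 + 0) + 1) + (x * 1 + 0)) + (x * (x * 1 + 0) + 1) := rfl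
      rw [this, hy]
      obtain ⟨cc, hcc⟩ := Int.even_mul_succ_self y
      have h2c : y * (y + 1) = 2 * cc := by omega
      refine ⟨cc * ((2 * y + 1) ^ 2 + 4), ?_⟩
      nlinarith [h2c]
  | succ n ih =>
    obtain ⟨⟨a, ha⟩, ⟨b, hb⟩⟩ := ih
    set s : ℤ := 2 ^ n with hs
    have hp2 : (2:ℤ) ^ (n + 2) = 4 * s := by rw [pow_succ, pow_succ]; ring
    have hp3 : (2:ℤ) ^ (n + 3) = 8 * s := by rw [pow_succ, pow_succ, pow_succ]; ring
    have hp4 : (2:ℤ) ^ (n + 4) = 16 * s := by rw [pow_succ, pow_succ, pow_succ, pow_succ]; ring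
    set M : ℕ := 3 * 2 ^ (n + 1) - 2 with hM
    have h1n : (1:ℕ) ≤ 2 ^ (n + 1) := Nat.one_le_two_pow
    have hMe : M + 1 = 3 * 2 ^ (n + 1) - 1 := by omega
    have hA : fibSeq x M = 4 * s - x + 8 * s * a := by
      have := ha
      rw [hp2, hp3] at this; linarith
    have hB : fibSeq x (M + 1) = 4 * s + 1 + 8 * s * b := by
      have := hb
      rw [hMe]
      rw [hp2, hp3] at this; linarith
    have idx1 : 3 * 2 ^ (n + 1 + 1) - 2 = 2 * M + 2 := by
      have : (2:ℕ) ^ (n + 1 + 1) = 2 * 2 ^ (n + 1) := by rw [pow_succ]; ring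
      omega
    have idx2 : 3 * 2 ^ (n + 1 + 1) - 1 = 2 * M + 3 := by
      have : (2:ℕ) ^ (n + 1 + 1) = 2 * 2 ^ (n + 1) := by rw [pow_succ]; ring
      omega
    rw [idx1, idx2, fibSeq_double_one, fibSeq_double_two, hA, hB, hp4,
      show n + 1 + 2 = n + 3 from rfl, hp3]
    constructor
    · exact ⟨s * x + 2 * s + 4 * s * b * x + 4 * s * a + a + 4 * s * b + 4 * s * b ^ 2 * x
        + 8 * s * a * b, by ring⟩
    · exact ⟨s * (x + 1 + 2 * b * x + 2 * a) ^ 2 + s + 4 * s * b ^ 2 + 4 * s * b + b, by ring⟩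

/-- For odd `x`, `F_{10+12q}(x) ≡ 2^(u+3) - x mod 2^(u+4)` when
`q = 2^u - 1 + 2^(u+1)·r`, `1 ≤ u`. -/
lemma fibSeq_key (q u r : ℕ) (hu1 : 1 ≤ u) (hr : q = 2 ^ u - 1 + 2 ^ (u + 1) * r)
    (x : ℤ) (hx : Odd x) :
    (2:ℤ) ^ (u + 4) ∣ fibSeq x (10 + 12 * q) - (2 ^ (u + 3) - x) := by
  have h1 : (1:ℕ) ≤ 2 ^ u := Nat.one_le_two_pow
  have e1 : (2:ℕ) ^ (u + 1) = 2 * 2 ^ u := by rw [pow_succ]; ring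
  have e2 : (2:ℕ) ^ (u + 2) = 4 * 2 ^ u := by rw [pow_succ, pow_succ]; ring
  have e3 : (2:ℕ) ^ (u + 3) = 8 * 2 ^ u := by rw [pow_succ, pow_succ, pow_succ]; ring
  have h2 : (2:ℕ) ≤ 2 ^ u := by
    calc (2:ℕ) = 2 ^ 1 := rfl
    _ ≤ 2 ^ u := Nat.pow_le_pow_right (by norm_num) hu1
  have e4 : (2:ℕ) ^ (u + 1) * r = 2 * (2 ^ u * r) := by rw [e1]; ring
  have e5 : 3 * 2 ^ (u + 3) * r = 24 * (2 ^ u * r) := by rw [e3]; ring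
  have hidx : 10 + 12 * q = (3 * 2 ^ (u + 2) - 2) + (3 * 2 ^ (u + 3)) * r := by
    rw [hr]
    omega
  -- periodicity with T = 3 * 2^(u+3), modulus 2^(u+4)
  obtain ⟨p0, p1⟩ := fibSeq_period_seed x hx (u + 3)
  have hshift := fibSeq_shift_mul x ((2:ℤ) ^ (u + 3 + 1)) (3 * 2 ^ (u + 3)) p0 p1 r
      (3 * 2 ^ (u + 2) - 2)
  -- main lemma with n = u + 1
  obtain ⟨m0, _⟩ := fibSeq_main x hx (u + 1)
  rw [show u + 1 + 1 = u + 2 from rfl, show u + 1 + 3 = u + 4 from rfl,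
    show u + 1 + 2 = u + 3 from rfl] at m0
  rw [show u + 3 + 1 = u + 4 from rfl] at hshift
  rw [hidx]
  have : fibSeq x ((3 * 2 ^ (u + 2) - 2) + (3 * 2 ^ (u + 3)) * r) - (2 ^ (u + 3) - x)
      = (fibSeq x ((3 * 2 ^ (u + 2) - 2) + (3 * 2 ^ (u + 3)) * r)
          - fibSeq x (3 * 2 ^ (u + 2) - 2))
        + (fibSeq x (3 * 2 ^ (u + 2) - 2) - (2 ^ (u + 3) - x)) := by ring
  rw [this]
  exact dvd_add hshift m0

theorem fibPoly_m_ten_mod_twelve_q_three_mod_four (q d u r : ℕ) (hq : q = 3 + 4 * d)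
    (hu1 : 1 ≤ u) (hu : q.testBit u = false)
    (humin : ∀ i, 1 ≤ i → i < u → q.testBit i = true)
    (hr : q = 2 ^ u - 1 + 2 ^ (u + 1) * r) :
    ∀ k : ℕ, k ≤ 2 ^ (u + 1) - 1 →
      (fibPoly (10 + 12 * q)).eval (1 + 2 * (k : ℤ)) ≡
        2 ^ (u + 3) - 1 - 2 * (k : ℤ) [ZMOD (2 : ℤ) ^ (u + 4)] ∧
      (fibPoly (10 + 12 * q)).eval (2 ^ (u + 3) - 1 - 2 * (k : ℤ)) ≡
        1 + 2 * (k : ℤ) [ZMOD (2 : ℤ) ^ (u + 4)] := by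
  intro k _
  constructor
  · rw [fibPoly_eval]
    have h0 := fibSeq_key q u r hu1 hr (1 + 2 * (k:ℤ)) ⟨(k:ℤ), by ring⟩
    have h' : (2:ℤ) ^ (u + 4) ∣ fibSeq (1 + 2 * (k:ℤ)) (10 + 12 * q)
        - (2 ^ (u + 3) - 1 - 2 * (k:ℤ)) := by
      rw [show (2:ℤ) ^ (u + 3) - 1 - 2 * (k:ℤ) = 2 ^ (u + 3) - (1 + 2 * (k:ℤ)) by ring]
      exact h0
    exact (Int.modEq_iff_dvd.mpr h').symm
  · rw [fibPoly_eval]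
    have hodd : Odd (2 ^ (u + 3) - 1 - 2 * (k:ℤ)) := by
      refine ⟨2 ^ (u + 2) - 1 - (k:ℤ), ?_⟩
      have : (2:ℤ) ^ (u + 3) = 2 * 2 ^ (u + 2) := by rw [pow_succ]; ring
      rw [this]; ring
    have h0 := fibSeq_key q u r hu1 hr (2 ^ (u + 3) - 1 - 2 * (k:ℤ)) hodd
    have h' : (2:ℤ) ^ (u + 4) ∣ fibSeq (2 ^ (u + 3) - 1 - 2 * (k:ℤ)) (10 + 12 * q)
        - (1 + 2 * (k:ℤ)) := by
      rw [show (1:ℤ) + 2 * (k:ℤ) = 2 ^ (u + 3) - (2 ^ (u + 3) - 1 - 2 * (k:ℤ)) by ring]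
      exact h0
    exact (Int.modEq_iff_dvd.mpr h').symm
end
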